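/- arXiv:1710.06456 — 8 statements merged into one kernel-verified Lean document; each statement's English description precedes it below -/
import Mathlib

section
/- For every operator system S ⊆ M_n: β(S) = min{rank B : m ∈ ℕ, B = [B_{ij}]_{i,j=1}^m is a positive semidefinite mn×mn complex matrix with all n×n blocks B_{ij} ∈ S and ∑_{i=1}^m B_{ii} = I_n}; moreover, this minimum is attained for some m ≤ 2n³. -/
open Matrix
open scoped ComplexOrder

/-- A tuple of Kraus operators for a quantum channel `M_ι → M_k`:
`r` matrices of size `k × ι` with `∑ Aᵢᴴ Aᵢ = I`. -/
noncomputable def IsKraus {ι : Type*} [Fintype ι] [DecidableEq ι] {k r : ℕ}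
    (A : Fin r → Matrix (Fin k) ι ℂ) : Prop :=
  ∑ i, (A i)ᴴ * A i = 1

/-- The non-commutative confusability graph `S_Φ = span{Aᵢᴴ Aⱼ}` of a channel
given by Kraus operators. -/
noncomputable def confGraph {ι : Type*} [Fintype ι] {k r : ℕ}
    (A : Fin r → Matrix (Fin k) ι ℂ) : Submodule ℂ (Matrix ι ι ℂ) :=
  Submodule.span ℂ {B | ∃ i j, B = (A i)ᴴ * A j}

/-- An operator system in `M_ι`: a subspace containing `I` and closed under `ᴴ`. -/
def IsOperatorSystem {ι : Type*} [Fintype ι] [DecidableEq ι]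
    (S : Submodule ℂ (Matrix ι ι ℂ)) : Prop :=
  (1 : Matrix ι ι ℂ) ∈ S ∧ ∀ A ∈ S, Aᴴ ∈ S

/-- Quantum subcomplexity `β(S)`: the least `k` such that `S_Φ ⊆ S` for some
quantum channel `Φ : M_ι → M_k`. -/
noncomputable def betaOS {ι : Type*} [Fintype ι] [DecidableEq ι]
    (S : Submodule ℂ (Matrix ι ι ℂ)) : ℕ :=
  sInf {k | ∃ r : ℕ, ∃ A : Fin r → Matrix (Fin k) ι ℂ, IsKraus A ∧ confGraph A ≤ S}

lemma psd_rank_factor {N : Type*} [Fintype N] [DecidableEq N]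
    {B : Matrix N N ℂ} (hB : B.PosSemidef) :
    ∃ M : Matrix (Fin B.rank) N ℂ, B = Mᴴ * M := by
  classical
  have hH := hB.1
  obtain ⟨σ⟩ : Nonempty (Fin B.rank ≃ {i // hH.eigenvalues i ≠ 0}) := by
    rw [hH.rank_eq_card_non_zero_eigs]
    exact ⟨(Fintype.equivFin _).symm⟩
  set U : Matrix N N ℂ := (hH.eigenvectorUnitary : Matrix N N ℂ) with hU
  set e := hH.eigenvalues with he
  have hnn : ∀ x, 0 ≤ e x := hB.eigenvalues_nonneg
  have key : ∀ (F : N → ℂ), (∀ x, e x = 0 → F x = 0) →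
      ∑ a : Fin B.rank, F ((σ a : {i // e i ≠ 0}) : N) = ∑ x : N, F x := by
    intro F hF
    rw [Equiv.sum_comp σ (fun c : {i // e i ≠ 0} => F (c : N))]
    rw [← Finset.sum_subtype (Finset.univ.filter fun i => e i ≠ 0) (by simp) F]
    exact Finset.sum_filter_of_ne fun x _ hx h0 => hx (hF x h0)
  refine ⟨Matrix.of fun a j => (Real.sqrt (e (σ a)) : ℂ) * (starRingEnd ℂ) (U j (σ a)), ?_⟩
  ext j l
  have hspec := congrArg (fun X : Matrix N N ℂ => X j l) hH.spectral_theorem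
  simp only [Unitary.conjStarAlgAut_apply, Unitary.coe_star, Matrix.mul_apply, Matrix.diagonal_apply, Function.comp_apply, mul_ite, mul_zero,
    Finset.sum_ite_eq', Finset.mem_univ, if_true, star_apply] at hspec
  calc B j l = ∑ x : N, (e x : ℂ) * U j x * (starRingEnd ℂ) (U l x) := by
        rw [hspec]
        exact Finset.sum_congr rfl fun x _ => by simp only [hU, he, Complex.star_def]; exact congrArg (· * _) (mul_comm _ _)
    _ = ∑ a : Fin B.rank, (e ((σ a : {i // e i ≠ 0}) : N) : ℂ) * U j (σ a) *
          (starRingEnd ℂ) (U l (σ a)) := by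
        refine (key _ fun x hx => ?_).symm
        simp [hx]
    _ = _ := by
        refine Finset.sum_congr rfl fun a _ => ?_
        simp only [conjTranspose_apply, Matrix.of_apply, star_mul', RingHomCompTriple.comp_apply,
          RingHom.id_apply, star_star]
        have : ((Real.sqrt (e (σ a)) : ℂ)) * (Real.sqrt (e (σ a)) : ℂ) = (e (σ a) : ℂ) := by
          rw [← Complex.ofReal_mul, Real.mul_self_sqrt (hnn _)]
        simp only [Complex.star_def, Complex.conj_ofReal, Complex.conj_conj]
        rw [← this]; ring

lemma beta_le_rank {n : ℕ} (S : Submodule ℂ (Matrix (Fin n) (Fin n) ℂ))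
    {m : ℕ} {B : Matrix (Fin m × Fin n) (Fin m × Fin n) ℂ}
    (hpsd : B.PosSemidef)
    (hblocks : ∀ i j : Fin m, (Matrix.of fun a b : Fin n => B (i, a) (j, b)) ∈ S)
    (htr : (∑ i : Fin m, Matrix.of fun a b : Fin n => B (i, a) (i, b)) = 1) :
    betaOS S ≤ B.rank := by
  obtain ⟨M, hM⟩ := psd_rank_factor hpsd
  set A : Fin m → Matrix (Fin B.rank) (Fin n) ℂ :=
    fun i => Matrix.of fun c x => M c (i, x) with hA
  have hAij : ∀ i j, (A i)ᴴ * A j = Matrix.of fun a b : Fin n => B (i, a) (j, b) := by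
    intro i j
    ext x y
    simp only [Matrix.mul_apply, conjTranspose_apply, Matrix.of_apply, hA, hM]
  refine Nat.sInf_le ⟨m, A, ?_, ?_⟩
  · show ∑ i, (A i)ᴴ * A i = 1
    calc ∑ i, (A i)ᴴ * A i = ∑ i : Fin m, Matrix.of fun a b : Fin n => B (i, a) (i, b) :=
          Finset.sum_congr rfl fun i _ => hAij i i
      _ = 1 := htr
  · rw [confGraph, Submodule.span_le]
    rintro X ⟨i, j, rfl⟩
    rw [hAij]
    exact hblocks i j

lemma kraus_compress {n k r : ℕ} (A : Fin r → Matrix (Fin k) (Fin n) ℂ) (hK : IsKraus A) :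
    ∃ d, d ≤ k * n ∧ ∃ A' : Fin d → Matrix (Fin k) (Fin n) ℂ,
      IsKraus A' ∧
      ∀ a b, (A' a)ᴴ * (A' b) ∈ Submodule.span ℂ {X | ∃ i j, X = (A i)ᴴ * A j} := by
  classical
  let g : EuclideanSpace ℂ (Fin r) →ₗ[ℂ] Matrix (Fin k) (Fin n) ℂ :=
    { toFun := fun x => ∑ j, x j • A j
      map_add' := fun x y => by
        simp [PiLp.add_apply, add_smul, Finset.sum_add_distrib]
      map_smul' := fun c x => by
        simp [PiLp.smul_apply, smul_smul, Finset.smul_sum] }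
  have hg : ∀ x : EuclideanSpace ℂ (Fin r), g x = ∑ j, x j • A j := fun _ => rfl
  set W := (LinearMap.ker g)ᗮ with hW
  set d := Module.finrank ℂ W with hd'
  have hd : d ≤ k * n := by
    have h1 : Module.finrank ℂ (LinearMap.ker g) + d = r :=
      (Submodule.finrank_add_finrank_orthogonal (K := LinearMap.ker g)).trans
        finrank_euclideanSpace_fin
    have h2 : Module.finrank ℂ (LinearMap.range g) + Module.finrank ℂ (LinearMap.ker g) = r :=
      (LinearMap.finrank_range_add_finrank_ker g).trans finrank_euclideanSpace_fin
    have h3 : Module.finrank ℂ (LinearMap.range g) ≤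
        Module.finrank ℂ (Matrix (Fin k) (Fin n) ℂ) := Submodule.finrank_le _
    have h4 : Module.finrank ℂ (Matrix (Fin k) (Fin n) ℂ) = k * n := by
      simp [Module.finrank_matrix]
    omega
  let b := stdOrthonormalBasis ℂ W
  let u : Fin d → EuclideanSpace ℂ (Fin r) := fun a => ((b a : W) : EuclideanSpace ℂ (Fin r))
  let A' : Fin d → Matrix (Fin k) (Fin n) ℂ := fun a => g (u a)
  have hmul : ∀ v w : EuclideanSpace ℂ (Fin r), (g v)ᴴ * g w =
      ∑ i, ∑ j, (star (v i) * w j) • ((A i)ᴴ * A j) := by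
    intro v w
    rw [hg, hg, conjTranspose_sum, Matrix.sum_mul]
    refine Finset.sum_congr rfl fun i _ => ?_
    rw [conjTranspose_smul, Matrix.smul_mul, Matrix.mul_sum, Finset.smul_sum]
    refine Finset.sum_congr rfl fun j _ => ?_
    rw [Matrix.mul_smul, smul_smul]
  have hproj : ∀ x : EuclideanSpace ℂ (Fin r), g (∑ a, (inner ℂ (u a) x : ℂ) • u a) = g x := by
    intro x
    have h1 : (∑ a, (inner ℂ (u a) x : ℂ) • u a) =
        ((W.orthogonalProjectionOnto x : W) : EuclideanSpace ℂ (Fin r)) := by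
      rw [b.orthogonalProjectionOnto_apply_eq_sum]
      rw [Submodule.coe_sum]
      refine Finset.sum_congr rfl fun a _ => ?_
      rw [Submodule.coe_smul]
    rw [h1]
    have h2 : x - ((W.orthogonalProjectionOnto x : W) : EuclideanSpace ℂ (Fin r)) ∈ Wᗮ :=
      Submodule.sub_starProjection_mem_orthogonal x
    haveI : CompleteSpace (LinearMap.ker g) := FiniteDimensional.complete ℂ _
    have horth : Wᗮ = LinearMap.ker g := by
      rw [hW]; exact Submodule.orthogonal_orthogonal _
    rw [horth] at h2
    have h3 : g (x - ((W.orthogonalProjectionOnto x : W) : EuclideanSpace ℂ (Fin r))) = 0 := h2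
    rw [map_sub, sub_eq_zero] at h3
    exact h3.symm
  have hgmul : ∀ (x : EuclideanSpace ℂ (Fin r)) i, (A i)ᴴ * g x = ∑ j, x j • ((A i)ᴴ * A j) := by
    intro x i
    rw [hg, Matrix.mul_sum]
    exact Finset.sum_congr rfl fun j _ => Matrix.mul_smul _ _ _
  have hgsingle : ∀ i, g (EuclideanSpace.single i 1) = A i := by
    intro i
    rw [hg]
    simp [EuclideanSpace.single_apply, ite_smul]
  set c : Fin r → EuclideanSpace ℂ (Fin r) := fun i => ∑ a, (inner ℂ (u a) (EuclideanSpace.single i 1) : ℂ) • u a with hc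
  have hcij : ∀ i j, (c i) j = ∑ a, star (u a i) * u a j := by
    intro i j
    rw [hc]
    simp only [EuclideanSpace.inner_single_right, one_mul, Complex.star_def]
    rw [show ((∑ a, (starRingEnd ℂ) (u a i) • u a) j)
        = ∑ a, ((starRingEnd ℂ) (u a i) • u a) j by rw [WithLp.ofLp_sum, Finset.sum_apply]]
    refine Finset.sum_congr rfl fun a _ => ?_
    rw [PiLp.smul_apply, smul_eq_mul, mul_comm]
  refine ⟨d, hd, A', ?_, ?_⟩
  · show ∑ a, (A' a)ᴴ * A' a = 1
    calc ∑ a, (A' a)ᴴ * A' a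
        = ∑ a, ∑ i, ∑ j, (star (u a i) * u a j) • ((A i)ᴴ * A j) :=
          Finset.sum_congr rfl fun a _ => hmul _ _
      _ = ∑ i, ∑ j, ∑ a, (star (u a i) * u a j) • ((A i)ᴴ * A j) := by
          rw [Finset.sum_comm]
          exact Finset.sum_congr rfl fun i _ => Finset.sum_comm
      _ = ∑ i, (A i)ᴴ * g (c i) := by
          refine Finset.sum_congr rfl fun i _ => ?_
          rw [hgmul (c i) i]
          refine Finset.sum_congr rfl fun j _ => ?_
          rw [hcij, Finset.sum_smul]
      _ = ∑ i, (A i)ᴴ * A i := by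
          refine Finset.sum_congr rfl fun i _ => ?_
          rw [hc]
          rw [hproj (EuclideanSpace.single i 1), hgsingle i]
      _ = 1 := hK
  · intro a c
    rw [show (A' a)ᴴ * A' c = _ from hmul (u a) (u c)]
    refine Submodule.sum_mem _ fun i _ => Submodule.sum_mem _ fun j _ =>
      Submodule.smul_mem _ _ (Submodule.subset_span ⟨i, j, rfl⟩)

/-- `β(S)` is the minimum rank of a PSD `m × m` block matrix with blocks
in `S` and block trace `I_n`; the minimum is attained with `m ≤ 2n³`. -/
theorem beta_eq_minrank (n : ℕ) (S : Submodule ℂ (Matrix (Fin n) (Fin n) ℂ))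
    (hS : IsOperatorSystem S) :
    betaOS S =
      sInf {ρ : ℕ | ∃ m : ℕ, ∃ B : Matrix (Fin m × Fin n) (Fin m × Fin n) ℂ,
        B.PosSemidef ∧
        (∀ i j : Fin m, (Matrix.of fun a b : Fin n => B (i, a) (j, b)) ∈ S) ∧
        (∑ i : Fin m, Matrix.of fun a b : Fin n => B (i, a) (i, b)) = 1 ∧
        B.rank = ρ} ∧
    ∃ m ≤ 2 * n ^ 3, ∃ B : Matrix (Fin m × Fin n) (Fin m × Fin n) ℂ,
      B.PosSemidef ∧
      (∀ i j : Fin m, (Matrix.of fun a b : Fin n => B (i, a) (j, b)) ∈ S) ∧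
      (∑ i : Fin m, Matrix.of fun a b : Fin n => B (i, a) (i, b)) = 1 ∧
      B.rank = betaOS S := by
  classical
  have hmemn : n ∈ {k | ∃ r : ℕ, ∃ A : Fin r → Matrix (Fin k) (Fin n) ℂ,
      IsKraus A ∧ confGraph A ≤ S} := by
    refine ⟨1, fun _ => (1 : Matrix (Fin n) (Fin n) ℂ), ?_, ?_⟩
    · show ∑ _i : Fin 1, (1 : Matrix (Fin n) (Fin n) ℂ)ᴴ * 1 = 1
      simp
    · rw [confGraph, Submodule.span_le]
      rintro X ⟨i, j, rfl⟩
      simpa using hS.1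
  have hbn : betaOS S ≤ n := Nat.sInf_le hmemn
  have hbeta_mem : betaOS S ∈ {k | ∃ r : ℕ, ∃ A : Fin r → Matrix (Fin k) (Fin n) ℂ,
      IsKraus A ∧ confGraph A ≤ S} := Nat.sInf_mem ⟨n, hmemn⟩
  obtain ⟨r, A, hA, hAS⟩ := hbeta_mem
  obtain ⟨d, hdkn, A', hK', hspan'⟩ := kraus_compress A hA
  have hA'S : ∀ a b, (A' a)ᴴ * A' b ∈ S := fun a b =>
    hAS (show _ ∈ confGraph A from hspan' a b)
  set M : Matrix (Fin (betaOS S)) (Fin d × Fin n) ℂ :=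
    Matrix.of fun cidx p => A' p.1 cidx p.2 with hM
  set B : Matrix (Fin d × Fin n) (Fin d × Fin n) ℂ := Mᴴ * M with hB
  have hpsd : B.PosSemidef := posSemidef_conjTranspose_mul_self M
  have hblk : ∀ a b : Fin d,
      (Matrix.of fun x y : Fin n => B (a, x) (b, y)) = (A' a)ᴴ * A' b := by
    intro a b
    ext x y
    simp [hB, hM, Matrix.mul_apply, conjTranspose_apply]
  have hblkS : ∀ a b : Fin d, (Matrix.of fun x y : Fin n => B (a, x) (b, y)) ∈ S := by
    intro a b
    rw [hblk]
    exact hA'S a b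
  have htr : (∑ a : Fin d, Matrix.of fun x y : Fin n => B (a, x) (a, y)) = 1 := by
    rw [Finset.sum_congr rfl fun a _ => hblk a a]
    exact hK'
  have hrank_le : B.rank ≤ betaOS S := by
    rw [hB, Matrix.rank_conjTranspose_mul_self]
    exact (Matrix.rank_le_card_height M).trans (le_of_eq (Fintype.card_fin _))
  have hrank : B.rank = betaOS S :=
    le_antisymm hrank_le (beta_le_rank S hpsd hblkS htr)
  have hmemrank : betaOS S ∈ {ρ : ℕ | ∃ m : ℕ,
      ∃ B : Matrix (Fin m × Fin n) (Fin m × Fin n) ℂ,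
        B.PosSemidef ∧
        (∀ i j : Fin m, (Matrix.of fun a b : Fin n => B (i, a) (j, b)) ∈ S) ∧
        (∑ i : Fin m, Matrix.of fun a b : Fin n => B (i, a) (i, b)) = 1 ∧
        B.rank = ρ} := ⟨d, B, hpsd, hblkS, htr, hrank⟩
  refine ⟨le_antisymm ?_ (Nat.sInf_le hmemrank), d, ?_, B, hpsd, hblkS, htr, hrank⟩
  · refine le_csInf ⟨_, hmemrank⟩ ?_
    rintro ρ ⟨m, B', hpsd', hblkS', htr', rfl⟩
    exact beta_le_rank S hpsd' hblkS' htr'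
  · calc d ≤ betaOS S * n := hdkn
      _ ≤ n * n := Nat.mul_le_mul_right n hbn
      _ ≤ 2 * n ^ 3 := by
          rcases Nat.eq_zero_or_pos n with h | h
          · simp [h]
          · calc n * n = n ^ 2 := (sq n).symm
              _ ≤ n ^ 3 := Nat.pow_le_pow_right h (by norm_num)
              _ ≤ 2 * n ^ 3 := by omega
end

section
/- Let x_1,…,x_n be nonzero vectors in ℂ^k, let x̂_i = x_i/‖x_i‖, let A ∈ M_{k,n} be the matrix with columns x̂_1,…,x̂_n, and let Δ be the set of all 2^n diagonal n×n matrices whose diagonal entries are ±1. Then span{D AᴴA D' : D, D' ∈ Δ} = S_{G(x)}. -/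
open Matrix
open scoped ComplexOrder

/-- The Euclidean norm of a vector in `ℂ^k`. -/
noncomputable def eucNorm {k : ℕ} (v : Fin k → ℂ) : ℝ :=
  ‖(WithLp.equiv 2 (Fin k → ℂ)).symm v‖

lemma eucNorm_ne_zero {k : ℕ} {v : Fin k → ℂ} (hv : v ≠ 0) : eucNorm v ≠ 0 := by
  simp only [eucNorm, norm_ne_zero_iff]
  intro h
  exact hv (by simpa using congrArg (WithLp.equiv 2 (Fin k → ℂ)) h)

lemma self_inner_ne_zero {k : ℕ} {v : Fin k → ℂ} (hv : v ≠ 0) :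
    (∑ r, star (v r) * v r) ≠ 0 := by
  have h : (∑ r, star (v r) * v r) = ((∑ r, Complex.normSq (v r) : ℝ) : ℂ) := by
    push_cast
    refine Finset.sum_congr rfl fun r _ => ?_
    rw [Complex.star_def, mul_comm, Complex.mul_conj]
  rw [h]
  norm_cast
  obtain ⟨r, hr⟩ := Function.ne_iff.mp hv
  have hpos : 0 < ∑ r, Complex.normSq (v r) :=
    Finset.sum_pos' (fun i _ => Complex.normSq_nonneg _)
      ⟨r, Finset.mem_univ r, Complex.normSq_pos.mpr hr⟩
  exact ne_of_gt hpos

/-- with `A` the matrix of normalised columns `xᵢ/‖xᵢ‖` and `Δ` the `±1`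
diagonal matrices, `span{D Aᴴ A D' : D, D' ∈ Δ}` equals the graph operator system
`S_{G(x)}` of the non-orthogonality graph of `x`. -/
theorem delta_span_eq_graphOS (n k : ℕ) (x : Fin n → Fin k → ℂ) (hx : ∀ i, x i ≠ 0) :
    Submodule.span ℂ {M : Matrix (Fin n) (Fin n) ℂ | ∃ ε ε' : Fin n → Bool,
      M = (Matrix.diagonal fun i => if ε i then (1 : ℂ) else -1) *
        (Matrix.of fun r i => (eucNorm (x i) : ℂ)⁻¹ * x i r)ᴴ *
        (Matrix.of fun r i => (eucNorm (x i) : ℂ)⁻¹ * x i r) *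
        (Matrix.diagonal fun i => if ε' i then (1 : ℂ) else -1)} =
    Submodule.span ℂ {E : Matrix (Fin n) (Fin n) ℂ | ∃ i j,
      (i = j ∨ ∑ r, star (x i r) * x j r ≠ 0) ∧ E = Matrix.single i j 1} := by
  set A : Matrix (Fin k) (Fin n) ℂ :=
    Matrix.of fun r i => (eucNorm (x i) : ℂ)⁻¹ * x i r with hA
  set B : Matrix (Fin n) (Fin n) ℂ := Aᴴ * A with hBdef
  set c : Fin n → ℂ := fun i => ((eucNorm (x i) : ℝ) : ℂ)⁻¹ with hc
  have hcne : ∀ i, c i ≠ 0 := by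
    intro i
    simp only [hc, ne_eq, inv_eq_zero, Complex.ofReal_eq_zero]
    exact eucNorm_ne_zero (hx i)
  have hB : ∀ a b, B a b = c a * c b * ∑ r, star (x a r) * x b r := by
    intro a b
    simp only [hBdef, Matrix.mul_apply, Matrix.conjTranspose_apply, hA, Matrix.of_apply]
    rw [Finset.mul_sum]
    refine Finset.sum_congr rfl fun r _ => ?_
    simp only [star_mul', hc]
    rw [show star (((eucNorm (x a) : ℝ) : ℂ)⁻¹) = ((eucNorm (x a) : ℝ) : ℂ)⁻¹ by
      simp [Complex.star_def]]
    ring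
  have hBne : ∀ a b, B a b ≠ 0 ↔ (∑ r, star (x a r) * x b r) ≠ 0 := by
    intro a b
    rw [hB a b]
    constructor
    · intro h hS; exact h (by rw [hS, mul_zero])
    · intro hS
      exact mul_ne_zero (mul_ne_zero (hcne a) (hcne b)) hS
  -- entries of D B D'
  have hent : ∀ (ε ε' : Fin n → Bool) (a b : Fin n),
      ((Matrix.diagonal fun i => if ε i then (1 : ℂ) else -1) * Aᴴ * A *
        (Matrix.diagonal fun i => if ε' i then (1 : ℂ) else -1)) a b =
      (if ε a then (1 : ℂ) else -1) * B a b * (if ε' b then (1 : ℂ) else -1) := by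
    intro ε ε' a b
    rw [Matrix.mul_diagonal, show (Matrix.diagonal fun i => if ε i then (1:ℂ) else -1) * Aᴴ * A
        = (Matrix.diagonal fun i => if ε i then (1:ℂ) else -1) * B by rw [hBdef, Matrix.mul_assoc],
      Matrix.diagonal_mul]
  apply le_antisymm
  · rw [Submodule.span_le]
    rintro M ⟨ε, ε', rfl⟩
    have heq : (Matrix.diagonal fun i => if ε i then (1 : ℂ) else -1) * Aᴴ * A *
        (Matrix.diagonal fun i => if ε' i then (1 : ℂ) else -1) =
        ∑ i : Fin n, ∑ j : Fin n,
          ((if ε i then (1 : ℂ) else -1) * B i j * (if ε' j then (1 : ℂ) else -1)) •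
            Matrix.single i j (1 : ℂ) := by
      conv_lhs => rw [Matrix.matrix_eq_sum_single ((Matrix.diagonal fun i => if ε i then (1 : ℂ) else -1) * Aᴴ * A * (Matrix.diagonal fun i => if ε' i then (1 : ℂ) else -1))]
      refine Finset.sum_congr rfl fun i _ => Finset.sum_congr rfl fun j _ => ?_
      rw [hent, Matrix.smul_single, smul_eq_mul, mul_one]
    rw [heq]
    refine Submodule.sum_mem _ fun i _ => Submodule.sum_mem _ fun j _ => ?_
    by_cases hz : B i j = 0
    · rw [hz, mul_zero, zero_mul, zero_smul]; exact Submodule.zero_mem _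
    · exact Submodule.smul_mem _ _ (Submodule.subset_span
        ⟨i, j, Or.inr ((hBne i j).mp hz), rfl⟩)
  · rw [Submodule.span_le]
    rintro E ⟨i, j, hij, rfl⟩
    have hS : (∑ r, star (x i r) * x j r) ≠ 0 := by
      rcases hij with rfl | h
      · exact self_inner_ne_zero (hx i)
      · exact h
    have hBij : B i j ≠ 0 := (hBne i j).mpr hS
    -- the four sign patterns
    set εt : Fin n → Bool := fun _ => true with hεt
    set εi : Fin n → Bool := fun a => decide (a ≠ i) with hεi
    set εj : Fin n → Bool := fun a => decide (a ≠ j) with hεj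
    have mem : ∀ ε ε' : Fin n → Bool,
        (Matrix.diagonal fun a => if ε a then (1 : ℂ) else -1) * Aᴴ * A *
          (Matrix.diagonal fun a => if ε' a then (1 : ℂ) else -1) ∈
        Submodule.span ℂ {M : Matrix (Fin n) (Fin n) ℂ | ∃ ε ε' : Fin n → Bool,
          M = (Matrix.diagonal fun a => if ε a then (1 : ℂ) else -1) * Aᴴ * A *
            (Matrix.diagonal fun a => if ε' a then (1 : ℂ) else -1)} :=
      fun ε ε' => Submodule.subset_span ⟨ε, ε', rfl⟩
    have key : Matrix.single i j (1 : ℂ) =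
        ((B i j)⁻¹ * (4 : ℂ)⁻¹) •
          (((Matrix.diagonal fun a => if εt a then (1 : ℂ) else -1) * Aᴴ * A *
              (Matrix.diagonal fun a => if εt a then (1 : ℂ) else -1)) -
            ((Matrix.diagonal fun a => if εi a then (1 : ℂ) else -1) * Aᴴ * A *
              (Matrix.diagonal fun a => if εt a then (1 : ℂ) else -1)) -
            ((Matrix.diagonal fun a => if εt a then (1 : ℂ) else -1) * Aᴴ * A *
              (Matrix.diagonal fun a => if εj a then (1 : ℂ) else -1)) +
            ((Matrix.diagonal fun a => if εi a then (1 : ℂ) else -1) * Aᴴ * A *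
              (Matrix.diagonal fun a => if εj a then (1 : ℂ) else -1))) := by
      have e1 : ∀ p : Fin n, (if εt p then (1 : ℂ) else -1) = 1 := fun p => by simp [hεt]
      have e2 : ∀ p : Fin n, (if εi p then (1 : ℂ) else -1) = if p = i then -1 else 1 := by
        intro p; by_cases h : p = i <;> simp [hεi, h]
      have e3 : ∀ p : Fin n, (if εj p then (1 : ℂ) else -1) = if p = j then -1 else 1 := by
        intro p; by_cases h : p = j <;> simp [hεj, h]
      ext p q
      rw [Matrix.smul_apply, Matrix.add_apply, Matrix.sub_apply, Matrix.sub_apply,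
        hent, hent, hent, hent]
      simp only [e1, e2, e3, if_true, smul_eq_mul]
      by_cases hp : p = i <;> by_cases hq : q = j
      · subst hp; subst hq
        rw [Matrix.single_apply_same]
        rw [if_pos rfl, if_pos rfl]
        field_simp
        ring
      · rw [Matrix.single_apply_of_ne _ _ _ _ _ (by tauto)]
        rw [if_pos hp, if_neg hq]
        ring
      · rw [Matrix.single_apply_of_ne _ _ _ _ _ (by tauto)]
        rw [if_neg hp, if_pos hq]
        ring
      · rw [Matrix.single_apply_of_ne _ _ _ _ _ (by tauto)]
        rw [if_neg hp, if_neg hq]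
        ring
    rw [key]
    exact Submodule.smul_mem _ _
      (Submodule.add_mem _
        (Submodule.sub_mem _ (Submodule.sub_mem _ (mem εt εt) (mem εi εt)) (mem εt εj))
        (mem εi εj))
end

section
/- Let G be a simple graph on vertex set {1,…,n}. Then α(S_G) = α(G), β(S_G) = β(G), and γ(S_G) = γ(G), where on the left the parameters are the operator-system parameters of S_G ⊆ M_n and on the right are the corresponding graph parameters of G. -/
open Matrix
open scoped ComplexOrder

/-- Quantum complexity `γ(S)`: the least `k` such that `S = S_Φ` for some
quantum channel `Φ : M_ι → M_k`. -/
noncomputable def gammaOS {ι : Type*} [Fintype ι] [DecidableEq ι]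
    (S : Submodule ℂ (Matrix ι ι ℂ)) : ℕ :=
  sInf {k | ∃ r : ℕ, ∃ A : Fin r → Matrix (Fin k) ι ℂ, IsKraus A ∧ confGraph A = S}

/-- Independence number `α(S)`: the largest `m` admitting an `S`-independent family
of `m` nonzero vectors, i.e. with `tr(Bᴴ xₚ xₖᴴ) = 0` for `B ∈ S`, `p ≠ q`. -/
noncomputable def alphaOS {ι : Type*} [Fintype ι] [DecidableEq ι]
    (S : Submodule ℂ (Matrix ι ι ℂ)) : ℕ :=
  sSup {m | ∃ x : Fin m → ι → ℂ, (∀ p, x p ≠ 0) ∧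
    ∀ p q, p ≠ q → ∀ B ∈ S, Matrix.trace (Bᴴ * Matrix.vecMulVec (x p) (star (x q))) = 0}

/-- The graph operator system `S_G`, spanned by the matrix units `E_{ij}` with
`i = j` or `ij` an edge of `G`. -/
noncomputable def graphOS {n : ℕ} (G : SimpleGraph (Fin n)) :
    Submodule ℂ (Matrix (Fin n) (Fin n) ℂ) :=
  Submodule.span ℂ {E | ∃ i j, (i = j ∨ G.Adj i j) ∧ E = Matrix.single i j 1}

/-- Graph parameter `γ(G)`: the least `k` for which `G` is the non-orthogonality graph
of a tuple of nonzero vectors in `ℂ^k`. -/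
noncomputable def gammaG {n : ℕ} (G : SimpleGraph (Fin n)) : ℕ :=
  sInf {k | ∃ x : Fin n → Fin k → ℂ, (∀ i, x i ≠ 0) ∧
    ∀ i j, i ≠ j → (G.Adj i j ↔ ∑ r, star (x i r) * x j r ≠ 0)}

/-- Graph parameter `β(G)`: the least `k` for which the non-orthogonality graph of
some tuple of nonzero vectors in `ℂ^k` is a subgraph of `G`. -/
noncomputable def betaG {n : ℕ} (G : SimpleGraph (Fin n)) : ℕ :=
  sInf {k | ∃ x : Fin n → Fin k → ℂ, (∀ i, x i ≠ 0) ∧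
    ∀ i j, i ≠ j → (∑ r, star (x i r) * x j r ≠ 0) → G.Adj i j}

/-- The independence number `α(G)` of a graph. -/
noncomputable def alphaG {n : ℕ} (G : SimpleGraph (Fin n)) : ℕ :=
  sSup {m | ∃ s : Finset (Fin n), s.card = m ∧ ∀ i ∈ s, ∀ j ∈ s, i ≠ j → ¬ G.Adj i j}

namespace GPAux
open Polynomial

variable {n : ℕ}

/-- The "bound" submodule: matrices vanishing on non-edges. -/
noncomputable def osBound (G : SimpleGraph (Fin n)) : Submodule ℂ (Matrix (Fin n) (Fin n) ℂ) where
  carrier := {B | ∀ i j, i ≠ j → ¬ G.Adj i j → B i j = 0}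
  add_mem' := by
    intro a b ha hb i j h1 h2
    simp [Matrix.add_apply, ha i j h1 h2, hb i j h1 h2]
  zero_mem' := by intro i j _ _; rfl
  smul_mem' := by
    intro c B hB i j h1 h2
    simp [Matrix.smul_apply, hB i j h1 h2]

lemma mem_graphOS_iff {G : SimpleGraph (Fin n)} {B : Matrix (Fin n) (Fin n) ℂ} :
    B ∈ graphOS G ↔ ∀ i j, i ≠ j → ¬ G.Adj i j → B i j = 0 := by
  constructor
  · intro hB
    have hle : graphOS G ≤ osBound G := by
      rw [graphOS, Submodule.span_le]
      rintro E ⟨i, j, hij, rfl⟩ a b h1 h2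
      show Matrix.single i j 1 a b = 0
      simp only [Matrix.single, Matrix.of_apply, ite_eq_right_iff, one_ne_zero]
      rintro ⟨rfl, rfl⟩
      rcases hij with rfl | hadj
      · exact h1 rfl
      · exact h2 hadj
    exact hle hB
  · intro hB
    rw [Matrix.matrix_eq_sum_single B]
    apply Submodule.sum_mem
    intro i _
    apply Submodule.sum_mem
    intro j _
    by_cases h0 : B i j = 0
    · rw [h0, Matrix.single_zero]; exact Submodule.zero_mem _
    · have hij : i = j ∨ G.Adj i j := by
        by_contra hc
        push_neg at hc
        exact h0 (hB i j hc.1 hc.2)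
      have : Matrix.single i j (B i j) = B i j • Matrix.single i j (1 : ℂ) := by
        rw [Matrix.smul_single, smul_eq_mul, mul_one]
      rw [this]
      exact Submodule.smul_mem _ _ (Submodule.subset_span ⟨i, j, hij, rfl⟩)

lemma trace_formula (B : Matrix (Fin n) (Fin n) ℂ) (u v : Fin n → ℂ) :
    Matrix.trace (Bᴴ * Matrix.vecMulVec u (star v)) =
      ∑ i, ∑ j, (starRingEnd ℂ) (B i j) * (u i * (starRingEnd ℂ) (v j)) := by
  simp only [Matrix.trace, Matrix.diag, Matrix.mul_apply, Matrix.conjTranspose_apply,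
    Matrix.vecMulVec_apply, Pi.star_apply]
  rw [Finset.sum_comm]
  apply Finset.sum_congr rfl
  intro i _
  apply Finset.sum_congr rfl
  intro j _
  simp only [Complex.star_def]

lemma trace_std (a b : Fin n) (u v : Fin n → ℂ) :
    Matrix.trace ((Matrix.single a b (1:ℂ))ᴴ * Matrix.vecMulVec u (star v)) =
      u a * (starRingEnd ℂ) (v b) := by
  rw [trace_formula]
  simp only [Matrix.single, Matrix.of_apply]
  rw [Finset.sum_eq_single a]
  · rw [Finset.sum_eq_single b]
    · simp
    · intro j _ hj; simp [hj.symm]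
    · simp
  · intro i _ hi
    apply Finset.sum_eq_zero
    intro j _
    simp [hi.symm]
  · simp


noncomputable def quad {r : ℕ} (M : Matrix (Fin r) (Fin r) ℂ) (c : Fin r → ℂ) : ℂ :=
  ∑ i, ∑ j, (starRingEnd ℂ) (c i) * c j * M i j

lemma exists_quad_ne {r : ℕ} {M : Matrix (Fin r) (Fin r) ℂ} (hM : M ≠ 0) :
    ∃ c : Fin r → ℂ, quad M c ≠ 0 := by
  by_contra h
  push_neg at h
  have hT : Matrix.toEuclideanLin M = 0 := by
    rw [← inner_map_self_eq_zero]
    intro x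
    have hx := h (fun i => x i)
    have key : (inner ℂ (Matrix.toEuclideanLin M x) x : ℂ) =
        (starRingEnd ℂ) (quad M (fun i => x i)) := by
      rw [PiLp.inner_apply]
      simp only [quad, map_sum, _root_.map_mul, Complex.conj_conj, RCLike.inner_apply]
      apply Finset.sum_congr rfl
      intro i _
      have : Matrix.toEuclideanLin M x i = ∑ j, M i j * x j := by
        rw [Matrix.toEuclideanLin_apply]
        rfl
      rw [this, map_sum, Finset.mul_sum]
      apply Finset.sum_congr rfl
      intro j _
      simp only [_root_.map_mul]
      ring
    rw [key, hx, map_zero]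
  exact hM ((LinearEquiv.map_eq_zero_iff Matrix.toEuclideanLin).mp hT)


noncomputable def mixed {r : ℕ} (M : Matrix (Fin r) (Fin r) ℂ) (c c' : Fin r → ℂ) : ℂ :=
  ∑ i, ∑ j, ((starRingEnd ℂ) (c i) * c' j + (starRingEnd ℂ) (c' i) * c j) * M i j

lemma quad_add_real {r : ℕ} (M : Matrix (Fin r) (Fin r) ℂ) (c c' : Fin r → ℂ) (t : ℝ) :
    quad M (c + (t:ℂ) • c') = quad M c + (t:ℂ) * mixed M c c' + (t:ℂ)^2 * quad M c' := by
  simp only [quad, mixed, Pi.add_apply, Pi.smul_apply, smul_eq_mul, map_add, _root_.map_mul,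
    Complex.conj_ofReal, Finset.mul_sum, ← Finset.sum_add_distrib]
  apply Finset.sum_congr rfl; intro i _
  apply Finset.sum_congr rfl; intro j _
  ring

lemma exists_forall_quad_ne {r : ℕ} {L : Type*} (s : Finset L)
    (M : L → Matrix (Fin r) (Fin r) ℂ) (hM : ∀ l ∈ s, M l ≠ 0) :
    ∃ c : Fin r → ℂ, ∀ l ∈ s, quad (M l) c ≠ 0 := by
  classical
  induction s using Finset.cons_induction with
  | empty => exact ⟨0, by simp⟩
  | cons a s ha ih =>
    obtain ⟨c, hc⟩ := ih (fun l hl => hM l (Finset.mem_cons_of_mem hl))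
    obtain ⟨c', hc'⟩ := exists_quad_ne (hM a (Finset.mem_cons_self a s))
    set P : L → Polynomial ℂ := fun l =>
      C (quad (M l) c) + C (mixed (M l) c c') * X + C (quad (M l) c') * X ^ 2 with hP
    have hPne : ∀ l ∈ Finset.cons a s ha, P l ≠ 0 := by
      intro l hl h0
      rcases Finset.mem_cons.mp hl with rfl | hl'
      · apply hc'
        have h2 := congrArg (fun p : Polynomial ℂ => p.coeff 2) h0
        simpa [hP, coeff_add, coeff_C, coeff_C_mul, coeff_X_pow] using h2
      · apply hc l hl'
        have h2 := congrArg (fun p : Polynomial ℂ => p.eval 0) h0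
        simpa [hP] using h2
    have hQ : (∏ l ∈ Finset.cons a s ha, P l) ≠ 0 := Finset.prod_ne_zero_iff.mpr hPne
    have hfin : Set.Finite {t : ℝ | ((∏ l ∈ Finset.cons a s ha, P l).eval (t:ℂ)) = 0} := by
      have : {t : ℝ | ((∏ l ∈ Finset.cons a s ha, P l).eval (t:ℂ)) = 0} =
          (fun t : ℝ => (t:ℂ)) ⁻¹' {z : ℂ | (∏ l ∈ Finset.cons a s ha, P l).IsRoot z} := rfl
      rw [this]
      exact Set.Finite.preimage (Complex.ofReal_injective.injOn)
        (Polynomial.finite_setOf_isRoot hQ)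
    obtain ⟨t, ht⟩ := (hfin.infinite_compl).nonempty
    refine ⟨c + (t:ℂ) • c', ?_⟩
    intro l hl
    have heval : quad (M l) (c + (t:ℂ) • c') = (P l).eval (t:ℂ) := by
      rw [quad_add_real]
      simp [hP]
      ring
    rw [heval]
    have hprod : (∏ l ∈ Finset.cons a s ha, P l).eval (t:ℂ) ≠ 0 := ht
    rw [Polynomial.eval_prod] at hprod
    exact Finset.prod_ne_zero_iff.mp hprod l hl


variable {k : ℕ}


noncomputable def nrm (x : Fin n → Fin k → ℂ) (p : Fin n) : ℂ :=
  (Real.sqrt (∑ s, Complex.normSq (x p s)) : ℂ)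

noncomputable def kOp (x : Fin n → Fin k → ℂ) (p : Fin n) : Matrix (Fin k) (Fin n) ℂ :=
  Matrix.of fun s q => if q = p then x p s / nrm x p else 0

lemma nrm_ne_zero {x : Fin n → Fin k → ℂ} {p : Fin n} (hx : x p ≠ 0) : nrm x p ≠ 0 := by
  have hpos : 0 < ∑ s, Complex.normSq (x p s) := by
    obtain ⟨s0, hs0⟩ := Function.ne_iff.mp hx
    apply Finset.sum_pos' (fun s _ => Complex.normSq_nonneg _)
    exact ⟨s0, Finset.mem_univ _, Complex.normSq_pos.mpr (by simpa using hs0)⟩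
  simp only [nrm, ne_eq, Complex.ofReal_eq_zero]
  positivity

lemma nrm_mul_self (x : Fin n → Fin k → ℂ) (p : Fin n) :
    nrm x p * nrm x p = ∑ s, (starRingEnd ℂ) (x p s) * x p s := by
  have h0 : (0:ℝ) ≤ ∑ s, Complex.normSq (x p s) :=
    Finset.sum_nonneg fun s _ => Complex.normSq_nonneg _
  simp only [nrm, ← Complex.ofReal_mul, Real.mul_self_sqrt h0]
  rw [Complex.ofReal_sum]
  apply Finset.sum_congr rfl
  intro s _
  rw [Complex.normSq_eq_conj_mul_self]

lemma kOp_mul_apply (x : Fin n → Fin k → ℂ) (p q a b : Fin n) :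
    ((kOp x p)ᴴ * kOp x q) a b =
      if a = p ∧ b = q then (∑ s, (starRingEnd ℂ) (x p s) * x q s) / (nrm x p * nrm x q)
      else 0 := by
  simp only [Matrix.mul_apply, Matrix.conjTranspose_apply, kOp, Matrix.of_apply]
  by_cases h1 : a = p <;> by_cases h2 : b = q <;>
    simp [h1, h2, Complex.star_def, div_mul_div_comm, ← Finset.sum_div, map_div₀,
      Complex.conj_ofReal, nrm]

lemma isKraus_kOp {x : Fin n → Fin k → ℂ} (hx : ∀ p, x p ≠ 0) : IsKraus (kOp x) := by
  ext a b
  rw [Matrix.sum_apply]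
  simp only [kOp_mul_apply]
  by_cases hab : a = b
  · subst hab
    rw [Finset.sum_eq_single a]
    · have hsum : (∑ s, (starRingEnd ℂ) (x a s) * x a s) ≠ 0 := by
        rw [← nrm_mul_self]
        exact mul_ne_zero (nrm_ne_zero (hx a)) (nrm_ne_zero (hx a))
      simp only [and_self, if_true, nrm_mul_self, div_self hsum]
      simp [Matrix.one_apply]
    · intro p _ hp; simp [Ne.symm hp]
    · simp
  · rw [Finset.sum_eq_zero]
    · simp [Matrix.one_apply, hab]
    · intro p _
      rw [if_neg]
      rintro ⟨rfl, rfl⟩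
      exact hab rfl


lemma confGraph_kOp_le {G : SimpleGraph (Fin n)} {x : Fin n → Fin k → ℂ}
    (himp : ∀ p q, p ≠ q → (∑ s, (starRingEnd ℂ) (x p s) * x q s) ≠ 0 → G.Adj p q) :
    confGraph (kOp x) ≤ graphOS G := by
  rw [confGraph, Submodule.span_le]
  rintro B ⟨p, q, rfl⟩
  rw [SetLike.mem_coe, mem_graphOS_iff]
  intro a b hab hnadj
  rw [kOp_mul_apply]
  split_ifs with h
  · obtain ⟨rfl, rfl⟩ := h
    rw [_root_.div_eq_zero_iff]
    left
    by_contra hne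
    exact hnadj (himp _ _ hab hne)
  · rfl

lemma graphOS_le_confGraph {G : SimpleGraph (Fin n)} {x : Fin n → Fin k → ℂ}
    (hx : ∀ p, x p ≠ 0)
    (hadj : ∀ p q, p ≠ q → G.Adj p q → (∑ s, (starRingEnd ℂ) (x p s) * x q s) ≠ 0) :
    graphOS G ≤ confGraph (kOp x) := by
  rw [graphOS, Submodule.span_le]
  rintro E ⟨p, q, hpq, rfl⟩
  rcases eq_or_ne p q with rfl | hne
  · have : Matrix.single p p (1:ℂ) = (kOp x p)ᴴ * kOp x p := by
      ext a b
      rw [kOp_mul_apply]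
      have hsum : (∑ s, (starRingEnd ℂ) (x p s) * x p s) ≠ 0 := by
        rw [← nrm_mul_self]
        exact mul_ne_zero (nrm_ne_zero (hx p)) (nrm_ne_zero (hx p))
      simp only [Matrix.single, Matrix.of_apply]
      rcases eq_or_ne p a with rfl | h1
      · rcases eq_or_ne p b with rfl | h2
        · simp [nrm_mul_self, div_self hsum]
        · simp [h2, Ne.symm h2]
      · simp [h1, Ne.symm h1]
    rw [this]
    exact Submodule.subset_span ⟨p, p, rfl⟩
  · have hGadj : G.Adj p q := hpq.resolve_left hne
    set cc : ℂ := (∑ s, (starRingEnd ℂ) (x p s) * x q s) / (nrm x p * nrm x q) with hcc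
    have hccne : cc ≠ 0 := by
      apply div_ne_zero (hadj p q hne hGadj)
      exact mul_ne_zero (nrm_ne_zero (hx p)) (nrm_ne_zero (hx q))
    have hgen : (kOp x p)ᴴ * kOp x q = cc • Matrix.single p q (1:ℂ) := by
      ext a b
      rw [kOp_mul_apply, Matrix.smul_apply]
      simp only [Matrix.single, Matrix.of_apply, smul_eq_mul, mul_ite, mul_one, mul_zero]
      rcases eq_or_ne a p with rfl | h1
      · rcases eq_or_ne b q with rfl | h2
        · simp [hcc]
        · simp [h2, Ne.symm h2]
      · simp [h1, Ne.symm h1]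
    have : Matrix.single p q (1:ℂ) = cc⁻¹ • ((kOp x p)ᴴ * kOp x q) := by
      rw [hgen, smul_smul, inv_mul_cancel₀ hccne, one_smul]
    rw [this]
    exact Submodule.smul_mem _ _ (Submodule.subset_span ⟨p, q, rfl⟩)


lemma conj_mul_sum {k r : ℕ} (A : Fin r → Matrix (Fin k) (Fin n) ℂ) (i j : Fin r) (p q : Fin n) :
    ((A i)ᴴ * A j) p q = ∑ s, (starRingEnd ℂ) (A i s p) * A j s q := by
  simp [Matrix.mul_apply, Matrix.conjTranspose_apply, Complex.star_def]

lemma kraus_diag {k r : ℕ} {A : Fin r → Matrix (Fin k) (Fin n) ℂ} (hK : IsKraus A) (p : Fin n) :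
    ∑ i, ((A i)ᴴ * A i) p p = 1 := by
  have := congrFun (congrFun (hK : ∑ i, (A i)ᴴ * A i = 1) p) p
  rw [Matrix.sum_apply] at this
  rwa [Matrix.one_apply_eq] at this

lemma entry_zero_of_forall {k r : ℕ} {A : Fin r → Matrix (Fin k) (Fin n) ℂ} {p q : Fin n}
    (h : ∀ i j, ((A i)ᴴ * A j) p q = 0) {B : Matrix (Fin n) (Fin n) ℂ}
    (hB : B ∈ confGraph A) : B p q = 0 := by
  induction hB using Submodule.span_induction with
  | mem B hB => obtain ⟨i, j, rfl⟩ := hB; exact h i j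
  | zero => rfl
  | add B C _ _ hB hC => simp [Matrix.add_apply, hB, hC]
  | smul c B _ hB => simp [Matrix.smul_apply, hB]

lemma exists_vec_of_kraus {k r : ℕ} {A : Fin r → Matrix (Fin k) (Fin n) ℂ}
    (hK : IsKraus A) {G : SimpleGraph (Fin n)} (hle : confGraph A ≤ graphOS G) :
    ∃ x : Fin n → Fin k → ℂ, (∀ p, x p ≠ 0) ∧
      ∀ p q, p ≠ q → (∑ s, (starRingEnd ℂ) (x p s) * x q s) ≠ 0 → G.Adj p q := by
  have hch : ∀ p : Fin n, ∃ i, ((A i)ᴴ * A i) p p ≠ 0 := by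
    intro p
    by_contra hc
    push_neg at hc
    have := kraus_diag hK p
    rw [Finset.sum_eq_zero (fun i _ => hc i)] at this
    exact zero_ne_one this
  choose f hf using hch
  refine ⟨fun p => fun s => A (f p) s p, ?_, ?_⟩
  · intro p hp
    apply hf p
    rw [conj_mul_sum]
    apply Finset.sum_eq_zero
    intro s _
    rw [show A (f p) s p = 0 from congrFun hp s]
    simp
  · intro p q hpq hsum
    by_contra hnadj
    apply hsum
    rw [← conj_mul_sum]
    have hmem : (A (f p))ᴴ * A (f q) ∈ graphOS G :=
      hle (Submodule.subset_span ⟨f p, f q, rfl⟩)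
    exact mem_graphOS_iff.mp hmem p q hpq hnadj

lemma exists_vec_of_kraus_eq {k r : ℕ} {A : Fin r → Matrix (Fin k) (Fin n) ℂ}
    (hK : IsKraus A) {G : SimpleGraph (Fin n)} (heq : confGraph A = graphOS G) :
    ∃ x : Fin n → Fin k → ℂ, (∀ p, x p ≠ 0) ∧
      ∀ p q, p ≠ q → (G.Adj p q ↔ (∑ s, (starRingEnd ℂ) (x p s) * x q s) ≠ 0) := by
  classical
  set Mm : Fin n × Fin n → Matrix (Fin r) (Fin r) ℂ :=
    fun pq => Matrix.of fun i j => ((A i)ᴴ * A j) pq.1 pq.2 with hMm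
  set t : Finset (Fin n × Fin n) :=
    Finset.univ.filter (fun pq => pq.1 = pq.2 ∨ G.Adj pq.1 pq.2) with ht
  have hMne : ∀ pq ∈ t, Mm pq ≠ 0 := by
    rintro ⟨p, q⟩ hpq h0
    have hpq2 : p = q ∨ G.Adj p q := by simpa [ht] using hpq
    rcases hpq2 with rfl | hadj
    · have h1 := kraus_diag hK p
      rw [Finset.sum_eq_zero] at h1
      · exact zero_ne_one h1
      · intro i _
        have := congrFun (congrFun h0 i) i
        simpa [hMm] using this
    · have hmem : Matrix.single p q (1:ℂ) ∈ confGraph A := by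
        rw [heq]
        exact Submodule.subset_span ⟨p, q, Or.inr hadj, rfl⟩
      have hz : Matrix.single p q (1:ℂ) p q = 0 := by
        apply entry_zero_of_forall (fun i j => ?_) hmem
        have := congrFun (congrFun h0 i) j
        simpa [hMm] using this
      simp [Matrix.single] at hz
  obtain ⟨c, hc⟩ := exists_forall_quad_ne t Mm hMne
  set x : Fin n → Fin k → ℂ := fun p s => ∑ i, c i * A i s p with hx
  have key : ∀ p q : Fin n, (∑ s, (starRingEnd ℂ) (x p s) * x q s) = quad (Mm (p, q)) c := by
    intro p q
    simp only [quad, hMm, Matrix.of_apply, conj_mul_sum, hx, map_sum, _root_.map_mul,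
      Finset.mul_sum, Finset.sum_mul]
    conv_lhs => rw [Finset.sum_comm]; enter [2, j]; rw [Finset.sum_comm]
    conv_lhs => rw [Finset.sum_comm]
    apply Finset.sum_congr rfl
    intro i _
    apply Finset.sum_congr rfl
    intro j _
    apply Finset.sum_congr rfl
    intro s _
    ring
  have hxne : ∀ p, x p ≠ 0 := by
    intro p hp
    apply hc (p, p) (by simp [ht])
    rw [← key p p]
    apply Finset.sum_eq_zero
    intro s _
    rw [show x p s = 0 from congrFun hp s]
    simp
  refine ⟨x, hxne, ?_⟩
  intro p q hpq
  constructor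
  · intro hadj
    rw [key]
    exact hc (p, q) (by simp [ht, hadj])
  · intro hsum
    by_contra hnadj
    apply hsum
    rw [key]
    apply Finset.sum_eq_zero
    intro i _
    apply Finset.sum_eq_zero
    intro j _
    have : ((A i)ᴴ * A j) p q = 0 := by
      have hmem : (A i)ᴴ * A j ∈ graphOS G := heq ▸ Submodule.subset_span ⟨i, j, rfl⟩
      exact mem_graphOS_iff.mp hmem p q hpq hnadj
    simp [hMm, this]


end GPAux

/-- for a graph `G` on `{1, …, n}`, the operator-system parameters of
`S_G` coincide with the graph parameters: `α(S_G) = α(G)`, `β(S_G) = β(G)`,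
`γ(S_G) = γ(G)`. -/


theorem graph_params (n : ℕ) (G : SimpleGraph (Fin n)) :
    alphaOS (graphOS G) = alphaG G ∧ betaOS (graphOS G) = betaG G ∧
    gammaOS (graphOS G) = gammaG G := by
  classical
  refine ⟨?_, ?_, ?_⟩
  · -- alpha
    rw [alphaOS, alphaG]
    congr 1
    ext m
    constructor
    · rintro ⟨x, hx, htr⟩
      have key : ∀ p q, p ≠ q → ∀ a b, x p a ≠ 0 → x q b ≠ 0 →
          ¬(a = b ∨ G.Adj a b) := by
        intro p q hpq a b ha hb hab
        have hBmem : Matrix.single a b (1:ℂ) ∈ graphOS G :=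
          Submodule.subset_span ⟨a, b, hab, rfl⟩
        have h0 := htr p q hpq _ hBmem
        rw [GPAux.trace_std] at h0
        have hb' : (starRingEnd ℂ) (x q b) ≠ 0 := by
          intro hz
          apply hb
          have := congrArg (starRingEnd ℂ) hz
          simpa using this
        exact mul_ne_zero ha hb' h0
      have hchoice : ∀ p, ∃ a, x p a ≠ 0 := by
        intro p
        obtain ⟨a, ha⟩ := Function.ne_iff.mp (hx p)
        exact ⟨a, by simpa using ha⟩
      choose a ha using hchoice
      have hinj : Function.Injective a := by
        intro p q h
        by_contra hne
        exact key p q hne (a p) (a q) (ha p) (ha q) (Or.inl h)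
      refine ⟨Finset.univ.image a, ?_, ?_⟩
      · rw [Finset.card_image_of_injective _ hinj, Finset.card_univ, Fintype.card_fin]
      · intro i hi j hj hij hadj
        obtain ⟨p, -, rfl⟩ := Finset.mem_image.mp hi
        obtain ⟨q, -, rfl⟩ := Finset.mem_image.mp hj
        have hpq : p ≠ q := fun h => hij (by rw [h])
        exact key p q hpq (a p) (a q) (ha p) (ha q) (Or.inr hadj)
    · rintro ⟨s, hcard, hind⟩
      set e : Fin m → Fin n := fun p => ((s.orderIsoOfFin hcard) p : Fin n) with he
      have hemem : ∀ p, e p ∈ s := fun p => ((s.orderIsoOfFin hcard) p).2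
      have heinj : Function.Injective e :=
        Subtype.coe_injective.comp (s.orderIsoOfFin hcard).injective
      refine ⟨fun p => fun i => if i = e p then 1 else 0, ?_, ?_⟩
      · intro p
        apply Function.ne_iff.mpr
        exact ⟨e p, by simp⟩
      · intro p q hpq B hB
        have hB0 : B (e p) (e q) = 0 := by
          apply GPAux.mem_graphOS_iff.mp hB
          · exact fun h => hpq (heinj h)
          · exact hind _ (hemem p) _ (hemem q) (fun h => hpq (heinj h))
        rw [GPAux.trace_formula]
        rw [Finset.sum_eq_single (e p)]
        · rw [Finset.sum_eq_single (e q)]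
          · simp [hB0]
          · intro j _ hj
            simp [Pi.star_apply, hj]
          · simp
        · intro i _ hi
          apply Finset.sum_eq_zero
          intro j _
          simp [hi]
        · simp
  · -- beta
    rw [betaOS, betaG]
    congr 1
    ext k
    constructor
    · rintro ⟨r, A, hK, hle⟩
      obtain ⟨x, hx1, hx2⟩ := GPAux.exists_vec_of_kraus hK hle
      refine ⟨x, hx1, fun i j hij h => hx2 i j hij ?_⟩
      simpa [Complex.star_def] using h
    · rintro ⟨x, hx, himp⟩
      refine ⟨n, GPAux.kOp x, GPAux.isKraus_kOp hx, GPAux.confGraph_kOp_le ?_⟩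
      intro p q hpq hs
      apply himp p q hpq
      simpa [Complex.star_def] using hs
  · -- gamma
    rw [gammaOS, gammaG]
    congr 1
    ext k
    constructor
    · rintro ⟨r, A, hK, heq⟩
      obtain ⟨x, hx1, hx2⟩ := GPAux.exists_vec_of_kraus_eq hK heq
      refine ⟨x, hx1, fun i j hij => ?_⟩
      rw [hx2 i j hij]
      constructor
      · intro h hz
        apply h
        simpa [Complex.star_def] using hz
      · intro h hz
        apply h
        simpa [Complex.star_def] using hz
    · rintro ⟨x, hx, hiff⟩
      refine ⟨n, GPAux.kOp x, GPAux.isKraus_kOp hx, le_antisymm (GPAux.confGraph_kOp_le ?_)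
        (GPAux.graphOS_le_confGraph hx ?_)⟩
      · intro p q hpq hs
        apply (hiff p q hpq).mpr
        simpa [Complex.star_def] using hs
      · intro p q hpq hadj
        have := (hiff p q hpq).mp hadj
        intro hz
        apply this
        simpa [Complex.star_def] using hz
end

section
/- Let G be a simple graph on vertex set {1,…,n}. Then cc(S_G) = cc(G); in particular, the infimum defining cc(S_G) is finite and attained. -/
open Matrix
open scoped ComplexOrder

/-- A non-cancelling tuple of Kraus operators: each of them of the form `A · D` with
`A` entrywise nonnegative (real entries) and `D` an invertible diagonal matrix. -/
noncomputable def IsNonCancelling {ι : Type*} [Fintype ι] [DecidableEq ι] {k r : ℕ}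
    (A : Fin r → Matrix (Fin k) ι ℂ) : Prop :=
  ∀ i, ∃ (B : Matrix (Fin k) ι ℝ) (d : ι → ℂ),
    (∀ a b, 0 ≤ B a b) ∧ (∀ j, d j ≠ 0) ∧
    A i = (B.map ((↑) : ℝ → ℂ)) * Matrix.diagonal d

/-- `cc(S) ∈ ℕ ∪ {∞}`: the infimum of the `k` for which some non-cancelling quantum channel
`Φ : M_ι → M_k` has `S_Φ = S`. -/
noncomputable def ccOS {ι : Type*} [Fintype ι] [DecidableEq ι]
    (S : Submodule ℂ (Matrix ι ι ℂ)) : ℕ∞ :=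
  sInf {c : ℕ∞ | ∃ k : ℕ, c = k ∧ ∃ r : ℕ, ∃ A : Fin r → Matrix (Fin k) ι ℂ,
    IsKraus A ∧ IsNonCancelling A ∧ confGraph A = S}

/-- Graph parameter `cc(G)`: the least `k` for which `G` is the non-orthogonality graph
of a tuple of nonzero entrywise-nonnegative vectors in `ℝ^k`. -/
noncomputable def ccG {n : ℕ} (G : SimpleGraph (Fin n)) : ℕ :=
  sInf {k | ∃ x : Fin n → Fin k → ℝ, (∀ i, x i ≠ 0) ∧ (∀ i r, 0 ≤ x i r) ∧
    ∀ i j, i ≠ j → (G.Adj i j ↔ ∑ r, x i r * x j r ≠ 0)}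

lemma span_entry_zero {n : Type*} [Fintype n] (S : Set (Matrix n n ℂ)) (M : Matrix n n ℂ)
    (hM : M ∈ Submodule.span ℂ S) (i j : n) (h : ∀ N ∈ S, N i j = 0) : M i j = 0 := by
  induction hM using Submodule.span_induction with
  | mem N hN => exact h N hN
  | zero => rfl
  | add a b _ _ ha hb => simp [Matrix.add_apply, ha, hb]
  | smul c a _ ha => simp [Matrix.smul_apply, ha]

lemma graphOS_apply_eq_zero {n : ℕ} (G : SimpleGraph (Fin n)) {M : Matrix (Fin n) (Fin n) ℂ}
    (hM : M ∈ graphOS G) {i j : Fin n} (hij : i ≠ j) (hadj : ¬ G.Adj i j) : M i j = 0 := by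
  refine span_entry_zero _ _ hM i j ?_
  rintro N ⟨a, b, hab, rfl⟩
  rw [Matrix.single]
  show (if a = i ∧ b = j then (1:ℂ) else 0) = 0
  rw [if_neg]
  rintro ⟨rfl, rfl⟩
  rcases hab with rfl | h
  · exact hij rfl
  · exact hadj h

lemma sum_nonneg_eq_zero_iff {α : Type*} [Fintype α] {f : α → ℝ} (h : ∀ a, 0 ≤ f a) :
    ∑ a, f a = 0 ↔ ∀ a, f a = 0 := by
  rw [Finset.sum_eq_zero_iff_of_nonneg (fun a _ => h a)]; simp

lemma sum_sq_pos {k : ℕ} {v : Fin k → ℝ} (hv : v ≠ 0) :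
    0 < ∑ r, v r * v r := by
  rcases Function.ne_iff.mp hv with ⟨r, hr⟩
  exact Finset.sum_pos' (fun i _ => mul_self_nonneg _)
    ⟨r, Finset.mem_univ r, mul_self_pos.mpr hr⟩

lemma std_smul {n : Type*} [Fintype n] [DecidableEq n] (i j : n) (z : ℂ) :
    Matrix.single i j z = z • Matrix.single i j 1 := by
  rw [Matrix.smul_single]; simp

lemma exists_vectors {n : ℕ} (G : SimpleGraph (Fin n)) :
    ∃ x : Fin n → Fin (n*n) → ℝ, (∀ i, x i ≠ 0) ∧ (∀ i r, 0 ≤ x i r) ∧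
      ∀ i j, i ≠ j → (G.Adj i j ↔ ∑ r, x i r * x j r ≠ 0) := by
  classical
  set f : Fin n → Fin n → Fin n → ℝ := fun i a b =>
    if (a = i ∧ b = i) ∨ (G.Adj a b ∧ (a = i ∨ b = i)) then 1 else 0 with hf
  have hfnn : ∀ i a b, 0 ≤ f i a b := by
    intro i a b; rw [hf]; dsimp only; split <;> norm_num
  set x : Fin n → Fin (n*n) → ℝ :=
    fun i p => f i (finProdFinEquiv.symm p).1 (finProdFinEquiv.symm p).2 with hx
  have hxnn : ∀ i p, 0 ≤ x i p := fun i p => hfnn i _ _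
  refine ⟨x, ?_, hxnn, ?_⟩
  · intro i h
    have h1 := congrFun h (finProdFinEquiv (i, i))
    rw [hx] at h1
    simp only [Equiv.symm_apply_apply] at h1
    rw [hf] at h1
    simp at h1
  · intro u v hne
    constructor
    · intro hadj h
      have h1 := (sum_nonneg_eq_zero_iff (fun p => mul_nonneg (hxnn u p) (hxnn v p))).mp h
        (finProdFinEquiv (u, v))
      rw [hx] at h1
      simp only [Equiv.symm_apply_apply] at h1
      rw [hf] at h1
      simp [hadj, hadj.ne] at h1
    · intro h
      by_contra hnadj
      apply h
      refine Finset.sum_eq_zero fun p _ => ?_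
      rw [hx]
      dsimp only
      obtain ⟨a, b⟩ := finProdFinEquiv.symm p
      rw [hf]
      dsimp only
      by_cases h1 : (a = u ∧ b = u) ∨ (G.Adj a b ∧ (a = u ∨ b = u))
      · rw [if_pos h1, one_mul, if_neg]
        intro h2
        rcases h1 with ⟨ha1, hb1⟩ | ⟨hab, hx1⟩
        · rcases h2 with ⟨ha2, hb2⟩ | ⟨hab, hx2⟩
          · exact hne (ha1.symm.trans ha2)
          · rw [ha1, hb1] at hab; exact G.loopless.irrefl u hab
        · rcases h2 with ⟨ha2, hb2⟩ | ⟨-, hx2⟩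
          · rw [ha2, hb2] at hab; exact G.loopless.irrefl v hab
          · rcases hx1 with h1 | h1 <;> rcases hx2 with h2 | h2
            · exact hne (h1.symm.trans h2)
            · rw [h1, h2] at hab; exact hnadj hab
            · rw [h2, h1] at hab; exact hnadj (G.adj_symm hab)
            · exact hne (h1.symm.trans h2)
      · rw [if_neg h1, zero_mul]

lemma vectors_to_channel {n k : ℕ} (G : SimpleGraph (Fin n))
    (x : Fin n → Fin k → ℝ) (h0 : ∀ i, x i ≠ 0) (hnn : ∀ i r, 0 ≤ x i r)
    (hadj : ∀ i j, i ≠ j → (G.Adj i j ↔ ∑ r, x i r * x j r ≠ 0)) :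
    ∃ r : ℕ, ∃ A : Fin r → Matrix (Fin k) (Fin n) ℂ,
      IsKraus A ∧ IsNonCancelling A ∧ confGraph A = graphOS G := by
  classical
  set ν : Fin n → ℝ := fun i => Real.sqrt (∑ r, x i r * x i r) with hν
  have hνpos : ∀ i, 0 < ν i := fun i => Real.sqrt_pos.mpr (sum_sq_pos (h0 i))
  set y : Fin n → Fin k → ℝ := fun i a => x i a / ν i with hy
  have hynn : ∀ i a, 0 ≤ y i a := fun i a => div_nonneg (hnn i a) (hνpos i).le
  set c : Fin n → Fin n → ℝ := fun i j => ∑ a, y i a * y j a with hc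
  have hceq : ∀ i j, c i j = (∑ a, x i a * x j a) / (ν i * ν j) := by
    intro i j
    rw [hc, Finset.sum_div]
    exact Finset.sum_congr rfl fun a _ => (div_mul_div_comm _ _ _ _)
  have hcne : ∀ i j, c i j ≠ 0 ↔ ∑ a, x i a * x j a ≠ 0 := by
    intro i j
    rw [hceq, div_ne_zero_iff, and_iff_left (mul_ne_zero (hνpos i).ne' (hνpos j).ne')]
  have hcself : ∀ i, c i i = 1 := by
    intro i
    rw [hceq, Real.mul_self_sqrt (Finset.sum_nonneg fun a _ => mul_self_nonneg _)]
    exact div_self (sum_sq_pos (h0 i)).ne'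
  set A : Fin n → Matrix (Fin k) (Fin n) ℂ :=
    fun i => Matrix.of fun a b => if b = i then ((y i a : ℝ) : ℂ) else 0 with hA
  have key : ∀ i j, (A i)ᴴ * A j = Matrix.single i j ((c i j : ℝ) : ℂ) := by
    intro i j
    ext b e
    rw [Matrix.mul_apply, Matrix.single]
    simp only [Matrix.conjTranspose_apply, hA, Matrix.of_apply]
    by_cases hb : b = i
    · by_cases he : e = j
      · rw [if_pos ⟨hb.symm, he.symm⟩]
        subst hb; subst he
        simp only [if_pos rfl]
        push_cast [hc]
        exact Finset.sum_congr rfl fun a _ => by rw [Complex.star_def, Complex.conj_ofReal]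
      · rw [if_neg (by tauto)]
        exact Finset.sum_eq_zero fun a _ => by simp [he]
    · rw [if_neg (by tauto)]
      exact Finset.sum_eq_zero fun a _ => by simp [hb]
  have hKraus : IsKraus A := by
    show (∑ i, (A i)ᴴ * A i) = 1
    have h1 : ∀ i : Fin n, (A i)ᴴ * A i = Matrix.single i i (1:ℂ) := by
      intro i; rw [key, hcself]; norm_num
    rw [Finset.sum_congr rfl fun i _ => h1 i]
    ext b e
    rw [Matrix.sum_apply]
    by_cases h : b = e
    · subst h; simp [Matrix.single, Matrix.one_apply]
    · rw [Matrix.one_apply_ne h]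
      refine Finset.sum_eq_zero fun i _ => ?_
      rw [Matrix.single]
      show (if i = b ∧ i = e then (1:ℂ) else 0) = 0
      rw [if_neg]; rintro ⟨rfl, rfl⟩; exact h rfl
  have hNC : IsNonCancelling A := by
    intro i
    refine ⟨Matrix.of fun a b => if b = i then y i a else 0, fun _ => 1, ?_, fun _ => one_ne_zero, ?_⟩
    · intro a b; dsimp only [Matrix.of_apply]; split
      · exact hynn i a
      · exact le_refl 0
    · rw [Matrix.diagonal_one, Matrix.mul_one]
      ext a b
      simp [hA, Matrix.map_apply, apply_ite (Complex.ofReal)]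
  refine ⟨n, A, hKraus, hNC, ?_⟩
  apply le_antisymm
  · rw [confGraph, Submodule.span_le]
    rintro M ⟨i, j, rfl⟩
    rw [SetLike.mem_coe, key]
    by_cases hc0 : c i j = 0
    · rw [hc0, Complex.ofReal_zero, Matrix.single_zero]
      exact (graphOS G).zero_mem
    · have hij : i = j ∨ G.Adj i j := by
        by_cases h : i = j
        · exact Or.inl h
        · exact Or.inr ((hadj i j h).mpr ((hcne i j).mp hc0))
      rw [std_smul]
      exact Submodule.smul_mem _ _ (Submodule.subset_span ⟨i, j, hij, rfl⟩)
  · rw [graphOS, Submodule.span_le]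
    rintro M ⟨i, j, hij, rfl⟩
    have hc0 : ((c i j : ℝ) : ℂ) ≠ 0 := by
      rcases hij with rfl | h
      · rw [hcself]; exact one_ne_zero
      · exact_mod_cast (hcne i j).mpr ((hadj i j h.ne).mp h)
    have heq : Matrix.single i j (1:ℂ)
        = ((c i j : ℝ) : ℂ)⁻¹ • Matrix.single i j ((c i j : ℝ) : ℂ) := by
      rw [std_smul i j ((c i j : ℝ):ℂ), smul_smul, inv_mul_cancel₀ hc0, one_smul]
    rw [SetLike.mem_coe, heq, ← key]
    exact Submodule.smul_mem _ _ (Submodule.subset_span ⟨i, j, rfl⟩)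

lemma channel_to_vectors {n k : ℕ} (G : SimpleGraph (Fin n)) {m : ℕ}
    (A : Fin m → Matrix (Fin k) (Fin n) ℂ)
    (hNC : IsNonCancelling A) (hCG : confGraph A = graphOS G) :
    ∃ x : Fin n → Fin k → ℝ, (∀ i, x i ≠ 0) ∧ (∀ i r, 0 ≤ x i r) ∧
      ∀ i j, i ≠ j → (G.Adj i j ↔ ∑ r, x i r * x j r ≠ 0) := by
  classical
  choose B d hB hd hA using hNC
  set x : Fin n → Fin k → ℝ := fun j a => ∑ i, B i a j with hx
  have hxnn : ∀ j a, 0 ≤ x j a := fun j a => Finset.sum_nonneg fun i _ => hB i a j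
  have entry : ∀ i i' j j', ((A i)ᴴ * A i') j j' =
      (starRingEnd ℂ) (d i j) * d i' j' * ((∑ a, B i a j * B i' a j' : ℝ) : ℂ) := by
    intro i i' j j'
    rw [Matrix.mul_apply]
    push_cast
    rw [Finset.mul_sum]
    refine Finset.sum_congr rfl fun a _ => ?_
    rw [Matrix.conjTranspose_apply, hA i, hA i', Matrix.mul_diagonal, Matrix.mul_diagonal,
      Matrix.map_apply, Matrix.map_apply, star_mul', Complex.star_def, Complex.conj_ofReal]
    ring
  have entry_zero : ∀ i i' j j', (((A i)ᴴ * A i') j j' = 0) ↔ ∑ a, B i a j * B i' a j' = 0 := by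
    intro i i' j j'
    rw [entry, mul_eq_zero, mul_eq_zero, Complex.ofReal_eq_zero, map_eq_zero]
    simp [hd i j, hd i' j']
  have hmem : ∀ i i', (A i)ᴴ * A i' ∈ graphOS G := by
    intro i i'
    rw [← hCG]
    exact Submodule.subset_span ⟨i, i', rfl⟩
  -- x j ≠ 0
  have hxne : ∀ j, x j ≠ 0 := by
    intro j h
    have hBz : ∀ i a, B i a j = 0 := by
      intro i a
      exact (sum_nonneg_eq_zero_iff (fun i => hB i a j)).mp (congrFun h a) i
    have hE : Matrix.single j j (1:ℂ) ∈ confGraph A := by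
      rw [hCG]; exact Submodule.subset_span ⟨j, j, Or.inl rfl, rfl⟩
    have hzz := span_entry_zero _ _ hE j j ?_
    · rw [Matrix.single] at hzz
      simp at hzz
    · rintro N ⟨i, i', rfl⟩
      rw [entry_zero]
      exact Finset.sum_eq_zero fun a _ => by rw [hBz i a]; ring
  -- nonadjacent (and distinct) implies orthogonal
  have hz : ∀ j j', j ≠ j' → ¬ G.Adj j j' → ∑ a, x j a * x j' a = 0 := by
    intro j j' hne hnadj
    have hterm : ∀ i i' a, B i a j * B i' a j' = 0 := by
      intro i i' a
      have hg := (entry_zero i i' j j').mp (graphOS_apply_eq_zero G (hmem i i') hne hnadj)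
      exact (sum_nonneg_eq_zero_iff (fun a => mul_nonneg (hB i a j) (hB i' a j'))).mp hg a
    refine Finset.sum_eq_zero fun a _ => ?_
    rw [hx]
    dsimp only
    rw [Finset.sum_mul_sum]
    exact Finset.sum_eq_zero fun i _ => Finset.sum_eq_zero fun i' _ => hterm i i' a
  -- adjacent implies non-orthogonal
  have hp : ∀ j j', G.Adj j j' → ∑ a, x j a * x j' a ≠ 0 := by
    intro j j' hadj h
    have h1 : ∀ a, x j a * x j' a = 0 :=
      (sum_nonneg_eq_zero_iff (fun a => mul_nonneg (hxnn j a) (hxnn j' a))).mp h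
    have hterm : ∀ a i i', B i a j * B i' a j' = 0 := by
      intro a i i'
      have h2 : ∑ i, ∑ i', B i a j * B i' a j' = 0 := by
        rw [← Finset.sum_mul_sum]
        exact h1 a
      have h3 := (sum_nonneg_eq_zero_iff (fun i =>
        Finset.sum_nonneg fun i' _ => mul_nonneg (hB i a j) (hB i' a j'))).mp h2 i
      exact (sum_nonneg_eq_zero_iff (fun i' => mul_nonneg (hB i a j) (hB i' a j'))).mp h3 i'
    have hE : Matrix.single j j' (1:ℂ) ∈ confGraph A := by
      rw [hCG]; exact Submodule.subset_span ⟨j, j', Or.inr hadj, rfl⟩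
    have hzz := span_entry_zero _ _ hE j j' ?_
    · rw [Matrix.single] at hzz
      simp at hzz
    · rintro N ⟨i, i', rfl⟩
      rw [entry_zero]
      exact Finset.sum_eq_zero fun a _ => hterm a i i'
  exact ⟨x, hxne, hxnn, fun i j hne =>
    ⟨fun h => hp i j h, fun h => by_contra fun hn => h (hz i j hne hn)⟩⟩

/-- for a graph `G` on `{1, …, n}`, `cc(S_G) = cc(G)`; in particular the
infimum defining `cc(S_G)` is finite and attained (i.e. `cc(G)` is the least `k` for
which a non-cancelling channel `M_n → M_k` has confusability graph `S_G`). -/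
theorem cc_graphOS (n : ℕ) (G : SimpleGraph (Fin n)) :
    ccOS (graphOS G) = (ccG G : ℕ∞) ∧
    IsLeast {k : ℕ | ∃ r : ℕ, ∃ A : Fin r → Matrix (Fin k) (Fin n) ℂ,
      IsKraus A ∧ IsNonCancelling A ∧ confGraph A = graphOS G} (ccG G) := by
  classical
  have hVne : {k | ∃ x : Fin n → Fin k → ℝ, (∀ i, x i ≠ 0) ∧ (∀ i r, 0 ≤ x i r) ∧
      ∀ i j, i ≠ j → (G.Adj i j ↔ ∑ r, x i r * x j r ≠ 0)}.Nonempty :=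
    ⟨n * n, exists_vectors G⟩
  have hmemV : ccG G ∈ {k | ∃ x : Fin n → Fin k → ℝ, (∀ i, x i ≠ 0) ∧ (∀ i r, 0 ≤ x i r) ∧
      ∀ i j, i ≠ j → (G.Adj i j ↔ ∑ r, x i r * x j r ≠ 0)} := by
    rw [ccG]
    exact Nat.sInf_mem hVne
  have hmemT : ccG G ∈ {k : ℕ | ∃ r : ℕ, ∃ A : Fin r → Matrix (Fin k) (Fin n) ℂ,
      IsKraus A ∧ IsNonCancelling A ∧ confGraph A = graphOS G} := by
    obtain ⟨xx, h0, hnn, hiff⟩ := hmemV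
    exact vectors_to_channel G xx h0 hnn hiff
  have hlb : ∀ k ∈ {k : ℕ | ∃ r : ℕ, ∃ A : Fin r → Matrix (Fin k) (Fin n) ℂ,
      IsKraus A ∧ IsNonCancelling A ∧ confGraph A = graphOS G}, ccG G ≤ k := by
    rintro k ⟨r, A, hK, hNC, hCG⟩
    obtain ⟨xx, h0, hnn, hiff⟩ := channel_to_vectors G A hNC hCG
    rw [ccG]
    exact Nat.sInf_le ⟨xx, h0, hnn, hiff⟩
  refine ⟨?_, hmemT, hlb⟩
  rw [ccOS]
  apply IsLeast.csInf_eq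
  refine ⟨⟨ccG G, rfl, hmemT⟩, ?_⟩
  rintro c ⟨k, rfl, hk⟩
  exact_mod_cast hlb k hk
end

section
/- Let S ⊆ M_n be an operator system and, for r ≥ 1, let S^{⊗r} ⊆ M_{n^r} denote the r-fold Kronecker tensor power of S (the span of Kronecker products A_1 ⊗ ⋯ ⊗ A_r with each A_i ∈ S). Then for every r ≥ 1: α(S)^r ≤ α(S^{⊗r}) ≤ β(S)^r. Consequently the zero-error capacity Θ(S) = lim_{r→∞} α(S^{⊗r})^{1/r} satisfies α(S) ≤ Θ(S) ≤ β(S). -/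
open Matrix
open scoped ComplexOrder

/-- The `r`-fold Kronecker tensor power `S^{⊗r} ⊆ M_{n^r}`: the span of the Kronecker
products `A₁ ⊗ ⋯ ⊗ Aᵣ` with each `Aᵢ ∈ S`. -/
noncomputable def tpowOS {ι : Type*} [Fintype ι] [DecidableEq ι]
    (S : Submodule ℂ (Matrix ι ι ℂ)) (r : ℕ) :
    Submodule ℂ (Matrix (Fin r → ι) (Fin r → ι) ℂ) :=
  Submodule.span ℂ {M | ∃ A : Fin r → Matrix ι ι ℂ,
    (∀ s, A s ∈ S) ∧ M = Matrix.of fun v w => ∏ s, A s (v s) (w s)}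

/-! ### Auxiliary lemmas -/

lemma vec_eq_zero {ι : Type*} [Fintype ι] (v : ι → ℂ) (h : ∑ a, star (v a) * v a = 0) :
    v = 0 := by
  funext a
  have h1 : ∀ a ∈ Finset.univ, (0:ℂ) ≤ star (v a) * v a := fun a _ => star_mul_self_nonneg _
  have h2 := (Finset.sum_eq_zero_iff_of_nonneg h1).mp h a (Finset.mem_univ a)
  have h3 : ((Complex.normSq (v a) : ℝ) : ℂ) = 0 := by
    rw [← Complex.mul_conj]; simpa [Complex.star_def, mul_comm] using h2
  have := Complex.normSq_eq_zero.mp (by exact_mod_cast h3)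
  simpa using this

lemma card_le_of_orth {ι : Type*} [Fintype ι] {m : ℕ} (y : Fin m → ι → ℂ)
    (hy : ∀ p, y p ≠ 0)
    (horth : ∀ p q, p ≠ q → (∑ a, star (y q a) * y p a) = 0) :
    m ≤ Fintype.card ι := by
  have hli : LinearIndependent ℂ y := by
    rw [Fintype.linearIndependent_iff]
    intro g hg q
    have key : ∑ p, g p * (∑ a, star (y q a) * y p a) = 0 := by
      have h0 : ∑ a, star (y q a) * ((∑ p, g p • y p) a) = 0 := by
        rw [hg]; simp
      rw [← h0]
      simp only [Finset.sum_apply, Pi.smul_apply, smul_eq_mul, Finset.mul_sum]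
      rw [Finset.sum_comm]
      exact Finset.sum_congr rfl fun p _ => Finset.sum_congr rfl fun a _ => by ring
    rw [Finset.sum_eq_single q] at key
    · rcases mul_eq_zero.mp key with h | h
      · exact h
      · exact absurd (vec_eq_zero _ h) (hy q)
    · intro p _ hpq
      rw [horth p q hpq, mul_zero]
    · simp
  have := LinearIndependent.fintype_card_le_finrank hli
  simpa [Module.finrank_pi] using this

lemma trace_herm_vecMulVec {ι : Type*} [Fintype ι] (M : Matrix ι ι ℂ) (u v : ι → ℂ) :
    Matrix.trace (Mᴴ * Matrix.vecMulVec u (star v)) =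
      ∑ a, ∑ b, star (M b a) * (u b * star (v a)) := by
  simp only [Matrix.trace, Matrix.diag, Matrix.mul_apply, Matrix.conjTranspose_apply,
    Matrix.vecMulVec_apply, Pi.star_apply]

lemma trace_herm_vecMulVec_dot {ι : Type*} [Fintype ι] (M : Matrix ι ι ℂ) (u v : ι → ℂ) :
    Matrix.trace (Mᴴ * Matrix.vecMulVec u (star v)) = star v ⬝ᵥ (Mᴴ *ᵥ u) := by
  rw [trace_herm_vecMulVec]
  simp only [dotProduct, Matrix.mulVec, Pi.star_apply, Matrix.conjTranspose_apply,
    Finset.mul_sum]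
  exact Finset.sum_congr rfl fun a _ => Finset.sum_congr rfl fun b _ => by ring

lemma alpha_le_of_channel {ι : Type*} [Fintype ι] [DecidableEq ι] {k r : ℕ}
    (A : Fin r → Matrix (Fin k) ι ℂ) (hA : IsKraus A)
    (T : Submodule ℂ (Matrix ι ι ℂ)) (hT : confGraph A ≤ T) :
    alphaOS T ≤ k := by
  unfold alphaOS
  apply csSup_le
  · exact ⟨0, Fin.elim0, fun p => p.elim0, fun p q => q.elim0⟩
  rintro m ⟨x, hx, hind⟩
  have hex : ∀ p : Fin m, ∃ i, A i *ᵥ x p ≠ 0 := by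
    intro p
    by_contra hcon
    push_neg at hcon
    apply hx p
    have h1 : (1 : Matrix ι ι ℂ) *ᵥ x p = 0 := by
      rw [← hA]
      funext a
      simp only [Matrix.mulVec, dotProduct, Matrix.sum_apply, Finset.sum_mul,
        Pi.zero_apply]
      rw [Finset.sum_comm]
      refine Finset.sum_eq_zero fun i _ => ?_
      have h2 : ((A i)ᴴ * A i) *ᵥ x p = 0 := by
        rw [← Matrix.mulVec_mulVec, hcon i, Matrix.mulVec_zero]
      have := congrFun h2 a
      simpa [Matrix.mulVec, dotProduct] using this
    simpa using h1
  choose I hI using hex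
  set y : Fin m → Fin k → ℂ := fun p => A (I p) *ᵥ x p with hy
  have horth : ∀ p q, p ≠ q → (∑ a, star (y q a) * y p a) = 0 := by
    intro p q hpq
    have hmem : ((A (I p))ᴴ * A (I q)) ∈ T :=
      hT (Submodule.subset_span ⟨I p, I q, rfl⟩)
    have e1 : (∑ a, star (y q a) * y p a) = star (y q) ⬝ᵥ y p := rfl
    rw [e1, hy]
    rw [Matrix.star_mulVec, Matrix.dotProduct_mulVec, Matrix.vecMul_vecMul,
        ← Matrix.dotProduct_mulVec]
    have h0 := hind p q hpq _ hmem
    rw [trace_herm_vecMulVec_dot, Matrix.conjTranspose_mul,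
        Matrix.conjTranspose_conjTranspose] at h0
    exact h0
  have hk := card_le_of_orth y hI horth
  simpa using hk

lemma mem_alphaSet_le_card {ι : Type*} [Fintype ι] [DecidableEq ι]
    {T : Submodule ℂ (Matrix ι ι ℂ)} (hone : (1 : Matrix ι ι ℂ) ∈ T) {m : ℕ}
    (x : Fin m → ι → ℂ) (hx : ∀ p, x p ≠ 0)
    (hind : ∀ p q, p ≠ q → ∀ B ∈ T,
      Matrix.trace (Bᴴ * Matrix.vecMulVec (x p) (star (x q))) = 0) :
    m ≤ Fintype.card ι := by
  apply card_le_of_orth x hx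
  intro p q hpq
  have h0 := hind p q hpq 1 hone
  rw [trace_herm_vecMulVec] at h0
  rw [← h0]
  refine Finset.sum_congr rfl fun a _ => ?_
  rw [Finset.sum_eq_single a]
  · rw [Matrix.one_apply_eq]; simp [mul_comm]
  · intro b _ hba; rw [Matrix.one_apply_ne hba]; simp
  · simp

lemma sum_pi_prod {κ : Type*} [Fintype κ] [DecidableEq κ] {r : ℕ} (f : Fin r → κ → ℂ) :
    ∑ g : Fin r → κ, ∏ s, f s (g s) = ∏ s, ∑ c, f s c := by
  rw [Finset.prod_univ_sum, Fintype.piFinset_univ]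

lemma one_pi_apply {ι : Type*} [Fintype ι] [DecidableEq ι] {r : ℕ} (w w' : Fin r → ι) :
    (1 : Matrix (Fin r → ι) (Fin r → ι) ℂ) w w' = ∏ s, (1 : Matrix ι ι ℂ) (w s) (w' s) := by
  by_cases h : w = w'
  · subst h; simp [Matrix.one_apply]
  · obtain ⟨s₀, hs⟩ := Function.ne_iff.mp h
    rw [Matrix.one_apply_ne h]
    symm
    apply Finset.prod_eq_zero (Finset.mem_univ s₀)
    exact Matrix.one_apply_ne hs

lemma one_mem_tpow {ι : Type*} [Fintype ι] [DecidableEq ι]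
    {S : Submodule ℂ (Matrix ι ι ℂ)} (h1 : (1 : Matrix ι ι ℂ) ∈ S) (r : ℕ) :
    (1 : Matrix (Fin r → ι) (Fin r → ι) ℂ) ∈ tpowOS S r := by
  apply Submodule.subset_span
  refine ⟨fun _ => 1, fun _ => h1, ?_⟩
  ext w w'
  simp only [Matrix.of_apply]
  exact one_pi_apply w w'

lemma trace_tensor {ι : Type*} [Fintype ι] [DecidableEq ι] {r : ℕ}
    (A : Fin r → Matrix ι ι ℂ) (x y : Fin r → ι → ℂ) :
    Matrix.trace ((Matrix.of fun v w : Fin r → ι => ∏ s, A s (v s) (w s))ᴴ *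
      Matrix.vecMulVec (fun v => ∏ s, x s (v s)) (star fun v => ∏ s, y s (v s))) =
    ∏ s, Matrix.trace ((A s)ᴴ * Matrix.vecMulVec (x s) (star (y s))) := by
  rw [trace_herm_vecMulVec]
  have hR : ∀ s, Matrix.trace ((A s)ᴴ * Matrix.vecMulVec (x s) (star (y s))) =
      ∑ c : ι × ι, star (A s c.2 c.1) * (x s c.2 * star (y s c.1)) := by
    intro s; rw [trace_herm_vecMulVec, Fintype.sum_prod_type]
  rw [Finset.prod_congr rfl fun s _ => hR s, ← sum_pi_prod,
    ← Equiv.sum_comp (Equiv.arrowProdEquivProdArrow (Fin r) (fun _ => ι) (fun _ => ι)).symm, Fintype.sum_prod_type]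
  refine Finset.sum_congr rfl fun a _ => Finset.sum_congr rfl fun b _ => ?_
  simp only [Equiv.arrowProdEquivProdArrow, Equiv.coe_fn_symm_mk, Matrix.of_apply,
    Pi.star_apply, star_prod, ← Finset.prod_mul_distrib]

noncomputable def krausPow {n k r' : ℕ} (A : Fin r' → Matrix (Fin k) (Fin n) ℂ) (r : ℕ) :
    Fin (r' ^ r) → Matrix (Fin (k ^ r)) (Fin r → Fin n) ℂ :=
  fun f => Matrix.of fun v w =>
    ∏ s, A (finFunctionFinEquiv.symm f s) (finFunctionFinEquiv.symm v s) (w s)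

lemma krausPow_herm_mul {n k r' : ℕ} (A : Fin r' → Matrix (Fin k) (Fin n) ℂ) (r : ℕ)
    (f g : Fin (r' ^ r)) :
    (krausPow A r f)ᴴ * krausPow A r g = Matrix.of fun w w' =>
      ∏ s, ((A (finFunctionFinEquiv.symm f s))ᴴ * A (finFunctionFinEquiv.symm g s))
        (w s) (w' s) := by
  ext w w'
  simp only [krausPow, Matrix.mul_apply, Matrix.conjTranspose_apply, Matrix.of_apply, star_prod]
  rw [← Equiv.sum_comp (finFunctionFinEquiv (m := k) (n := r))]
  simp only [Equiv.symm_apply_apply, ← Finset.prod_mul_distrib]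
  rw [sum_pi_prod (f := fun s c => star (A (finFunctionFinEquiv.symm f s) c (w s)) *
    A (finFunctionFinEquiv.symm g s) c (w' s))]

lemma krausPow_isKraus {n k r' : ℕ} {A : Fin r' → Matrix (Fin k) (Fin n) ℂ}
    (hA : IsKraus A) (r : ℕ) : IsKraus (krausPow A r) := by
  unfold IsKraus at hA ⊢
  rw [← Equiv.sum_comp (finFunctionFinEquiv (m := r') (n := r))]
  ext w w'
  rw [Matrix.sum_apply]
  simp only [krausPow_herm_mul, Matrix.of_apply, Equiv.symm_apply_apply]
  rw [sum_pi_prod (f := fun s i => ((A i)ᴴ * A i) (w s) (w' s))]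
  have h1 : ∀ s : Fin r, ∑ i, ((A i)ᴴ * A i) (w s) (w' s)
      = (1 : Matrix (Fin n) (Fin n) ℂ) (w s) (w' s) := by
    intro s
    rw [← Matrix.sum_apply, hA]
  rw [Finset.prod_congr rfl fun s _ => h1 s, ← one_pi_apply]

lemma krausPow_confGraph {n k r' : ℕ} {A : Fin r' → Matrix (Fin k) (Fin n) ℂ}
    {S : Submodule ℂ (Matrix (Fin n) (Fin n) ℂ)} (hle : confGraph A ≤ S) (r : ℕ) :
    confGraph (krausPow A r) ≤ tpowOS S r := by
  rw [confGraph, Submodule.span_le]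
  rintro _ ⟨f, g, rfl⟩
  rw [krausPow_herm_mul]
  apply Submodule.subset_span
  exact ⟨fun s => (A (finFunctionFinEquiv.symm f s))ᴴ * A (finFunctionFinEquiv.symm g s),
    fun s => hle (Submodule.subset_span ⟨_, _, rfl⟩), rfl⟩

open Filter in
/-- `α(S)^r ≤ α(S^{⊗r}) ≤ β(S)^r` for all `r ≥ 1`; consequently the
zero-error capacity `Θ(S) = lim_r α(S^{⊗r})^{1/r}` satisfies `α(S) ≤ Θ(S) ≤ β(S)`. -/
theorem capacity_bounds (n : ℕ) (S : Submodule ℂ (Matrix (Fin n) (Fin n) ℂ))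
    (hS : IsOperatorSystem S) :
    (∀ r : ℕ, 1 ≤ r →
      alphaOS S ^ r ≤ alphaOS (tpowOS S r) ∧ alphaOS (tpowOS S r) ≤ betaOS S ^ r) ∧
    ∀ Θ : ℝ, Tendsto (fun r : ℕ => (alphaOS (tpowOS S r) : ℝ) ^ ((1 : ℝ) / r))
        atTop (nhds Θ) →
      (alphaOS S : ℝ) ≤ Θ ∧ Θ ≤ (betaOS S : ℝ) := by
  -- the β-set is nonempty (identity channel)
  have hβne : {k | ∃ r : ℕ, ∃ A : Fin r → Matrix (Fin k) (Fin n) ℂ,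
      IsKraus A ∧ confGraph A ≤ S}.Nonempty := by
    refine ⟨n, 1, fun _ => (1 : Matrix (Fin n) (Fin n) ℂ), ?_, ?_⟩
    · unfold IsKraus; simp
    · rw [confGraph, Submodule.span_le]
      rintro _ ⟨i, j, rfl⟩
      simpa using hS.1
  obtain ⟨r', A, hAK, hAle⟩ := Nat.sInf_mem hβne
  -- upper bound
  have hupper : ∀ r : ℕ, alphaOS (tpowOS S r) ≤ betaOS S ^ r := by
    intro r
    have := alpha_le_of_channel (krausPow A r) (krausPow_isKraus hAK r)
      (tpowOS S r) (krausPow_confGraph hAle r)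
    exact this
  -- lower bound
  have hlower : ∀ r : ℕ, alphaOS S ^ r ≤ alphaOS (tpowOS S r) := by
    intro r
    -- get an optimal independent family for S
    have hne : {m | ∃ x : Fin m → (Fin n) → ℂ, (∀ p, x p ≠ 0) ∧
        ∀ p q, p ≠ q → ∀ B ∈ S,
          Matrix.trace (Bᴴ * Matrix.vecMulVec (x p) (star (x q))) = 0}.Nonempty :=
      ⟨0, Fin.elim0, fun p => p.elim0, fun p q => q.elim0⟩
    have hbdd : BddAbove {m | ∃ x : Fin m → (Fin n) → ℂ, (∀ p, x p ≠ 0) ∧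
        ∀ p q, p ≠ q → ∀ B ∈ S,
          Matrix.trace (Bᴴ * Matrix.vecMulVec (x p) (star (x q))) = 0} := by
      refine ⟨n, ?_⟩
      rintro m ⟨x, hx, hind⟩
      simpa using mem_alphaSet_le_card hS.1 x hx hind
    obtain ⟨x, hx, hind⟩ := Nat.sSup_mem hne hbdd
    set m := alphaOS S with hm
    -- tensor family
    set e := (finFunctionFinEquiv (m := m) (n := r))
    set X : Fin (m ^ r) → (Fin r → Fin n) → ℂ :=
      fun f v => ∏ s, x (e.symm f s) (v s) with hX
    have hXmem : (m ^ r) ∈ {M | ∃ y : Fin (M) → (Fin r → Fin n) → ℂ, (∀ p, y p ≠ 0) ∧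
        ∀ p q, p ≠ q → ∀ B ∈ tpowOS S r,
          Matrix.trace (Bᴴ * Matrix.vecMulVec (y p) (star (y q))) = 0} := by
      refine ⟨X, ?_, ?_⟩
      · intro f
        choose c hc using fun p => Function.ne_iff.mp (hx p)
        have : X f (fun s => c (e.symm f s)) ≠ 0 := by
          apply Finset.prod_ne_zero_iff.mpr
          intro s _
          simpa using hc (e.symm f s)
        intro hzero
        exact this (by rw [hzero]; rfl)
      · intro p q hpq B hB
        induction hB using Submodule.span_induction with
        | mem B hBmem =>
          obtain ⟨C, hC, rfl⟩ := hBmem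
          have heq := trace_tensor C (fun s => x (e.symm p s)) (fun s => x (e.symm q s))
          rw [hX]
          rw [heq]
          obtain ⟨s₀, hs₀⟩ : ∃ s₀, e.symm p s₀ ≠ e.symm q s₀ := by
            by_contra hcon
            push_neg at hcon
            exact hpq (e.symm.injective (funext hcon))
          apply Finset.prod_eq_zero (Finset.mem_univ s₀)
          exact hind _ _ hs₀ _ (hC s₀)
        | zero => simp
        | add B C _ _ hB hC =>
          rw [Matrix.conjTranspose_add, Matrix.add_mul, Matrix.trace_add, hB, hC, add_zero]
        | smul c B _ hB =>
          rw [Matrix.conjTranspose_smul, Matrix.smul_mul, Matrix.trace_smul, hB, smul_zero]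
    -- conclude
    have hbdd2 : BddAbove {M | ∃ y : Fin (M) → (Fin r → Fin n) → ℂ, (∀ p, y p ≠ 0) ∧
        ∀ p q, p ≠ q → ∀ B ∈ tpowOS S r,
          Matrix.trace (Bᴴ * Matrix.vecMulVec (y p) (star (y q))) = 0} := by
      refine ⟨n ^ r, ?_⟩
      rintro M ⟨y, hy, hindy⟩
      have := mem_alphaSet_le_card (one_mem_tpow hS.1 r) y hy hindy
      simpa [Fintype.card_fun] using this
    exact le_csSup hbdd2 hXmem
  refine ⟨fun r _ => ⟨hlower r, hupper r⟩, ?_⟩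
  intro Θ hΘ
  have hαle : ∀ r : ℕ, 1 ≤ r →
      (alphaOS S : ℝ) ≤ (alphaOS (tpowOS S r) : ℝ) ^ ((1 : ℝ) / r) := by
    intro r hr
    have hr0 : (r : ℝ) ≠ 0 := Nat.cast_ne_zero.mpr (by omega)
    have h1 : ((alphaOS S : ℝ) ^ (r : ℕ)) ^ ((1 : ℝ) / r)
        ≤ (alphaOS (tpowOS S r) : ℝ) ^ ((1 : ℝ) / r) := by
      apply Real.rpow_le_rpow (by positivity)
      · exact_mod_cast hlower r
      · positivity
    have h2 : ((alphaOS S : ℝ) ^ (r : ℕ)) ^ ((1 : ℝ) / r) = (alphaOS S : ℝ) := by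
      rw [← Real.rpow_natCast (alphaOS S : ℝ) r, ← Real.rpow_mul (by positivity)]
      rw [mul_one_div, div_self hr0, Real.rpow_one]
    rwa [h2] at h1
  have hβge : ∀ r : ℕ, 1 ≤ r →
      (alphaOS (tpowOS S r) : ℝ) ^ ((1 : ℝ) / r) ≤ (betaOS S : ℝ) := by
    intro r hr
    have hr0 : (r : ℝ) ≠ 0 := Nat.cast_ne_zero.mpr (by omega)
    have h1 : (alphaOS (tpowOS S r) : ℝ) ^ ((1 : ℝ) / r)
        ≤ ((betaOS S : ℝ) ^ (r : ℕ)) ^ ((1 : ℝ) / r) := by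
      apply Real.rpow_le_rpow (by positivity)
      · exact_mod_cast hupper r
      · positivity
    have h2 : ((betaOS S : ℝ) ^ (r : ℕ)) ^ ((1 : ℝ) / r) = (betaOS S : ℝ) := by
      rw [← Real.rpow_natCast (betaOS S : ℝ) r, ← Real.rpow_mul (by positivity)]
      rw [mul_one_div, div_self hr0, Real.rpow_one]
    rwa [h2] at h1
  constructor
  · exact ge_of_tendsto hΘ (Filter.eventually_atTop.mpr ⟨1, fun r hr => hαle r hr⟩)
  · exact le_of_tendsto hΘ (Filter.eventually_atTop.mpr ⟨1, fun r hr => hβge r hr⟩)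
end

section
/- For every integer k ≥ 2: β(S_k ⊗ S_{k²}) ≤ k² < k³ ≤ ϑ(S_k ⊗ S_{k²}), where S_k ⊗ S_{k²} ⊆ M_{k³} is the Kronecker tensor product of the operator systems S_k ⊆ M_k and S_{k²} ⊆ M_{k²}. -/
open Matrix
open scoped ComplexOrder

/-- The Lovász theta number `ϑ(S) = max{‖I + K‖ : K ∈ S^⊥, I + K ≥ 0}`, where `‖·‖`
is the operator (spectral) norm. -/
noncomputable def thetaOS {ι : Type*} [Fintype ι] [DecidableEq ι]
    (S : Submodule ℂ (Matrix ι ι ℂ)) : ℝ :=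
  sSup {t | ∃ K : Matrix ι ι ℂ, (∀ B ∈ S, Matrix.trace (Bᴴ * K) = 0) ∧
    (1 + K).PosSemidef ∧ t = ‖Matrix.toEuclideanCLM (𝕜 := ℂ) (n := ι) (1 + K)‖}

/-- The tensor product of operator systems: the span of the Kronecker products
`A ⊗ B` with `A ∈ S₁`, `B ∈ S₂`. -/
noncomputable def tensorOS {ι₁ ι₂ : Type*} [Fintype ι₁] [DecidableEq ι₁]
    [Fintype ι₂] [DecidableEq ι₂] (S₁ : Submodule ℂ (Matrix ι₁ ι₁ ℂ))
    (S₂ : Submodule ℂ (Matrix ι₂ ι₂ ℂ)) :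
    Submodule ℂ (Matrix (ι₁ × ι₂) (ι₁ × ι₂) ℂ) :=
  Submodule.span ℂ {C | ∃ A ∈ S₁, ∃ B ∈ S₂, C = Matrix.kroneckerMap (· * ·) A B}

/-- The operator system `S_k ⊆ M_k` of all matrices whose diagonal entries are all equal. -/
noncomputable def constDiagOS (k : ℕ) : Submodule ℂ (Matrix (Fin k) (Fin k) ℂ) where
  carrier := {A | ∀ i j, A i i = A j j}
  add_mem' := by intro a b ha hb i j; simp only [Matrix.add_apply, ha i j, hb i j]
  zero_mem' := by intro i j; simp
  smul_mem' := by intro c a ha i j; simp only [Matrix.smul_apply, ha i j]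


section Aux

noncomputable def chiC (k : ℕ) [NeZero k] : ZMod k → ℂ := fun x => ZMod.stdAddChar x

variable {k : ℕ} [NeZero k]

lemma chiC_add (x y : ZMod k) : chiC k (x + y) = chiC k x * chiC k y := by
  simpa [chiC] using AddChar.map_add_eq_mul _ x y

lemma chiC_zero : chiC k 0 = 1 := by simp [chiC]

lemma chiC_abs (x : ZMod k) : ‖chiC k x‖ = 1 := by
  simp [chiC, ZMod.stdAddChar_apply, Circle.norm_coe]

lemma chiC_conj (x : ZMod k) : (starRingEnd ℂ) (chiC k x) = chiC k (-x) := by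
  have h : chiC k x * chiC k (-x) = 1 := by
    rw [← chiC_add]; simp [chiC]
  have h2 : (starRingEnd ℂ) (chiC k x) * chiC k x = 1 := by
    rw [mul_comm, Complex.mul_conj]
    norm_cast
    rw [Complex.normSq_eq_norm_sq, chiC_abs]; norm_num
  calc (starRingEnd ℂ) (chiC k x) = (starRingEnd ℂ) (chiC k x) * (chiC k x * chiC k (-x)) := by
        rw [h, mul_one]
    _ = chiC k (-x) := by rw [← mul_assoc, h2, one_mul]

lemma chiC_sum (m : ZMod k) :
    ∑ s : ZMod k, chiC k (m * s) = if m = 0 then (k : ℂ) else 0 := by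
  classical
  have h0 : ∀ s, chiC k (m * s) = (ZMod.stdAddChar.mulShift m) s := by
    intro s; simp [chiC, AddChar.mulShift_apply]
  simp_rw [h0]
  rw [AddChar.sum_eq_ite]
  have hcard : (Fintype.card (ZMod k)) = k := ZMod.card k
  by_cases hm : m = 0
  · subst hm
    have : (ZMod.stdAddChar (N := k)).mulShift 0 = 0 := by
      ext a; simp [AddChar.mulShift_apply]
    simp [this, hcard]
  · have hne : (ZMod.stdAddChar (N := k)).mulShift m ≠ 0 := by
      have := ZMod.isPrimitive_stdAddChar k hm
      simp at this; exact this
    simp [hne, hm]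

/-- Kraus building blocks. -/
noncomputable def Bmat (k : ℕ) [NeZero k] (s : ZMod k) :
    Matrix (ZMod k × ZMod k) (ZMod k × (ZMod k × ZMod k)) ℂ :=
  Matrix.of fun ab icd =>
    if ab.1 = icd.2.1 + s ∧ ab.2 = icd.2.2 + s + icd.1
    then chiC k ((s + icd.1) * ab.1) else 0

/-- `(Bmat s)ᴴ * Bmat t`. -/
noncomputable def Gmat (k : ℕ) [NeZero k] (s t : ZMod k) :
    Matrix (ZMod k × (ZMod k × ZMod k)) (ZMod k × (ZMod k × ZMod k)) ℂ :=
  Matrix.of fun x y =>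
    if y.2.1 = x.2.1 + s - t ∧ y.2.2 = x.2.2 + s + x.1 - t - y.1
    then chiC k ((t + y.1 - s - x.1) * (x.2.1 + s)) else 0

lemma Bmat_conj_mul (s t : ZMod k) : (Bmat k s)ᴴ * Bmat k t = Gmat k s t := by
  ext ⟨i, c, d⟩ ⟨j, c', d'⟩
  rw [Matrix.mul_apply]
  have hterm : ∀ ab : ZMod k × ZMod k,
      (Bmat k s)ᴴ (i, (c, d)) ab * Bmat k t ab (j, (c', d'))
      = if ab = (c + s, d + s + i)
        then (if c' = c + s - t ∧ d' = d + s + i - t - j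
          then chiC k ((t + j - s - i) * (c + s)) else 0)
        else 0 := by
    rintro ⟨a, b⟩
    rw [Matrix.conjTranspose_apply]
    by_cases h1 : a = c + s ∧ b = d + s + i
    · obtain ⟨ha, hb⟩ := h1
      subst ha; subst hb
      rw [if_pos rfl]
      have hB1 : Bmat k s (c + s, d + s + i) (i, (c, d)) = chiC k ((s + i) * (c + s)) := by
        simp [Bmat]
      rw [hB1]
      have hcond : ((c + s = c' + t) ∧ (d + s + i = d' + t + j))
          ↔ (c' = c + s - t ∧ d' = d + s + i - t - j) := by
        constructor
        · rintro ⟨h2, h3⟩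
          constructor
          · rw [h2]; ring
          · rw [h3]; ring
        · rintro ⟨h2, h3⟩
          constructor
          · rw [h2]; ring
          · rw [h3]; ring
      by_cases h2 : c' = c + s - t ∧ d' = d + s + i - t - j
      · have hB2 : Bmat k t (c + s, d + s + i) (j, (c', d')) = chiC k ((t + j) * (c + s)) := by
          simp only [Bmat, Matrix.of_apply]
          rw [if_pos (hcond.mpr h2)]
        rw [hB2, if_pos h2, Complex.star_def, chiC_conj, ← chiC_add]
        congr 1
        ring
      · have hB2 : Bmat k t (c + s, d + s + i) (j, (c', d')) = 0 := by
          simp only [Bmat, Matrix.of_apply]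
          rw [if_neg (fun hc => h2 (hcond.mp hc))]
        rw [hB2, if_neg h2, mul_zero]
    · have hB1 : Bmat k s (a, b) (i, (c, d)) = 0 := by
        simp only [Bmat, Matrix.of_apply]
        rw [if_neg h1]
      have hne : ¬((a, b) = ((c + s : ZMod k), (d + s + i : ZMod k))) := by
        intro hc
        apply h1
        exact ⟨congrArg Prod.fst hc, congrArg Prod.snd hc⟩
      rw [hB1, star_zero, zero_mul, if_neg hne]
  simp_rw [hterm]
  rw [Finset.sum_ite_eq' Finset.univ]
  simp [Gmat]

lemma Gmat_sum : ∑ s : ZMod k, Gmat k s s = (k : ℂ) • 1 := by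
  ext ⟨i, c, d⟩ ⟨j, c', d'⟩
  rw [Matrix.sum_apply]
  have hterm : ∀ s : ZMod k, Gmat k s s (i, (c, d)) (j, (c', d'))
      = if c' = c ∧ d' = d + i - j
        then chiC k ((j - i) * c) * chiC k ((j - i) * s) else 0 := by
    intro s
    simp only [Gmat, Matrix.of_apply]
    rw [show c + s - s = c from by ring, show d + s + i - s - j = d + i - j from by ring,
      show s + j - s - i = j - i from by ring]
    by_cases h : c' = c ∧ d' = d + i - j
    · rw [if_pos h, if_pos h, ← chiC_add]
      congr 1
      ring
    · rw [if_neg h, if_neg h]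
  simp_rw [hterm]
  by_cases h : c' = c ∧ d' = d + i - j
  · simp_rw [if_pos h]
    rw [← Finset.mul_sum, chiC_sum]
    obtain ⟨hc, hd⟩ := h
    by_cases hij : i = j
    · have hji : j - i = 0 := sub_eq_zero.mpr hij.symm
      have hdd : d' = d := by rw [hd, hij]; ring
      rw [if_pos hji, hji, zero_mul, chiC_zero, one_mul]
      have heq : ((i, (c, d)) : ZMod k × (ZMod k × ZMod k)) = (j, (c', d')) := by
        rw [hij, hc, hdd]
      rw [Matrix.smul_apply, Matrix.one_apply, if_pos heq, smul_eq_mul, mul_one]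
    · have hji : j - i ≠ 0 := sub_ne_zero.mpr (fun hji => hij hji.symm)
      rw [if_neg hji, mul_zero]
      have hne : ((i, (c, d)) : ZMod k × (ZMod k × ZMod k)) ≠ (j, (c', d')) := by
        intro heq
        exact hij (congrArg Prod.fst heq)
      rw [Matrix.smul_apply, Matrix.one_apply, if_neg hne, smul_eq_mul, mul_zero]
  · simp_rw [if_neg h, Finset.sum_const_zero]
    have hne : ((i, (c, d)) : ZMod k × (ZMod k × ZMod k)) ≠ (j, (c', d')) := by
      intro heq
      apply h
      have h1 : i = j := congrArg Prod.fst heq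
      have h2 : c = c' := congrArg (fun p => p.2.1) heq
      have h3 : d = d' := congrArg (fun p => p.2.2) heq
      constructor
      · rw [h2]
      · rw [← h3, h1]; ring
    rw [Matrix.smul_apply, Matrix.one_apply, if_neg hne, smul_eq_mul, mul_zero]


section OpNormBounds
variable {ι : Type*} [Fintype ι] [DecidableEq ι]

lemma euclid_coord_le_norm (v : EuclideanSpace ℂ ι) (a : ι) : ‖v a‖ ≤ ‖v‖ := by
  rw [EuclideanSpace.norm_eq]
  have h1 : ‖v a‖ = Real.sqrt (‖v a‖^2) := (Real.sqrt_sq (norm_nonneg _)).symm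
  rw [h1]
  exact Real.sqrt_le_sqrt (Finset.single_le_sum (f := fun i => ‖v i‖^2)
    (fun i _ => sq_nonneg _) (Finset.mem_univ a))

lemma euclid_norm_le_sum (v : EuclideanSpace ℂ ι) : ‖v‖ ≤ ∑ a, ‖v a‖ := by
  have hv : v = ∑ a, EuclideanSpace.single a (v a) := by
    ext b
    rw [WithLp.ofLp_sum, Finset.sum_apply]
    simp [EuclideanSpace.single_apply]
  calc ‖v‖ = ‖∑ a, EuclideanSpace.single a (v a)‖ := by rw [← hv]
    _ ≤ ∑ a, ‖EuclideanSpace.single a (v a)‖ := norm_sum_le _ _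
    _ = ∑ a, ‖v a‖ := by simp

lemma toEuclideanCLM_coord (M : Matrix ι ι ℂ) (v : EuclideanSpace ℂ ι) (a : ι) :
    (Matrix.toEuclideanCLM (𝕜 := ℂ) M v) a = ∑ b, M a b * v b := by
  show (Matrix.toLin' M (fun i => v i)) a = _
  rw [Matrix.toLin'_apply]
  simp [Matrix.mulVec, dotProduct]

lemma opNorm_le_entry_sum (M : Matrix ι ι ℂ) :
    ‖Matrix.toEuclideanCLM (𝕜 := ℂ) M‖ ≤ ∑ a, ∑ b, ‖M a b‖ := by
  apply ContinuousLinearMap.opNorm_le_bound _ (by positivity)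
  intro v
  calc ‖Matrix.toEuclideanCLM (𝕜 := ℂ) M v‖
      ≤ ∑ a, ‖(Matrix.toEuclideanCLM (𝕜 := ℂ) M v) a‖ := euclid_norm_le_sum _
    _ ≤ ∑ a, ∑ b, ‖M a b‖ * ‖v‖ := by
        apply Finset.sum_le_sum
        intro a _
        rw [toEuclideanCLM_coord]
        calc ‖∑ b, M a b * v b‖ ≤ ∑ b, ‖M a b * v b‖ := norm_sum_le _ _
          _ ≤ ∑ b, ‖M a b‖ * ‖v‖ := by
              apply Finset.sum_le_sum
              intro b _
              rw [norm_mul]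
              exact mul_le_mul_of_nonneg_left (euclid_coord_le_norm v b) (norm_nonneg _)
    _ = (∑ a, ∑ b, ‖M a b‖) * ‖v‖ := by
        rw [Finset.sum_mul]
        congr 1
        ext a
        rw [Finset.sum_mul]

lemma norm_of_nonneg' {z : ℂ} (hz : 0 ≤ z) : ‖z‖ = z.re := by
  obtain ⟨hre, him⟩ := Complex.nonneg_iff.mp hz
  rw [Complex.norm_def, Complex.normSq_apply, ← him]
  simpa using Real.sqrt_mul_self hre

lemma psd_diag_nonneg {M : Matrix ι ι ℂ} (hM : M.PosSemidef) (a : ι) : 0 ≤ M a a := by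
  have := hM.dotProduct_mulVec_nonneg (Pi.single a 1)
  simpa [dotProduct, Matrix.mulVec, Pi.single_apply] using this

lemma psd_entry_le_retrace {M : Matrix ι ι ℂ} (hM : M.PosSemidef) (a b : ι) :
    ‖M a b‖ ≤ (Matrix.trace M).re := by
  have hdiag : ∀ y, 0 ≤ (M y y).re := fun y => (Complex.nonneg_iff.mp (psd_diag_nonneg hM y)).1
  have htr : (Matrix.trace M).re = ∑ y, (M y y).re := by
    simp [Matrix.trace, Matrix.diag]
  by_cases hab : a = b
  · subst hab
    rw [norm_of_nonneg' (psd_diag_nonneg hM a), htr]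
    exact Finset.single_le_sum (fun y _ => hdiag y) (Finset.mem_univ a)
  · by_cases h0 : M a b = 0
    · rw [h0, norm_zero, htr]
      exact Finset.sum_nonneg (fun y _ => hdiag y)
    · have habs : ((‖M a b‖ : ℝ) : ℂ) ≠ 0 := by
        exact_mod_cast Complex.ofReal_ne_zero.mpr (norm_ne_zero_iff.mpr h0)
      set c : ℂ := -(M a b) / ‖M a b‖ with hc
      have key : (starRingEnd ℂ) (M a b) * (M a b) = ((‖M a b‖ : ℝ) : ℂ)^2 := by
        rw [mul_comm, Complex.mul_conj]
        norm_cast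
        rw [Complex.normSq_eq_norm_sq]
      have hnorm : (starRingEnd ℂ) c * M a b = -((‖M a b‖ : ℝ) : ℂ) := by
        rw [hc, map_div₀, map_neg, Complex.conj_ofReal, div_mul_eq_mul_div, neg_mul, key]
        rw [div_eq_iff habs]
        ring
      have hcc : (starRingEnd ℂ) c * c = 1 := by
        rw [hc, map_div₀, map_neg, Complex.conj_ofReal]
        rw [div_mul_div_comm, neg_mul_neg, key, ← sq]
        exact div_self (pow_ne_zero _ habs)
      have hherm : M b a = (starRingEnd ℂ) (M a b) := by
        have h2 : (starRingEnd ℂ) (M b a) = M a b := by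
          have := congrFun (congrFun hM.1 a) b
          simpa [Matrix.conjTranspose_apply] using this
        calc M b a = (starRingEnd ℂ) ((starRingEnd ℂ) (M b a)) := (Complex.conj_conj _).symm
          _ = (starRingEnd ℂ) (M a b) := by rw [h2]
      set v : ι → ℂ := Pi.single a c + Pi.single b 1 with hv
      have hsingle : ∀ (x : ℂ) (i : ι),
          star (Pi.single i x : ι → ℂ) = Pi.single i (star x) := by
        intro x i
        ext y
        by_cases h : y = i <;> simp [Pi.single_apply, h]
      have hstar : star v = Pi.single a ((starRingEnd ℂ) c) + Pi.single b (1:ℂ) := by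
        rw [hv, star_add, hsingle, hsingle]
        simp
      have hQval : dotProduct (star v) (M *ᵥ v) =
          ((starRingEnd ℂ) c * c) * M a a + (starRingEnd ℂ) c * M a b
            + M b a * c + M b b := by
        rw [hstar, hv]
        simp only [Matrix.mulVec_add, Matrix.mulVec_single, add_dotProduct,
          dotProduct_add, single_dotProduct, Pi.add_apply, Pi.smul_apply, Matrix.col_apply,
          MulOpposite.smul_eq_mul_unop, MulOpposite.unop_op]
        ring
      have hQ := hM.dotProduct_mulVec_nonneg v
      rw [hQval, hcc, hnorm, hherm] at hQ
      have hcMba : (starRingEnd ℂ) (M a b) * c = -((‖M a b‖ : ℝ) : ℂ) := by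
        rw [hc, ← mul_div_assoc, mul_neg, key, neg_div, pow_two, mul_div_assoc,
          div_self habs, mul_one]
      rw [hcMba, one_mul] at hQ
      have hre := (Complex.nonneg_iff.mp hQ).1
      simp only [Complex.add_re, Complex.neg_re, Complex.ofReal_re] at hre
      have hsub : (M a a).re + (M b b).re ≤ ∑ y, (M y y).re := by
        have : ∑ y ∈ ({a, b} : Finset ι), (M y y).re = (M a a).re + (M b b).re :=
          Finset.sum_pair hab
        rw [← this]
        exact Finset.sum_le_sum_of_subset_of_nonneg (Finset.subset_univ _)
          (fun y _ _ => hdiag y)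
      rw [htr]
      have hnn := norm_nonneg (M a b)
      linarith

end OpNormBounds



lemma mem_constDiagOS {k : ℕ} {A : Matrix (Fin k) (Fin k) ℂ} :
    A ∈ constDiagOS k ↔ ∀ i j, A i i = A j j := Iff.rfl

lemma one_mem_constDiagOS (k : ℕ) : (1 : Matrix (Fin k) (Fin k) ℂ) ∈ constDiagOS k := by
  rw [mem_constDiagOS]
  intro i j
  simp [Matrix.one_apply]

lemma submatrix_sum {α l q m n : Type*} [Fintype α] [AddCommMonoid ℂ]
    (F : α → Matrix m n ℂ) (e1 : l → m) (e2 : q → n) :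
    (∑ a, F a).submatrix e1 e2 = ∑ a, (F a).submatrix e1 e2 := by
  ext x y
  simp [Matrix.sum_apply]

lemma mem_tensorOS_of_blocks {m n : ℕ} (N : Matrix ((Fin m) × (Fin n)) ((Fin m) × (Fin n)) ℂ)
    (C0 : Matrix (Fin n) (Fin n) ℂ) (hC0 : C0 ∈ constDiagOS n)
    (hdiag : ∀ a x y, N (a, x) (a, y) = C0 x y)
    (hoff : ∀ a b, a ≠ b → (Matrix.of fun x y => N (a, x) (b, y)) ∈ constDiagOS n) :
    N ∈ tensorOS (constDiagOS m) (constDiagOS n) := by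
  classical
  have hdecomp : N = Matrix.kroneckerMap (· * ·) (1 : Matrix (Fin m) (Fin m) ℂ) C0 +
      ∑ p : Fin m × Fin m, (if p.1 = p.2 then (0 : Matrix ((Fin m) × (Fin n)) ((Fin m) × (Fin n)) ℂ)
        else Matrix.kroneckerMap (· * ·) (Matrix.single p.1 p.2 (1:ℂ))
          (Matrix.of fun x y => N (p.1, x) (p.2, y))) := by
    ext ⟨a, x⟩ ⟨b, y⟩
    rw [Matrix.add_apply, Matrix.sum_apply]
    have hterm : ∀ p : Fin m × Fin m,
        (if p.1 = p.2 then (0 : Matrix ((Fin m) × (Fin n)) ((Fin m) × (Fin n)) ℂ)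
          else Matrix.kroneckerMap (· * ·) (Matrix.single p.1 p.2 (1:ℂ))
            (Matrix.of fun x' y' => N (p.1, x') (p.2, y'))) (a, x) (b, y)
        = if p = (a, b) then (if a = b then 0 else N (a, x) (b, y)) else 0 := by
      rintro ⟨p1, p2⟩
      by_cases h1 : p1 = a <;> by_cases h2 : p2 = b
      · subst h1; subst h2
        by_cases h3 : p1 = p2
        · rw [if_pos h3, if_pos rfl, if_pos h3]
          simp
        · rw [if_neg h3, if_pos rfl, if_neg h3]
          simp [Matrix.kroneckerMap_apply, Matrix.single]
      · have hne : ((p1, p2) : Fin m × Fin m) ≠ (a, b) := by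
          intro hc; exact h2 (congrArg Prod.snd hc)
        rw [if_neg hne]
        by_cases h3 : p1 = p2
        · rw [if_pos h3]; simp
        · rw [if_neg h3]
          simp [Matrix.kroneckerMap_apply, Matrix.single, h2]
      · have hne : ((p1, p2) : Fin m × Fin m) ≠ (a, b) := by
          intro hc; exact h1 (congrArg Prod.fst hc)
        rw [if_neg hne]
        by_cases h3 : p1 = p2
        · rw [if_pos h3]; simp
        · rw [if_neg h3]
          simp [Matrix.kroneckerMap_apply, Matrix.single, h1]
      · have hne : ((p1, p2) : Fin m × Fin m) ≠ (a, b) := by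
          intro hc; exact h1 (congrArg Prod.fst hc)
        rw [if_neg hne]
        by_cases h3 : p1 = p2
        · rw [if_pos h3]; simp
        · rw [if_neg h3]
          simp [Matrix.kroneckerMap_apply, Matrix.single, h1]
    simp_rw [hterm]
    rw [Finset.sum_ite_eq' Finset.univ]
    by_cases hab : a = b
    · subst hab
      simp [Matrix.kroneckerMap_apply, Matrix.one_apply, hdiag a x y]
    · simp [Matrix.kroneckerMap_apply, Matrix.one_apply, hab]
  rw [hdecomp]
  apply Submodule.add_mem
  · exact Submodule.subset_span ⟨1, one_mem_constDiagOS m, C0, hC0, rfl⟩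
  · apply Submodule.sum_mem
    rintro ⟨p1, p2⟩ _
    by_cases h : p1 = p2
    · rw [if_pos h]; exact Submodule.zero_mem _
    · rw [if_neg h]
      refine Submodule.subset_span ⟨Matrix.single p1 p2 1, ?_, _, hoff p1 p2 h, rfl⟩
      rw [mem_constDiagOS]
      intro i j
      have hz : ∀ i : Fin m, Matrix.single p1 p2 (1:ℂ) i i = 0 := by
        intro i
        rw [Matrix.single, Matrix.of_apply, if_neg]
        rintro ⟨rfl, rfl⟩
        exact h rfl
      rw [hz i, hz j]

/-- The diagonal block of `Gmat`. -/
noncomputable def Cmat (k : ℕ) [NeZero k] (s t : ZMod k) :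
    Matrix (ZMod k × ZMod k) (ZMod k × ZMod k) ℂ :=
  Matrix.of fun x y =>
    if y.1 = x.1 + s - t ∧ y.2 = x.2 + s - t then chiC k ((t - s) * (x.1 + s)) else 0

lemma Gmat_diag_block (s t i : ZMod k) (z w : ZMod k × ZMod k) :
    Gmat k s t (i, z) (i, w) = Cmat k s t z w := by
  simp only [Gmat, Cmat, Matrix.of_apply]
  rw [show z.2 + s + i - t - i = z.2 + s - t from by ring,
    show t + i - s - i = t - s from by ring]

lemma Cmat_diag (s t : ZMod k) (z : ZMod k × ZMod k) :
    Cmat k s t z z = if s = t then 1 else 0 := by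
  simp only [Cmat, Matrix.of_apply]
  by_cases hst : s = t
  · subst hst
    rw [if_pos (by constructor <;> ring), if_pos rfl]
    rw [show (s - s : ZMod k) = 0 from by ring, zero_mul, chiC_zero]
  · rw [if_neg, if_neg hst]
    rintro ⟨h1, -⟩
    apply hst
    have : z.1 + (s - t) = z.1 + 0 := by
      rw [add_zero]
      nth_rewrite 2 [h1]
      ring
    have h2 : s - t = 0 := add_left_cancel this
    rw [← sub_eq_zero]
    exact h2

lemma Gmat_offdiag (s t : ZMod k) (i j : ZMod k) (hij : i ≠ j) (z : ZMod k × ZMod k) :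
    Gmat k s t (i, z) (j, z) = 0 := by
  simp only [Gmat, Matrix.of_apply]
  rw [if_neg]
  rintro ⟨h1, h2⟩
  have hst : s - t = 0 := by
    have : z.1 + (s - t) = z.1 + 0 := by rw [add_zero]; nth_rewrite 2 [h1]; ring
    exact add_left_cancel this
  apply hij
  have : z.2 + (i - j) = z.2 + 0 := by
    rw [add_zero]
    nth_rewrite 2 [h2]
    have hST : s = t := by rw [← sub_eq_zero]; exact hst
    rw [hST]
    ring
  have h3 : i - j = 0 := add_left_cancel this
  rw [← sub_eq_zero]
  exact h3

theorem beta_le (k : ℕ) (hk : 2 ≤ k) :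
    betaOS (tensorOS (constDiagOS k) (constDiagOS (k ^ 2))) ≤ k ^ 2 := by
  classical
  haveI : NeZero k := ⟨by omega⟩
  have hf : Fintype.card (Fin k) = Fintype.card (ZMod k) := by simp [ZMod.card]
  have hg : Fintype.card (Fin (k ^ 2)) = Fintype.card (ZMod k × ZMod k) := by
    simp [ZMod.card]
    ring
  let f : Fin k ≃ ZMod k := Fintype.equivOfCardEq hf
  let g : Fin (k ^ 2) ≃ ZMod k × ZMod k := Fintype.equivOfCardEq hg
  let pm : (Fin k × Fin (k ^ 2)) → (ZMod k × (ZMod k × ZMod k)) := Prod.map ⇑f ⇑g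
  let A : Fin (k ^ 2) → Matrix (Fin (k ^ 2)) (Fin k × Fin (k ^ 2)) ℂ :=
    fun u => ((k:ℂ)⁻¹) • ((Bmat k (g u).1).submatrix ⇑g pm)
  have hknz : ((k:ℂ)) ≠ 0 := Nat.cast_ne_zero.mpr (by omega)
  have hstar : star ((k:ℂ)⁻¹) = (k:ℂ)⁻¹ := by simp
  have hAA : ∀ u v : Fin (k ^ 2), (A u)ᴴ * A v
      = (((k:ℂ)⁻¹) * ((k:ℂ)⁻¹)) • ((Gmat k (g u).1 (g v).1).submatrix pm pm) := by
    intro u v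
    show (((k:ℂ)⁻¹) • ((Bmat k (g u).1).submatrix ⇑g pm))ᴴ *
      (((k:ℂ)⁻¹) • ((Bmat k (g v).1).submatrix ⇑g pm)) = _
    rw [Matrix.conjTranspose_smul, Matrix.conjTranspose_submatrix, hstar,
      Matrix.smul_mul, Matrix.mul_smul, Matrix.submatrix_mul_equiv, Bmat_conj_mul, smul_smul]
  have h1sub : (1 : Matrix (ZMod k × (ZMod k × ZMod k)) (ZMod k × (ZMod k × ZMod k)) ℂ).submatrix
      pm pm = 1 := by
    have : pm = ⇑(f.prodCongr g) := rfl
    rw [this]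
    exact Matrix.submatrix_one_equiv _
  have hKraus : IsKraus A := by
    show ∑ u, (A u)ᴴ * A u = 1
    calc ∑ u, (A u)ᴴ * A u
        = ∑ u, (((k:ℂ)⁻¹) * ((k:ℂ)⁻¹)) •
            ((Gmat k (g u).1 (g u).1).submatrix pm pm) :=
          Finset.sum_congr rfl (fun u _ => hAA u u)
      _ = ∑ p : ZMod k × ZMod k, (((k:ℂ)⁻¹) * ((k:ℂ)⁻¹)) •
            ((Gmat k p.1 p.1).submatrix pm pm) :=
          Fintype.sum_equiv g _ _ (fun u => rfl)
      _ = ∑ s : ZMod k, ∑ _t : ZMod k, (((k:ℂ)⁻¹) * ((k:ℂ)⁻¹)) •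
            ((Gmat k s s).submatrix pm pm) := Fintype.sum_prod_type _
      _ = ∑ s : ZMod k, (k : ℂ) • ((((k:ℂ)⁻¹) * ((k:ℂ)⁻¹)) •
            ((Gmat k s s).submatrix pm pm)) := by
          refine Finset.sum_congr rfl (fun s _ => ?_)
          rw [Finset.sum_const, Finset.card_univ, ZMod.card, Nat.cast_smul_eq_nsmul]
      _ = (k : ℂ) • ((((k:ℂ)⁻¹) * ((k:ℂ)⁻¹)) • ((∑ s, Gmat k s s).submatrix pm pm)) := by
          rw [← Finset.smul_sum]
          congr 1
          rw [← Finset.smul_sum]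
          congr 1
          rw [submatrix_sum]
      _ = 1 := by
          rw [Gmat_sum, Matrix.submatrix_smul]
          simp only [Pi.smul_apply]
          rw [h1sub, smul_smul, smul_smul]
          rw [show (k:ℂ) * (((k:ℂ)⁻¹) * ((k:ℂ)⁻¹)) * (k:ℂ) = 1 by field_simp]
          exact one_smul _ _
  have hconf : confGraph A ≤ tensorOS (constDiagOS k) (constDiagOS (k ^ 2)) := by
    rw [confGraph, Submodule.span_le]
    rintro X ⟨u, v, rfl⟩
    rw [hAA]
    apply Submodule.smul_mem
    apply mem_tensorOS_of_blocks _ ((Cmat k (g u).1 (g v).1).submatrix ⇑g ⇑g)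
    · rw [mem_constDiagOS]
      intro x y
      rw [Matrix.submatrix_apply, Matrix.submatrix_apply, Cmat_diag, Cmat_diag]
    · intro a x y
      show Gmat k (g u).1 (g v).1 (f a, g x) (f a, g y) = Cmat k (g u).1 (g v).1 (g x) (g y)
      exact Gmat_diag_block _ _ _ _ _
    · intro a b hab
      rw [mem_constDiagOS]
      intro x y
      show Gmat k (g u).1 (g v).1 (f a, g x) (f b, g x)
        = Gmat k (g u).1 (g v).1 (f a, g y) (f b, g y)
      have hfab : (f a : ZMod k) ≠ f b := fun h => hab (f.injective h)
      rw [Gmat_offdiag _ _ _ _ hfab, Gmat_offdiag _ _ _ _ hfab]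
  apply Nat.sInf_le
  exact ⟨k ^ 2, A, hKraus, hconf⟩

lemma one_mem_tensorOS (k n : ℕ) :
    (1 : Matrix ((Fin k) × (Fin n)) ((Fin k) × (Fin n)) ℂ) ∈
      tensorOS (constDiagOS k) (constDiagOS n) := by
  apply Submodule.subset_span
  exact ⟨1, one_mem_constDiagOS k, 1, one_mem_constDiagOS n,
    (Matrix.one_kronecker_one (α := ℂ)).symm⟩

lemma trace_conj_mul_std {ι : Type*} [Fintype ι] [DecidableEq ι]
    (X : Matrix ι ι ℂ) (x₀ : ι) :
    Matrix.trace (Xᴴ * Matrix.single x₀ x₀ (1:ℂ)) = star (X x₀ x₀) := by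
  classical
  rw [Matrix.trace]
  have h : ∀ y, (Xᴴ * Matrix.single x₀ x₀ (1:ℂ)).diag y
      = if y = x₀ then star (X x₀ y) else 0 := by
    intro y
    rw [Matrix.diag_apply, Matrix.mul_apply]
    have h2 : ∀ z, Xᴴ y z * Matrix.single x₀ x₀ (1:ℂ) z y
        = if z = x₀ then (if y = x₀ then star (X x₀ y) else 0) else 0 := by
      intro z
      by_cases hz : z = x₀ <;> by_cases hy : y = x₀ <;>
        subst_eqs <;>
        simp_all [Matrix.single, Matrix.conjTranspose_apply, eq_comm]
    simp_rw [h2]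
    rw [Finset.sum_ite_eq' Finset.univ x₀]
    simp
  simp_rw [h]
  rw [Finset.sum_ite_eq' Finset.univ x₀]
  simp

lemma trace_constDiag {n : ℕ} {A : Matrix (Fin n) (Fin n) ℂ} (hA : A ∈ constDiagOS n)
    (i₀ : Fin n) : Matrix.trace A = (n : ℂ) * A i₀ i₀ := by
  rw [Matrix.trace]
  calc ∑ i, A.diag i = ∑ _i : Fin n, A i₀ i₀ :=
        Finset.sum_congr rfl (fun i _ => hA i i₀)
    _ = (n : ℂ) * A i₀ i₀ := by simp [Finset.sum_const, mul_comm]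


section StdLemmas
variable {ι : Type*} [Fintype ι] [DecidableEq ι]

lemma EHerm (x₀ : ι) : (Matrix.single x₀ x₀ (1:ℂ))ᴴ = Matrix.single x₀ x₀ 1 := by
  ext y z
  by_cases h1 : x₀ = z <;> by_cases h2 : x₀ = y <;>
    simp [Matrix.conjTranspose_apply, Matrix.single, h1, h2]

lemma EmulVec (x₀ : ι) (v : ι → ℂ) :
    Matrix.single x₀ x₀ (1:ℂ) *ᵥ v = Pi.single x₀ (v x₀) := by
  funext y
  rw [Matrix.mulVec, dotProduct]
  have h2 : ∀ z, Matrix.single x₀ x₀ (1:ℂ) y z * v z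
      = if x₀ = z then (if x₀ = y then v x₀ else 0) else 0 := by
    intro z
    by_cases h1 : x₀ = z <;> by_cases h3 : x₀ = y <;>
      simp [Matrix.single, h1, h3] <;>
      (try (split_ifs with h4 <;> simp [h4]))
  simp_rw [h2]
  rw [Finset.sum_ite_eq Finset.univ x₀]
  simp [Pi.single_apply, eq_comm]

end StdLemmas

theorem theta_ge (k : ℕ) (hk : 2 ≤ k) :
    ((k : ℝ)) ^ 3 ≤ thetaOS (tensorOS (constDiagOS k) (constDiagOS (k ^ 2))) := by
  classical
  have hk0 : 0 < k := by omega
  have hk2 : 0 < k ^ 2 := by positivity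
  let x₀ : (Fin k) × (Fin (k ^ 2)) := (⟨0, hk0⟩, ⟨0, hk2⟩)
  let E : Matrix ((Fin k) × (Fin (k ^ 2))) ((Fin k) × (Fin (k ^ 2))) ℂ :=
    Matrix.single x₀ x₀ (1:ℂ)
  let K : Matrix ((Fin k) × (Fin (k ^ 2))) ((Fin k) × (Fin (k ^ 2))) ℂ := ((k:ℂ)^3) • E - 1
  have h1K : 1 + K = ((k:ℂ)^3) • E := by
    show 1 + (((k:ℂ)^3) • E - 1) = ((k:ℂ)^3) • E
    abel
  -- orthogonality
  have horth : ∀ B ∈ tensorOS (constDiagOS k) (constDiagOS (k ^ 2)),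
      Matrix.trace (Bᴴ * K) = 0 := by
    intro B hB
    rw [tensorOS] at hB
    induction hB using Submodule.span_induction with
    | mem x hx =>
        obtain ⟨A, hA, B', hB', rfl⟩ := hx
        have hXK : (Matrix.kroneckerMap (· * ·) A B')ᴴ * K
            = ((k:ℂ)^3) • ((Matrix.kroneckerMap (· * ·) A B')ᴴ * E)
              - (Matrix.kroneckerMap (· * ·) A B')ᴴ := by
          show _ * (((k:ℂ)^3) • E - 1) = _
          rw [Matrix.mul_sub, Matrix.mul_one, Matrix.mul_smul]
        rw [hXK, Matrix.trace_sub, Matrix.trace_smul, trace_conj_mul_std,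
          Matrix.trace_conjTranspose]
        have hentry : (Matrix.kroneckerMap (· * ·) A B') x₀ x₀
            = A x₀.1 x₀.1 * B' x₀.2 x₀.2 := rfl
        have htr : Matrix.trace (Matrix.kroneckerMap (· * ·) A B')
            = Matrix.trace A * Matrix.trace B' := Matrix.trace_kronecker A B'
        rw [hentry, htr, trace_constDiag hA x₀.1, trace_constDiag hB' x₀.2, smul_eq_mul,
          sub_eq_zero]
        rw [show ((k:ℂ) * A x₀.1 x₀.1 * (((k^2 : ℕ) : ℂ) * B' x₀.2 x₀.2))
            = ((k:ℂ)^3) * (A x₀.1 x₀.1 * B' x₀.2 x₀.2) by push_cast; ring]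
        simp only [star_mul', star_pow, star_natCast]
    | zero => simp
    | add x y _ _ hx hy =>
        rw [Matrix.conjTranspose_add, Matrix.add_mul, Matrix.trace_add, hx, hy, add_zero]
    | smul c x _ hx =>
        rw [Matrix.conjTranspose_smul, Matrix.smul_mul, Matrix.trace_smul, hx, smul_zero]
  -- PSD
  have hpsd : (1 + K).PosSemidef := by
    rw [h1K]
    refine Matrix.PosSemidef.of_dotProduct_mulVec_nonneg ?_ ?_
    · show (((k:ℂ)^3) • E)ᴴ = ((k:ℂ)^3) • E
      rw [Matrix.conjTranspose_smul, EHerm]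
      congr 1
      simp
    · intro v
      rw [Matrix.smul_mulVec, EmulVec, dotProduct_smul, dotProduct_single]
      have hcast : ((k:ℂ)^3) • (star v x₀ * v x₀)
          = (((k:ℝ)^3 * Complex.normSq (v x₀) : ℝ) : ℂ) := by
        rw [smul_eq_mul, Pi.star_apply, Complex.star_def,
          mul_comm ((starRingEnd ℂ) (v x₀)) (v x₀), Complex.mul_conj]
        push_cast
        ring
      rw [hcast, Complex.nonneg_iff]
      constructor
      · simp only [Complex.ofReal_re]
        exact mul_nonneg (by positivity) (Complex.normSq_nonneg _)
      · exact (Complex.ofReal_im _).symm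
  -- norm lower bound
  have hnormge : ((k:ℝ))^3 ≤
      ‖Matrix.toEuclideanCLM (𝕜 := ℂ) (n := (Fin k) × (Fin (k ^ 2))) (1 + K)‖ := by
    rw [h1K]
    have hTu : Matrix.toEuclideanCLM (𝕜 := ℂ) (n := (Fin k) × (Fin (k ^ 2)))
        (((k:ℂ)^3) • E) (EuclideanSpace.single x₀ (1:ℂ))
        = ((k:ℂ)^3) • EuclideanSpace.single x₀ (1:ℂ) := by
      refine PiLp.ext (fun a => ?_)
      rw [toEuclideanCLM_coord]
      have h2 : ∀ b, (((k:ℂ)^3) • E) a b * (EuclideanSpace.single x₀ (1:ℂ)) b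
          = if b = x₀ then (if a = x₀ then (k:ℂ)^3 else 0) else 0 := by
        intro b
        by_cases hb : b = x₀ <;> by_cases ha : a = x₀ <;>
          simp [Matrix.single, E, hb, ha, EuclideanSpace.single_apply, eq_comm]
      simp_rw [h2]
      rw [Finset.sum_ite_eq' Finset.univ x₀]
      by_cases ha : a = x₀ <;> simp [ha, EuclideanSpace.single_apply]
    have hun : ‖EuclideanSpace.single x₀ (1:ℂ)‖ = 1 := by simp
    have hle := ContinuousLinearMap.le_opNorm
      (Matrix.toEuclideanCLM (𝕜 := ℂ) (n := (Fin k) × (Fin (k ^ 2))) (((k:ℂ)^3) • E))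
      (EuclideanSpace.single x₀ (1:ℂ))
    rw [hTu, hun, mul_one, norm_smul, hun, mul_one] at hle
    calc ((k:ℝ))^3 = ‖((k:ℂ)^3)‖ := by simp
      _ ≤ _ := hle
  -- bounded above
  have hbdd : BddAbove {t | ∃ K' : Matrix ((Fin k) × (Fin (k ^ 2))) ((Fin k) × (Fin (k ^ 2))) ℂ,
      (∀ B ∈ tensorOS (constDiagOS k) (constDiagOS (k ^ 2)), Matrix.trace (Bᴴ * K') = 0) ∧
      (1 + K').PosSemidef ∧
      t = ‖Matrix.toEuclideanCLM (𝕜 := ℂ) (n := (Fin k) × (Fin (k ^ 2))) (1 + K')‖} := by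
    set n : ℕ := Fintype.card ((Fin k) × (Fin (k ^ 2)))
    refine ⟨(n : ℝ)^2 * (n : ℝ), ?_⟩
    rintro t ⟨K', horth', hpsd', rfl⟩
    have htrK' : Matrix.trace K' = 0 := by
      have := horth' 1 (one_mem_tensorOS k (k^2))
      rwa [Matrix.conjTranspose_one, Matrix.one_mul] at this
    have htr : (Matrix.trace (1 + K')).re = (n : ℝ) := by
      rw [Matrix.trace_add, htrK', add_zero, Matrix.trace_one]
      rw [show ((Fintype.card (Fin k × Fin (k ^ 2)) : ℕ) : ℂ) = ((n : ℝ) : ℂ) by norm_cast]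
      exact Complex.ofReal_re _
    calc ‖Matrix.toEuclideanCLM (𝕜 := ℂ) (n := (Fin k) × (Fin (k ^ 2))) (1 + K')‖
        ≤ ∑ a, ∑ b, ‖(1 + K') a b‖ := opNorm_le_entry_sum _
      _ ≤ ∑ _a : (Fin k) × (Fin (k ^ 2)), ∑ _b : (Fin k) × (Fin (k ^ 2)),
            (Matrix.trace (1 + K')).re := by
          refine Finset.sum_le_sum (fun a _ => Finset.sum_le_sum (fun b _ => ?_))
          exact psd_entry_le_retrace hpsd' a b
      _ = (n : ℝ)^2 * (n : ℝ) := by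
          rw [htr]
          simp only [Finset.sum_const, Finset.card_univ, nsmul_eq_mul]
          push_cast [n]
          ring
  -- conclude
  refine le_trans hnormge (le_csSup hbdd ⟨K, horth, hpsd, rfl⟩)

end Aux

/-- for `k ≥ 2`, `β(S_k ⊗ S_{k²}) ≤ k² < k³ ≤ ϑ(S_k ⊗ S_{k²})`. -/
theorem beta_lt_theta (k : ℕ) (hk : 2 ≤ k) :
    betaOS (tensorOS (constDiagOS k) (constDiagOS (k ^ 2))) ≤ k ^ 2 ∧
    k ^ 2 < k ^ 3 ∧
    ((k : ℝ) ^ 3 ≤ thetaOS (tensorOS (constDiagOS k) (constDiagOS (k ^ 2)))) := by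
  refine ⟨beta_le k hk, ?_, theta_ge k hk⟩
  exact Nat.pow_lt_pow_right (by omega) (by omega)
end

section
/- For every real C > 0 there exist n ∈ ℕ and an operator system S ⊆ M_n with ϑ(S) > C·β(S), and there exist n' ∈ ℕ and an operator system S' ⊆ M_{n'} with ϑ(S') > C·γ(S'). That is, the ratios ϑ/β and ϑ/γ are unbounded over operator systems. -/
open Matrix
open scoped ComplexOrder

namespace ThetaRatioAux
open Complex

lemma coord_le {m : Type*} [Fintype m] (x : EuclideanSpace ℂ m) (i : m) : ‖x i‖ ≤ ‖x‖ := by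
  rw [EuclideanSpace.norm_eq]
  calc ‖x i‖ = Real.sqrt (‖x i‖^2) := (Real.sqrt_sq (norm_nonneg _)).symm
    _ ≤ _ := Real.sqrt_le_sqrt (Finset.single_le_sum (f := fun j => ‖x j‖^2)
        (fun j _ => sq_nonneg _) (Finset.mem_univ i))

lemma sum_sq_le {m : Type*} [Fintype m] (c : m → ℝ) (hc : ∀ i, 0 ≤ c i) :
    ∑ i, (c i)^2 ≤ (∑ i, c i)^2 := by
  rw [sq (∑ i, c i), Finset.sum_mul]
  refine Finset.sum_le_sum fun i _ => ?_
  rw [sq]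
  exact mul_le_mul_of_nonneg_left
    (Finset.single_le_sum (fun j _ => hc j) (Finset.mem_univ i)) (hc i)

lemma opNorm_le_sum {m : Type*} [Fintype m] [DecidableEq m] (M : Matrix m m ℂ) :
    ‖Matrix.toEuclideanCLM (𝕜 := ℂ) M‖ ≤ ∑ i, ∑ j, ‖M i j‖ := by
  apply ContinuousLinearMap.opNorm_le_bound _ (by positivity)
  intro x
  have key : ∀ i, (Matrix.toEuclideanCLM (𝕜 := ℂ) M x) i = ∑ j, M i j * x j := by
    intro i
    rfl
  have bound : ∀ i, ‖∑ j, M i j * x j‖ ≤ (∑ j, ‖M i j‖) * ‖x‖ := by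
    intro i
    calc ‖∑ j, M i j * x j‖ ≤ ∑ j, ‖M i j * x j‖ := norm_sum_le _ _
      _ = ∑ j, ‖M i j‖ * ‖x j‖ := by simp [norm_mul]
      _ ≤ ∑ j, ‖M i j‖ * ‖x‖ :=
          Finset.sum_le_sum fun j _ => mul_le_mul_of_nonneg_left (coord_le x j) (norm_nonneg _)
      _ = (∑ j, ‖M i j‖) * ‖x‖ := by rw [Finset.sum_mul]
  calc ‖Matrix.toEuclideanCLM (𝕜 := ℂ) M x‖
      = Real.sqrt (∑ i, ‖∑ j, M i j * x j‖^2) := by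
        rw [EuclideanSpace.norm_eq]
        simp only [key]
    _ ≤ Real.sqrt (∑ i, ((∑ j, ‖M i j‖) * ‖x‖)^2) := by
        apply Real.sqrt_le_sqrt
        exact Finset.sum_le_sum fun i _ => pow_le_pow_left₀ (norm_nonneg _) (bound i) 2
    _ ≤ Real.sqrt ((∑ i, (∑ j, ‖M i j‖) * ‖x‖)^2) := by
        apply Real.sqrt_le_sqrt
        exact sum_sq_le _ fun i => by positivity
    _ = ∑ i, (∑ j, ‖M i j‖) * ‖x‖ := Real.sqrt_sq (by positivity)
    _ = (∑ i, ∑ j, ‖M i j‖) * ‖x‖ := by rw [Finset.sum_mul]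

lemma conj_mul_self_re (z : ℂ) : ((starRingEnd ℂ) z * z).re = ‖z‖^2 := by
  rw [mul_comm, Complex.mul_conj']
  norm_cast

open scoped MatrixOrder in
lemma psd_entry_bound {m : Type*} [Fintype m] [DecidableEq m] {M : Matrix m m ℂ}
    (hM : M.PosSemidef) (i j : m) :
    ‖M i j‖ ≤ Real.sqrt ((M i i).re) * Real.sqrt ((M j j).re) := by
  obtain ⟨B, rfl⟩ := CStarAlgebra.nonneg_iff_eq_star_mul_self.mp hM.nonneg
  rw [Matrix.star_eq_conjTranspose]
  have hent : ∀ a b : m, ((Bᴴ * B) a b) = ∑ l, (starRingEnd ℂ) (B l a) * B l b := by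
    intro a b; simp [Matrix.mul_apply, Matrix.conjTranspose_apply]
  have hdiag : ∀ a : m, Real.sqrt (((Bᴴ * B) a a).re) =
      ‖((WithLp.equiv 2 (m → ℂ)).symm fun l => B l a : EuclideanSpace ℂ m)‖ := by
    intro a
    rw [EuclideanSpace.norm_eq, hent, Complex.re_sum]
    congr 1
    refine Finset.sum_congr rfl fun l _ => ?_
    rw [conj_mul_self_re]
    rfl
  have hinner : ((Bᴴ * B) i j) =
      inner ℂ ((WithLp.equiv 2 (m → ℂ)).symm fun l => B l i : EuclideanSpace ℂ m)
        ((WithLp.equiv 2 (m → ℂ)).symm fun l => B l j : EuclideanSpace ℂ m) := by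
    rw [hent, PiLp.inner_apply]
    refine Finset.sum_congr rfl fun l _ => ?_
    show _ = inner ℂ (B l i) (B l j)
    rw [RCLike.inner_apply]
    ring
  rw [hinner, hdiag, hdiag]
  exact norm_inner_le_norm _ _

lemma psd_diag_nonneg {m : Type*} [Fintype m] [DecidableEq m] {M : Matrix m m ℂ}
    (hM : M.PosSemidef) (i : m) : 0 ≤ (M i i).re := by
  have h := hM.re_dotProduct_nonneg (Pi.single i 1)
  simpa [dotProduct, Matrix.mulVec, Pi.single_apply, Finset.mul_sum] using h

lemma psd_opNorm_le {m : Type*} [Fintype m] [DecidableEq m] {M : Matrix m m ℂ}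
    (hM : M.PosSemidef) :
    ‖Matrix.toEuclideanCLM (𝕜 := ℂ) M‖ ≤ (Fintype.card m)^2 * (Matrix.trace M).re := by
  have htr : ∀ i : m, (M i i).re ≤ (Matrix.trace M).re := by
    intro i
    rw [Matrix.trace, Complex.re_sum]
    exact Finset.single_le_sum (f := fun j => (M.diag j).re)
      (fun j _ => psd_diag_nonneg hM j) (Finset.mem_univ i)
  have htr0 : 0 ≤ (Matrix.trace M).re := by
    rw [Matrix.trace, Complex.re_sum]
    exact Finset.sum_nonneg fun j _ => psd_diag_nonneg hM j
  calc ‖Matrix.toEuclideanCLM (𝕜 := ℂ) M‖ ≤ ∑ i, ∑ j, ‖M i j‖ := opNorm_le_sum M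
    _ ≤ ∑ _i : m, ∑ _j : m, (Matrix.trace M).re := by
        refine Finset.sum_le_sum fun i _ => Finset.sum_le_sum fun j _ => ?_
        calc ‖M i j‖ ≤ Real.sqrt ((M i i).re) * Real.sqrt ((M j j).re) := psd_entry_bound hM i j
          _ ≤ Real.sqrt ((Matrix.trace M).re) * Real.sqrt ((Matrix.trace M).re) :=
              mul_le_mul (Real.sqrt_le_sqrt (htr i)) (Real.sqrt_le_sqrt (htr j))
                (Real.sqrt_nonneg _) (Real.sqrt_nonneg _)
          _ = (Matrix.trace M).re := Real.mul_self_sqrt htr0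
    _ = (Fintype.card m)^2 * (Matrix.trace M).re := by
        simp [Finset.sum_const, Finset.card_univ, sq]; ring

noncomputable section

variable (k : ℕ)

def dg (x : Fin (k*k)) : Prop := (finProdFinEquiv.symm x).1 = (finProdFinEquiv.symm x).2

instance dgDec : DecidablePred (dg k) :=
  fun x => inferInstanceAs (Decidable ((finProdFinEquiv.symm x).1 = (finProdFinEquiv.symm x).2))

lemma dg_apply (p : Fin k × Fin k) : dg k (finProdFinEquiv p) ↔ p.1 = p.2 := by
  simp [dg]

def Amat : Fin k → Matrix (Fin k) (Fin (k*k)) ℂ :=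
  fun i => Matrix.of fun a x => if x = finProdFinEquiv (i, a) then 1 else 0

lemma kraus : ∑ i, (Amat k i)ᴴ * Amat k i = 1 := by
  ext x y
  rw [Matrix.sum_apply]
  simp only [Matrix.mul_apply, conjTranspose_apply, Amat, Matrix.of_apply,
    apply_ite (star : ℂ → ℂ), star_one, star_zero]
  rw [← Fintype.sum_prod_type (f := fun p : Fin k × Fin k =>
    (if x = finProdFinEquiv p then (1:ℂ) else 0) * (if y = finProdFinEquiv p then 1 else 0))]
  rw [Equiv.sum_comp finProdFinEquiv
    (fun z => (if x = z then (1:ℂ) else 0) * (if y = z then 1 else 0))]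
  simp [Matrix.one_apply, Finset.sum_ite_eq, eq_comm]

def Wmat : Matrix (Fin 1) (Fin (k*k)) ℂ :=
  Matrix.of fun _ x => if dg k x then (Real.sqrt k : ℂ) else 0

lemma sqrt_mul_self_c : ((Real.sqrt k : ℝ) : ℂ) * ((Real.sqrt k : ℝ) : ℂ) = (k:ℂ) := by
  rw [← Complex.ofReal_mul, Real.mul_self_sqrt (Nat.cast_nonneg k)]
  norm_cast

lemma L_entry (j : Fin k) (a : Fin k) :
    (Wmat k * (Amat k j)ᴴ) 0 a = if a = j then (Real.sqrt k : ℂ) else 0 := by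
  simp only [Matrix.mul_apply, conjTranspose_apply, Amat, Wmat, Matrix.of_apply,
    apply_ite (star : ℂ → ℂ), star_one, star_zero]
  rw [Finset.sum_eq_single (finProdFinEquiv (j, a))]
  · rw [if_pos rfl, mul_one]
    simp only [dg_apply]
    simp [eq_comm]
  · intro b _ hb; simp [hb]
  · simp

lemma R_entry (i : Fin k) (a : Fin k) :
    (Amat k i * (Wmat k)ᴴ) a 0 = if a = i then (Real.sqrt k : ℂ) else 0 := by
  simp only [Matrix.mul_apply, conjTranspose_apply, Amat, Wmat, Matrix.of_apply,
    apply_ite (star : ℂ → ℂ), star_one, star_zero]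
  rw [Finset.sum_eq_single (finProdFinEquiv (i, a))]
  · rw [if_pos rfl, one_mul]
    simp only [dg_apply]
    simp [eq_comm, Complex.conj_ofReal, RCLike.star_def]
  · intro b _ hb; simp [hb]
  · simp

lemma trace_BP (i j : Fin k) :
    Matrix.trace ((Amat k j)ᴴ * Amat k i * ((Wmat k)ᴴ * Wmat k)) =
      if i = j then (k : ℂ) else 0 := by
  have assoc : (Amat k j)ᴴ * Amat k i * ((Wmat k)ᴴ * Wmat k) =
      ((Amat k j)ᴴ * (Amat k i * (Wmat k)ᴴ)) * Wmat k := by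
    simp only [Matrix.mul_assoc]
  rw [assoc, Matrix.trace_mul_comm]
  have h2 : Wmat k * ((Amat k j)ᴴ * (Amat k i * (Wmat k)ᴴ)) =
      (Wmat k * (Amat k j)ᴴ) * (Amat k i * (Wmat k)ᴴ) := by
    simp only [Matrix.mul_assoc]
  rw [h2, Matrix.trace, Fin.sum_univ_one, Matrix.diag_apply, Matrix.mul_apply]
  simp only [L_entry, R_entry]
  rcases eq_or_ne i j with h | h
  · subst h
    rw [Finset.sum_eq_single i]
    · simp [sqrt_mul_self_c]
    · intro b _ hb; simp [hb]
    · simp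
  · rw [Finset.sum_eq_zero]
    · simp [h]
    · intro b _
      rcases eq_or_ne b i with rfl | hb
      · simp [h]
      · simp [hb]

lemma trace_B (i j : Fin k) :
    Matrix.trace ((Amat k j)ᴴ * Amat k i) = if i = j then (k : ℂ) else 0 := by
  rw [Matrix.trace_mul_comm, Matrix.trace]
  simp only [Matrix.diag_apply, Matrix.mul_apply, conjTranspose_apply, Amat, Matrix.of_apply,
    apply_ite (star : ℂ → ℂ), star_one, star_zero]
  calc ∑ a : Fin k, ∑ x : Fin (k*k), (if x = finProdFinEquiv (i, a) then (1:ℂ) else 0) *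
        (if x = finProdFinEquiv (j, a) then 1 else 0)
      = ∑ a : Fin k, if finProdFinEquiv (i, a) = finProdFinEquiv (j, a) then (1:ℂ) else 0 := by
        refine Finset.sum_congr rfl fun a _ => ?_
        rw [Finset.sum_eq_single (finProdFinEquiv (i, a))]
        · simp
        · intro b _ hb; simp [hb]
        · simp
    _ = if i = j then (k : ℂ) else 0 := by
        simp only [Equiv.apply_eq_iff_eq, Prod.mk.injEq, and_true]
        rcases eq_or_ne i j with h | h <;> simp [h, Finset.card_univ]

lemma P_entry (x y : Fin (k*k)) :
    ((Wmat k)ᴴ * Wmat k) x y = if dg k x ∧ dg k y then (k : ℂ) else 0 := by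
  simp only [Matrix.mul_apply, conjTranspose_apply, Wmat, Matrix.of_apply,
    apply_ite (star : ℂ → ℂ), star_zero, Fin.sum_univ_one]
  split_ifs <;> simp_all [Complex.conj_ofReal, sqrt_mul_self_c]

lemma diag_count : (∑ y : Fin (k*k), if dg k y then (1:ℂ) else 0) = (k : ℂ) := by
  rw [← Equiv.sum_comp finProdFinEquiv (fun y => if dg k y then (1:ℂ) else 0)]
  simp only [dg_apply]
  rw [Fintype.sum_prod_type]
  simp [Finset.sum_ite_eq, Finset.card_univ]

lemma diag_count_real : (∑ y : Fin (k*k), if dg k y then (1:ℝ) else 0) = (k : ℝ) := by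
  rw [← Equiv.sum_comp finProdFinEquiv (fun y => if dg k y then (1:ℝ) else 0)]
  simp only [dg_apply]
  rw [Fintype.sum_prod_type]
  simp [Finset.sum_ite_eq, Finset.card_univ]

def vfun : Fin (k*k) → ℂ := fun x => if dg k x then 1 else 0

lemma Pv : ((Wmat k)ᴴ * Wmat k) *ᵥ vfun k = ((k:ℂ)*k) • vfun k := by
  funext x
  simp only [Matrix.mulVec, dotProduct, P_entry, vfun, Pi.smul_apply, smul_eq_mul]
  rcases (em (dg k x)) with h | h
  · simp only [h, true_and, if_true]
    calc (∑ y, (if dg k y then (k:ℂ) else 0) * (if dg k y then 1 else 0))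
        = ∑ y, (k:ℂ) * (if dg k y then 1 else 0) := by
          refine Finset.sum_congr rfl fun y _ => ?_
          rcases (em (dg k y)) with h2 | h2 <;> simp [h2]
      _ = (k:ℂ) * k := by rw [← Finset.mul_sum, diag_count]
      _ = (k:ℂ) * k * 1 := by ring
  · simp [h]

def vE : EuclideanSpace ℂ (Fin (k*k)) := (WithLp.equiv 2 _).symm (vfun k)

lemma vE_norm : ‖vE k‖ = Real.sqrt k := by
  rw [EuclideanSpace.norm_eq]
  congr 1
  calc (∑ x, ‖vE k x‖^2)
      = ∑ x : Fin (k*k), (if dg k x then (1:ℝ) else 0) := by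
        refine Finset.sum_congr rfl fun x _ => ?_
        show ‖vfun k x‖^2 = _
        rcases (em (dg k x)) with h | h <;> simp [vfun, h]
    _ = k := diag_count_real k

lemma TP_vE : Matrix.toEuclideanCLM (𝕜 := ℂ) ((Wmat k)ᴴ * Wmat k) (vE k) = ((k:ℂ)*k) • vE k := by
  have h := Matrix.toEuclideanCLM_toLp (𝕜 := ℂ) ((Wmat k)ᴴ * Wmat k) (vfun k)
  rw [vE, WithLp.equiv_symm_apply, h, Pv]
  rfl

lemma TP_norm_ge : ((k:ℝ)*k) * Real.sqrt k ≤
    ‖Matrix.toEuclideanCLM (𝕜 := ℂ) ((Wmat k)ᴴ * Wmat k)‖ * Real.sqrt k := by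
  have h := (Matrix.toEuclideanCLM (𝕜 := ℂ) ((Wmat k)ᴴ * Wmat k)).le_opNorm (vE k)
  rw [TP_vE, norm_smul, vE_norm] at h
  calc ((k:ℝ)*k) * Real.sqrt k = ‖((k:ℂ)*k)‖ * Real.sqrt k := by
        simp
    _ ≤ _ := h

lemma confGraph_isOS (k : ℕ) : IsOperatorSystem (confGraph (Amat k)) := by
  constructor
  · have h1 : (1 : Matrix (Fin (k*k)) (Fin (k*k)) ℂ) = ∑ i, (Amat k i)ᴴ * Amat k i :=
      (kraus k).symm
    rw [h1]
    exact Submodule.sum_mem _ fun i _ => Submodule.subset_span ⟨i, i, rfl⟩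
  · intro B hB
    refine Submodule.span_induction (p := fun B _ => Bᴴ ∈ confGraph (Amat k)) ?_ ?_ ?_ ?_ hB
    · rintro B ⟨i, j, rfl⟩
      rw [Matrix.conjTranspose_mul, Matrix.conjTranspose_conjTranspose]
      exact Submodule.subset_span ⟨j, i, rfl⟩
    · show (0 : Matrix (Fin (k*k)) (Fin (k*k)) ℂ)ᴴ ∈ confGraph (Amat k)
      rw [Matrix.conjTranspose_zero]; exact Submodule.zero_mem _
    · intro x y _ _ hx hy
      rw [Matrix.conjTranspose_add]
      exact Submodule.add_mem _ hx hy
    · intro c x _ hx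
      rw [Matrix.conjTranspose_smul]
      exact Submodule.smul_mem _ _ hx

lemma orth_K0 (k : ℕ) : ∀ B ∈ confGraph (Amat k),
    Matrix.trace (Bᴴ * ((Wmat k)ᴴ * Wmat k - 1)) = 0 := by
  intro B hB
  refine Submodule.span_induction
    (p := fun B _ => Matrix.trace (Bᴴ * ((Wmat k)ᴴ * Wmat k - 1)) = 0) ?_ ?_ ?_ ?_ hB
  · rintro B ⟨i, j, rfl⟩
    rw [Matrix.conjTranspose_mul, Matrix.conjTranspose_conjTranspose, Matrix.mul_sub,
      Matrix.trace_sub, Matrix.mul_one, trace_BP, trace_B, sub_self]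
  · simp
  · intro x y _ _ hx hy
    rw [Matrix.conjTranspose_add, Matrix.add_mul, Matrix.trace_add, hx, hy, add_zero]
  · intro c x _ hx
    rw [Matrix.conjTranspose_smul, Matrix.smul_mul, Matrix.trace_smul, hx, smul_zero]

lemma theta_ge (k : ℕ) (hk : 0 < k) : (k:ℝ) * k ≤ thetaOS (confGraph (Amat k)) := by
  set S := confGraph (Amat k)
  set K0 : Matrix (Fin (k*k)) (Fin (k*k)) ℂ := (Wmat k)ᴴ * Wmat k - 1 with hK0
  have h1K : 1 + K0 = (Wmat k)ᴴ * Wmat k := by rw [hK0]; abel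
  have hpsd : (1 + K0).PosSemidef := by
    rw [h1K]; exact Matrix.posSemidef_conjTranspose_mul_self _
  have hmem : ‖Matrix.toEuclideanCLM (𝕜 := ℂ) (n := Fin (k*k)) (1 + K0)‖ ∈
      {t | ∃ K : Matrix (Fin (k*k)) (Fin (k*k)) ℂ,
        (∀ B ∈ S, Matrix.trace (Bᴴ * K) = 0) ∧ (1 + K).PosSemidef ∧
        t = ‖Matrix.toEuclideanCLM (𝕜 := ℂ) (n := Fin (k*k)) (1 + K)‖} :=
    ⟨K0, orth_K0 k, hpsd, rfl⟩
  have hbdd : BddAbove {t | ∃ K : Matrix (Fin (k*k)) (Fin (k*k)) ℂ,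
      (∀ B ∈ S, Matrix.trace (Bᴴ * K) = 0) ∧ (1 + K).PosSemidef ∧
      t = ‖Matrix.toEuclideanCLM (𝕜 := ℂ) (n := Fin (k*k)) (1 + K)‖} := by
    refine ⟨((k*k : ℝ))^2 * (k*k), ?_⟩
    rintro t ⟨K, hK, hpsd', rfl⟩
    have htrK : Matrix.trace K = 0 := by
      have h := hK 1 (confGraph_isOS k).1
      rwa [Matrix.conjTranspose_one, Matrix.one_mul] at h
    have htr : (Matrix.trace (1 + K)).re = (k*k : ℝ) := by
      rw [Matrix.trace_add, htrK, add_zero, Matrix.trace_one]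
      simp
    calc ‖Matrix.toEuclideanCLM (𝕜 := ℂ) (n := Fin (k*k)) (1 + K)‖
        ≤ (Fintype.card (Fin (k*k)) : ℝ)^2 * (Matrix.trace (1 + K)).re := psd_opNorm_le hpsd'
      _ = ((k*k : ℝ))^2 * (k*k) := by rw [htr, Fintype.card_fin]; norm_num
  have hnorm : (k:ℝ) * k ≤ ‖Matrix.toEuclideanCLM (𝕜 := ℂ) (n := Fin (k*k)) (1 + K0)‖ := by
    have hs : (0:ℝ) < Real.sqrt k := Real.sqrt_pos.mpr (by exact_mod_cast hk)
    have := TP_norm_ge k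
    rw [← h1K] at this
    exact le_of_mul_le_mul_right this hs
  exact le_trans hnorm (le_csSup hbdd hmem)

end

end ThetaRatioAux

/-- the ratios `ϑ/β` and `ϑ/γ` are unbounded over operator systems. -/
theorem theta_ratio_unbounded (C : ℝ) (hC : 0 < C) :
    (∃ n : ℕ, ∃ S : Submodule ℂ (Matrix (Fin n) (Fin n) ℂ),
      IsOperatorSystem S ∧ C * (betaOS S : ℝ) < thetaOS S) ∧
    (∃ n' : ℕ, ∃ S' : Submodule ℂ (Matrix (Fin n') (Fin n') ℂ),
      IsOperatorSystem S' ∧ C * (gammaOS S' : ℝ) < thetaOS S') := by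
  classical
  set k : ℕ := ⌈C⌉₊ + 1 with hkdef
  have hCk : C < (k : ℝ) := by
    calc C ≤ (⌈C⌉₊ : ℝ) := Nat.le_ceil C
      _ < (k : ℝ) := by rw [hkdef]; exact_mod_cast Nat.lt_succ_self _
  have hk : 0 < k := Nat.succ_pos _
  have hkR : (0:ℝ) < (k:ℝ) := by exact_mod_cast hk
  set S := confGraph (ThetaRatioAux.Amat k) with hS
  have hOS : IsOperatorSystem S := ThetaRatioAux.confGraph_isOS k
  have hKraus : IsKraus (ThetaRatioAux.Amat k) := ThetaRatioAux.kraus k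
  have hβ : betaOS S ≤ k := Nat.sInf_le ⟨k, ThetaRatioAux.Amat k, hKraus, le_rfl⟩
  have hγ : gammaOS S ≤ k := Nat.sInf_le ⟨k, ThetaRatioAux.Amat k, hKraus, rfl⟩
  have hθ : (k:ℝ) * k ≤ thetaOS S := ThetaRatioAux.theta_ge k hk
  have key : ∀ m : ℕ, m ≤ k → C * (m : ℝ) < thetaOS S := by
    intro m hm
    calc C * (m : ℝ) ≤ C * (k : ℝ) := by
          have : (m:ℝ) ≤ (k:ℝ) := by exact_mod_cast hm
          exact mul_le_mul_of_nonneg_left this hC.le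
      _ < (k:ℝ) * k := mul_lt_mul_of_pos_right hCk hkR
      _ ≤ thetaOS S := hθ
  exact ⟨⟨k*k, S, hOS, key _ hβ⟩, ⟨k*k, S, hOS, key _ hγ⟩⟩
end

section
/- Let S ⊆ M_2 be the operator system of all 2×2 complex matrices with equal diagonal entries, S = {[[λ, a], [b, λ]] : λ, a, b ∈ ℂ}. Then α(S) = 1, β(S) = 2, γ(S) = 3, cc(S) = 3, and γ(S ⊗ S) ≤ 8 < 9 = γ(S)², where S ⊗ S ⊆ M_4 is the Kronecker tensor product of S with itself. -/
open Matrix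
open scoped ComplexOrder

section Infra

open Matrix Complex

noncomputable def e12c : Matrix (Fin 2) (Fin 2) ℂ := !![0,1;0,0]
noncomputable def e21c : Matrix (Fin 2) (Fin 2) ℂ := !![0,0;1,0]

lemma mem_constDiag_iff {B : Matrix (Fin 2) (Fin 2) ℂ} :
    B ∈ constDiagOS 2 ↔ B 0 0 = B 1 1 := by
  constructor
  · intro h; exact h 0 1
  · intro h i j
    fin_cases i <;> fin_cases j <;> simp_all

lemma one_mem_S : (1 : Matrix (Fin 2) (Fin 2) ℂ) ∈ constDiagOS 2 := by
  rw [mem_constDiag_iff]; simp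

lemma e12c_mem_S : e12c ∈ constDiagOS 2 := by
  rw [mem_constDiag_iff]; simp [e12c]

lemma e21c_mem_S : e21c ∈ constDiagOS 2 := by
  rw [mem_constDiag_iff]; simp [e21c]

lemma S_decomp {B : Matrix (Fin 2) (Fin 2) ℂ} (hB : B ∈ constDiagOS 2) :
    B = B 0 0 • 1 + B 0 1 • e12c + B 1 0 • e21c := by
  have h := hB 1 0
  ext i j
  fin_cases i <;> fin_cases j <;>
    simp [e12c, e21c, Matrix.one_apply, h]

/-- the basic "label channel" matrix -/
noncomputable def lmat {ι : Type*} [Fintype ι] [DecidableEq ι] {k : ℕ}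
    (f : ι → Fin k) (s : ℝ) : Matrix (Fin k) ι ℂ :=
  Matrix.of fun a x => if f x = a then (s : ℂ) else 0

lemma lmat_mul {ι : Type*} [Fintype ι] [DecidableEq ι] {k : ℕ}
    (f g : ι → Fin k) (s : ℝ) :
    (lmat f s)ᴴ * lmat g s
      = Matrix.of fun x y => if f x = g y then ((s^2 : ℝ) : ℂ) else 0 := by
  ext x y
  rw [Matrix.mul_apply]
  simp only [lmat, conjTranspose_apply, Matrix.of_apply]
  have key : ∀ a : Fin k,
      star (if f x = a then (s:ℂ) else 0) * (if g y = a then (s:ℂ) else 0)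
      = if a = f x then (if f x = g y then ((s^2:ℝ):ℂ) else 0) else 0 := by
    intro a
    by_cases h1 : f x = a
    · by_cases h2 : g y = a
      · rw [if_pos h1, if_pos h2, if_pos h1.symm, if_pos (h1.trans h2.symm),
          Complex.star_def, Complex.conj_ofReal]
        push_cast; ring
      · rw [if_pos h1, if_neg h2, mul_zero, if_pos h1.symm,
          if_neg (fun h : f x = g y => h2 (h ▸ h1))]
    · rw [if_neg h1, star_zero, zero_mul, if_neg (fun h : a = f x => h1 h.symm)]
  rw [Finset.sum_congr rfl fun a _ => key a, Finset.sum_ite_eq' Finset.univ (f x)]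
  simp

lemma lmat_kraus {ι : Type*} [Fintype ι] [DecidableEq ι] {k r : ℕ}
    (f : Fin r → ι → Fin k) (hf : ∀ i, Function.Injective (f i))
    (s : ℝ) (hs : (r : ℝ) * s^2 = 1) :
    IsKraus (fun i => lmat (f i) s) := by
  unfold IsKraus
  ext x y
  rw [Matrix.sum_apply]
  simp only [lmat_mul, Matrix.of_apply]
  by_cases h : x = y
  · subst h
    rw [Finset.sum_congr rfl (fun i _ => if_pos rfl), Finset.sum_const,
      Finset.card_univ, Fintype.card_fin, Matrix.one_apply_eq, nsmul_eq_mul,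
      show ((r:ℂ)) = ((r:ℝ):ℂ) from by norm_cast, ← Complex.ofReal_mul, hs,
      Complex.ofReal_one]
  · have : ∀ i : Fin r, (if f i x = f i y then ((s^2:ℝ):ℂ) else 0) = 0 := by
      intro i
      rw [if_neg]
      intro hc
      exact h (hf i hc)
    rw [Finset.sum_congr rfl fun i _ => this i, Finset.sum_const_zero,
      Matrix.one_apply_ne h]

end Infra

section Alpha

open Matrix Complex

private noncomputable abbrev alphaSet (S : Submodule ℂ (Matrix (Fin 2) (Fin 2) ℂ)) :=
  {m | ∃ x : Fin m → Fin 2 → ℂ, (∀ p, x p ≠ 0) ∧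
    ∀ p q, p ≠ q → ∀ B ∈ S, Matrix.trace (Bᴴ * Matrix.vecMulVec (x p) (star (x q))) = 0}

lemma trace_formula (B : Matrix (Fin 2) (Fin 2) ℂ) (v w : Fin 2 → ℂ) :
    Matrix.trace (Bᴴ * Matrix.vecMulVec v (star w)) =
      ∑ i, ∑ j, star (B j i) * v j * star (w i) := by
  rw [Matrix.trace]
  simp only [Matrix.diag, Matrix.mul_apply, Matrix.conjTranspose_apply,
    Matrix.vecMulVec_apply, Pi.star_apply]
  apply Finset.sum_congr rfl; intro i _
  apply Finset.sum_congr rfl; intro j _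
  ring

lemma alpha_eq_one : alphaOS (constDiagOS 2) = 1 := by
  have hset : {m | ∃ x : Fin m → Fin 2 → ℂ, (∀ p, x p ≠ 0) ∧
      ∀ p q, p ≠ q → ∀ B ∈ constDiagOS 2,
        Matrix.trace (Bᴴ * Matrix.vecMulVec (x p) (star (x q))) = 0} = Set.Iic 1 := by
    apply Set.eq_of_subset_of_subset
    · rintro m ⟨x, hx, hind⟩
      simp only [Set.mem_Iic]
      by_contra hm
      push_neg at hm
      have h2 : 2 ≤ m := hm
      set p : Fin m := ⟨0, by omega⟩ with hp
      set q : Fin m := ⟨1, by omega⟩ with hq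
      have hpq : p ≠ q := by simp [hp, hq, Fin.ext_iff]
      have key : ∀ (a b : Fin m), a ≠ b →
          ((x a 0 = 0 ∨ x b 1 = 0) ∧ (x a 1 = 0 ∨ x b 0 = 0) ∧
           x a 0 * starRingEnd ℂ (x b 0) + x a 1 * starRingEnd ℂ (x b 1) = 0) := by
        intro a b hab
        have h12 := hind a b hab e12c e12c_mem_S
        have h21 := hind a b hab e21c e21c_mem_S
        have h1 := hind a b hab 1 one_mem_S
        rw [trace_formula] at h12 h21 h1
        simp only [Fin.sum_univ_two, e12c, e21c, Matrix.one_apply,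
          Matrix.cons_val', Matrix.cons_val_zero, Matrix.cons_val_one,
          Matrix.head_cons, Matrix.head_fin_const, Matrix.cons_val_fin_one] at h12 h21 h1
        norm_num at h12 h21 h1
        exact ⟨h12, h21, h1⟩
      have comp : ∀ v : Fin 2 → ℂ, v ≠ 0 → v 0 = 0 → v 1 ≠ 0 := by
        intro v hv h0 h1
        apply hv
        funext t; fin_cases t <;> assumption
      have comp' : ∀ v : Fin 2 → ℂ, v ≠ 0 → v 1 = 0 → v 0 ≠ 0 := by
        intro v hv h1 h0
        apply hv
        funext t; fin_cases t <;> assumption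
      obtain ⟨hA, hB, hC⟩ := key p q hpq
      obtain ⟨hA', hB', hC'⟩ := key q p hpq.symm
      rcases eq_or_ne (x p 0) 0 with h0 | h0
      · have hp1 : x p 1 ≠ 0 := comp _ (hx p) h0
        have hq0 : x q 0 = 0 := hA'.resolve_right hp1
        have hq1 : x q 1 ≠ 0 := comp _ (hx q) hq0
        rw [h0, hq0, map_zero, mul_zero, zero_add] at hC
        rcases mul_eq_zero.1 hC with h | h
        · exact hp1 h
        · exact hq1 (by simpa using h)
      · have hq1 : x q 1 = 0 := hA.resolve_left h0
        have hq0 : x q 0 ≠ 0 := comp' _ (hx q) hq1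
        rcases hB with h | h
        · rw [h, hq1, map_zero, mul_zero, add_zero] at hC
          rcases mul_eq_zero.1 hC with h' | h'
          · exact h0 h'
          · exact hq0 (by simpa using h')
        · exact hq0 h
    · intro m hm
      simp only [Set.mem_Iic] at hm
      interval_cases m
      · exact ⟨Fin.elim0, fun p => p.elim0, fun p => p.elim0⟩
      · refine ⟨fun _ => ![1, 0], fun p => ?_, fun p q hpq => absurd (Subsingleton.elim p q) hpq⟩
        intro h
        have := congrFun h 0
        simp at this
  rw [alphaOS, hset, csSup_Iic]

end Alpha

section Beta

open Matrix Complex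

lemma no_k0 (r : ℕ) (A : Fin r → Matrix (Fin 0) (Fin 2) ℂ) : ¬ IsKraus A := by
  intro hK
  have h := congrFun (congrFun hK 0) 0
  rw [Matrix.sum_apply] at h
  simp only [Matrix.mul_apply, Finset.univ_eq_empty, Finset.sum_empty,
    Finset.sum_const_zero] at h
  simp [Matrix.one_apply] at h

lemma no_k1 (r : ℕ) (A : Fin r → Matrix (Fin 1) (Fin 2) ℂ)
    (hK : IsKraus A) (hle : confGraph A ≤ constDiagOS 2) : False := by
  -- diagonal equality for every pair
  have hmem : ∀ i j, (A i)ᴴ * A j ∈ constDiagOS 2 := fun i j =>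
    hle (Submodule.subset_span ⟨i, j, rfl⟩)
  have hd : ∀ i j : Fin r,
      starRingEnd ℂ (A i 0 0) * A j 0 0 = starRingEnd ℂ (A i 0 1) * A j 0 1 := by
    intro i j
    have h := (hmem i j) 0 1
    simp only [Matrix.mul_apply, Matrix.conjTranspose_apply, Fin.sum_univ_one] at h
    simpa using h
  -- Kraus entries
  have hK01 : ∑ i, starRingEnd ℂ (A i 0 0) * A i 0 1 = 0 := by
    have h := congrFun (congrFun hK 0) 1
    rw [Matrix.sum_apply] at h
    simp only [Matrix.mul_apply, Matrix.conjTranspose_apply, Fin.sum_univ_one] at h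
    simpa [Matrix.one_apply] using h
  have hK11 : ∑ i, starRingEnd ℂ (A i 0 1) * A i 0 1 = 1 := by
    have h := congrFun (congrFun hK 1) 1
    rw [Matrix.sum_apply] at h
    simp only [Matrix.mul_apply, Matrix.conjTranspose_apply, Fin.sum_univ_one] at h
    simpa [Matrix.one_apply] using h
  -- the contradiction 1 = 0
  have main : (1 : ℂ) =
      (∑ i, starRingEnd ℂ (A i 0 0) * A i 0 1) * (∑ j, A j 0 0 * starRingEnd ℂ (A j 0 1)) := by
    calc (1:ℂ) = (∑ i, starRingEnd ℂ (A i 0 1) * A i 0 1) *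
          (∑ j, starRingEnd ℂ (A j 0 1) * A j 0 1) := by rw [hK11, one_mul]
    _ = ∑ i, ∑ j, (starRingEnd ℂ (A i 0 1) * A i 0 1) *
          (starRingEnd ℂ (A j 0 1) * A j 0 1) := by rw [Finset.sum_mul_sum]
    _ = ∑ i, ∑ j, (starRingEnd ℂ (A i 0 0) * A j 0 0) *
          (A i 0 1 * starRingEnd ℂ (A j 0 1)) := by
        apply Finset.sum_congr rfl; intro i _
        apply Finset.sum_congr rfl; intro j _
        linear_combination (-(A i 0 1 * starRingEnd ℂ (A j 0 1))) * (hd i j)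
    _ = (∑ i, starRingEnd ℂ (A i 0 0) * A i 0 1) *
          (∑ j, A j 0 0 * starRingEnd ℂ (A j 0 1)) := by
        rw [Finset.sum_mul_sum]
        apply Finset.sum_congr rfl; intro i _
        apply Finset.sum_congr rfl; intro j _
        ring
  rw [hK01, zero_mul] at main
  exact one_ne_zero main

lemma no_klt2 (k : ℕ) (hk : k < 2) (r : ℕ) (A : Fin r → Matrix (Fin k) (Fin 2) ℂ)
    (hK : IsKraus A) (hle : confGraph A ≤ constDiagOS 2) : False := by
  match k, hk with
  | 0, _ => exact no_k0 r A hK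
  | 1, _ => exact no_k1 r A hK hle

lemma beta_eq_two : betaOS (constDiagOS 2) = 2 := by
  have h2 : 2 ∈ {k | ∃ r : ℕ, ∃ A : Fin r → Matrix (Fin k) (Fin 2) ℂ,
      IsKraus A ∧ confGraph A ≤ constDiagOS 2} := by
    refine ⟨1, fun _ => 1, ?_, ?_⟩
    · unfold IsKraus
      simp
    · rw [confGraph, Submodule.span_le]
      rintro B ⟨i, j, rfl⟩
      simpa using one_mem_S
  have hle : betaOS (constDiagOS 2) ≤ 2 := Nat.sInf_le h2
  rcases Nat.lt_or_ge (betaOS (constDiagOS 2)) 2 with h | h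
  · exfalso
    obtain ⟨r, A, hK, hG⟩ := Nat.sInf_mem ⟨2, h2⟩
    exact no_klt2 _ h r A hK hG
  · omega

end Beta

section GammaUpper

open Matrix Complex

def e12i : Matrix (Fin 2) (Fin 2) ℤ := !![0,1;0,0]
def e21i : Matrix (Fin 2) (Fin 2) ℤ := !![0,0;1,0]

lemma map_e12i : (e12i.map ((↑) : ℤ → ℂ)) = e12c := by
  ext i j; fin_cases i <;> fin_cases j <;> simp [e12i, e12c]

lemma map_e21i : (e21i.map ((↑) : ℤ → ℂ)) = e21c := by
  ext i j; fin_cases i <;> fin_cases j <;> simp [e21i, e21c]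

lemma map_onei : ((1 : Matrix (Fin 2) (Fin 2) ℤ).map ((↑) : ℤ → ℂ)) = 1 := by
  ext i j; by_cases h : i = j <;> simp [Matrix.one_apply, h]

/-- integer 0/1 equality-pattern matrix of a pair of label functions -/
def epat {ι : Type*} {k : ℕ} (f g : ι → Fin k) : Matrix ι ι ℤ :=
  Matrix.of fun x y => if f x = g y then 1 else 0

lemma lmat_mul_eq_smul_map {ι : Type*} [Fintype ι] [DecidableEq ι] {k : ℕ}
    (f g : ι → Fin k) (s : ℝ) (c : ℂ) (hc : ((s ^ 2 : ℝ) : ℂ) = c) :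
    (lmat f s)ᴴ * lmat g s = c • (epat f g).map ((↑) : ℤ → ℂ) := by
  rw [lmat_mul]
  ext x y
  by_cases h : f x = g y <;>
    simp [h, hc.symm, epat, Matrix.map_apply, Matrix.smul_apply]

noncomputable def sq2 : ℝ := (Real.sqrt 2)⁻¹

lemma sq2_sq : ((sq2 ^ 2 : ℝ) : ℂ) = (2 : ℂ)⁻¹ := by
  rw [sq2, inv_pow, Real.sq_sqrt (by norm_num : (2:ℝ) ≥ 0)]
  push_cast
  ring

def lab3 : Fin 2 → Fin 2 → Fin 3 := ![![0,1],![2,0]]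

noncomputable def A3 : Fin 2 → Matrix (Fin 3) (Fin 2) ℂ := fun i => lmat (lab3 i) sq2

lemma A3_kraus : IsKraus A3 := by
  apply lmat_kraus
  · decide
  · rw [sq2, inv_pow, Real.sq_sqrt (by norm_num : (2:ℝ) ≥ 0)]
    norm_num

lemma A3_block (i j : Fin 2) :
    (A3 i)ᴴ * A3 j = (2:ℂ)⁻¹ • (epat (lab3 i) (lab3 j)).map ((↑) : ℤ → ℂ) :=
  lmat_mul_eq_smul_map _ _ _ _ sq2_sq

lemma epat3_00 : epat (lab3 0) (lab3 0) = 1 := by decide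
lemma epat3_01 : epat (lab3 0) (lab3 1) = e12i := by decide
lemma epat3_10 : epat (lab3 1) (lab3 0) = e21i := by decide
lemma epat3_11 : epat (lab3 1) (lab3 1) = 1 := by decide

lemma A3_conf : confGraph A3 = constDiagOS 2 := by
  apply le_antisymm
  · rw [confGraph, Submodule.span_le]
    rintro B ⟨i, j, rfl⟩
    rw [A3_block]
    apply Submodule.smul_mem
    have hz : ∀ i j : Fin 2, epat (lab3 i) (lab3 j) 0 0 = epat (lab3 i) (lab3 j) 1 1 := by
      decide
    rw [mem_constDiag_iff]
    simp only [Matrix.map_apply]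
    exact congrArg _ (hz i j)
  · intro B hB
    rw [S_decomp hB]
    have h1 : (1 : Matrix (Fin 2) (Fin 2) ℂ) ∈ confGraph A3 := by
      have : (1 : Matrix (Fin 2) (Fin 2) ℂ) = (2:ℂ) • ((A3 0)ᴴ * A3 0) := by
        rw [A3_block, epat3_00, map_onei, smul_smul]
        norm_num
      rw [this]
      exact Submodule.smul_mem _ _ (Submodule.subset_span ⟨0, 0, rfl⟩)
    have h12 : e12c ∈ confGraph A3 := by
      have : e12c = (2:ℂ) • ((A3 0)ᴴ * A3 1) := by
        rw [A3_block, epat3_01, map_e12i, smul_smul]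
        norm_num
      rw [this]
      exact Submodule.smul_mem _ _ (Submodule.subset_span ⟨0, 1, rfl⟩)
    have h21 : e21c ∈ confGraph A3 := by
      have : e21c = (2:ℂ) • ((A3 1)ᴴ * A3 0) := by
        rw [A3_block, epat3_10, map_e21i, smul_smul]
        norm_num
      rw [this]
      exact Submodule.smul_mem _ _ (Submodule.subset_span ⟨1, 0, rfl⟩)
    exact Submodule.add_mem _ (Submodule.add_mem _ (Submodule.smul_mem _ _ h1)
      (Submodule.smul_mem _ _ h12)) (Submodule.smul_mem _ _ h21)

lemma A3_noncancelling : IsNonCancelling A3 := by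
  intro i
  refine ⟨Matrix.of fun a x => if lab3 i x = a then sq2 else (0:ℝ), fun _ => 1,
    fun a b => ?_, fun j => one_ne_zero, ?_⟩
  · by_cases h : lab3 i b = a <;>
      simp [h, sq2, Real.sqrt_nonneg]
  · rw [Matrix.diagonal_one, Matrix.mul_one]
    ext a x
    by_cases h : lab3 i x = a <;> simp [lmat, A3, h, Matrix.map_apply]

end GammaUpper

section NoK2

open Matrix Complex

lemma no_k2 (r : ℕ) (A : Fin r → Matrix (Fin 2) (Fin 2) ℂ)
    (hK : IsKraus A) (hG : confGraph A = constDiagOS 2) : False := by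
  classical
  -- every block is in S
  have hmem : ∀ i j, (A i)ᴴ * A j ∈ constDiagOS 2 := fun i j => by
    rw [← hG]; exact Submodule.subset_span ⟨i, j, rfl⟩
  -- equal Gram condition, componentwise
  have hip : ∀ i j : Fin r,
      starRingEnd ℂ (A i 0 0) * A j 0 0 + starRingEnd ℂ (A i 1 0) * A j 1 0
        = starRingEnd ℂ (A i 0 1) * A j 0 1 + starRingEnd ℂ (A i 1 1) * A j 1 1 := by
    intro i j
    have h := (hmem i j) 0 1
    simp only [Matrix.mul_apply, Matrix.conjTranspose_apply, Fin.sum_univ_two] at h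
    simpa using h
  -- a functional annihilating the span but not S gives the contradiction
  suffices hfun : ∃ p q rr : ℂ, q ≠ 0 ∧ ∀ i j : Fin r,
      p * (starRingEnd ℂ (A i 0 0) * A j 0 0 + starRingEnd ℂ (A i 1 0) * A j 1 0)
      + q * (starRingEnd ℂ (A i 0 0) * A j 0 1 + starRingEnd ℂ (A i 1 0) * A j 1 1)
      + rr * (starRingEnd ℂ (A i 0 1) * A j 0 0 + starRingEnd ℂ (A i 1 1) * A j 1 0) = 0 by
    obtain ⟨p, q, rr, hq, hvan⟩ := hfun
    set φ : Matrix (Fin 2) (Fin 2) ℂ →ₗ[ℂ] ℂ :=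
      { toFun := fun B => p * B 0 0 + q * B 0 1 + rr * B 1 0
        map_add' := by intro B C; simp [Matrix.add_apply]; ring
        map_smul' := by intro c B; simp [Matrix.smul_apply]; ring } with hφ
    have hker : confGraph A ≤ LinearMap.ker φ := by
      rw [confGraph, Submodule.span_le]
      rintro B ⟨i, j, rfl⟩
      simp only [SetLike.mem_coe, LinearMap.mem_ker, hφ, LinearMap.coe_mk, AddHom.coe_mk]
      have h := hvan i j
      simp only [Matrix.mul_apply, Matrix.conjTranspose_apply, Fin.sum_univ_two,
        Complex.star_def]
      linear_combination h
    have he12 : e12c ∈ confGraph A := by rw [hG]; exact e12c_mem_S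
    have := hker he12
    rw [LinearMap.mem_ker] at this
    simp [hφ, e12c] at this
    exact hq this
  -- case split on whether the first columns are pairwise parallel
  by_cases hcase : ∃ a b : Fin r, A a 0 0 * A b 1 0 - A a 1 0 * A b 0 0 ≠ 0
  · -- independent case
    obtain ⟨a, b, hdet⟩ := hcase
    set M : Matrix (Fin 2) (Fin 2) ℂ := !![A a 0 0, A b 0 0; A a 1 0, A b 1 0] with hM
    set W : Matrix (Fin 2) (Fin 2) ℂ := !![A a 0 1, A b 0 1; A a 1 1, A b 1 1] with hW
    have hdM : IsUnit M.det := by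
      rw [isUnit_iff_ne_zero, hM, Matrix.det_fin_two_of]
      intro h; apply hdet; linear_combination h
    have hWW : Wᴴ * W = Mᴴ * M := by
      ext i j
      fin_cases i <;> fin_cases j <;>
        · simp only [hM, hW, Matrix.mul_apply, Matrix.conjTranspose_apply,
            Fin.sum_univ_two, Fin.mk_zero, Fin.mk_one, Fin.isValue, Matrix.cons_val',
            Matrix.cons_val_zero, Matrix.cons_val_one, Matrix.head_cons,
            Matrix.head_fin_const, Matrix.cons_val_fin_one, Matrix.of_apply,
            Complex.star_def]
          first
            | linear_combination (hip a a).symm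
            | linear_combination (hip a b).symm
            | linear_combination (hip b a).symm
            | linear_combination (hip b b).symm
    set U : Matrix (Fin 2) (Fin 2) ℂ := W * M⁻¹ with hU
    have hUM : U * M = W := by
      rw [hU, Matrix.nonsing_inv_mul_cancel_right _ _ hdM]
    have hUnit : Uᴴ * U = 1 := by
      rw [hU, Matrix.conjTranspose_mul, Matrix.conjTranspose_nonsing_inv]
      calc (Mᴴ)⁻¹ * Wᴴ * (W * M⁻¹) = (Mᴴ)⁻¹ * (Wᴴ * W) * M⁻¹ := by
            rw [Matrix.mul_assoc, Matrix.mul_assoc, Matrix.mul_assoc]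
        _ = (Mᴴ)⁻¹ * (Mᴴ * M) * M⁻¹ := by rw [hWW]
        _ = ((Mᴴ)⁻¹ * Mᴴ) * (M * M⁻¹) := by
            rw [Matrix.mul_assoc, Matrix.mul_assoc, Matrix.mul_assoc]
        _ = 1 := by
            have hdMH : IsUnit (Mᴴ).det := by
              rw [Matrix.det_conjTranspose]; exact hdM.star
            rw [Matrix.nonsing_inv_mul _ hdMH, Matrix.mul_nonsing_inv _ hdM,
              Matrix.one_mul]
    have hUU : U * Uᴴ = 1 := mul_eq_one_comm.mp hUnit
    have hdU : IsUnit U.det := by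
      have h1 : U.det * Uᴴ.det = 1 := by rw [← Matrix.det_mul, hUU, Matrix.det_one]
      exact IsUnit.of_mul_eq_one _ h1
    have hdW : IsUnit (Wᴴ).det := by
      rw [Matrix.det_conjTranspose, ← hUM, Matrix.det_mul]
      exact ((hdU.mul hdM).star)
    -- w j = U *ᵥ u j for all j
    have hw : ∀ (j : Fin r) (t : Fin 2),
        A j t 1 = U t 0 * A j 0 0 + U t 1 * A j 1 0 := by
      intro j
      have key : Wᴴ *ᵥ (fun t => A j t 1) = Wᴴ *ᵥ (U *ᵥ (fun t => A j t 0)) := by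
        rw [Matrix.mulVec_mulVec]
        have hWU : Wᴴ * U = Mᴴ := by
          rw [← hUM, Matrix.conjTranspose_mul, Matrix.mul_assoc, hUnit, Matrix.mul_one]
        rw [hWU]
        funext t
        fin_cases t <;>
          · simp only [hM, hW, Matrix.mulVec, dotProduct,
              Matrix.conjTranspose_apply, Fin.sum_univ_two, Fin.mk_zero, Fin.mk_one,
              Fin.isValue, Matrix.cons_val', Matrix.cons_val_zero, Matrix.cons_val_one,
              Matrix.head_cons, Matrix.head_fin_const, Matrix.cons_val_fin_one,
              Matrix.of_apply, Complex.star_def]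
            first
              | linear_combination (hip a j).symm
              | linear_combination (hip b j).symm
      have cancel := congrArg (fun x => (Wᴴ)⁻¹ *ᵥ x) key
      simp only [Matrix.mulVec_mulVec] at cancel
      rw [← Matrix.mul_assoc, Matrix.nonsing_inv_mul _ hdW, Matrix.one_mul,
        Matrix.one_mulVec] at cancel
      intro t
      have := congrFun cancel t
      simpa [Matrix.mulVec, dotProduct, Fin.sum_univ_two] using this
    -- unitarity equations, entrywise
    have hu00 := congrFun (congrFun hUU 0) 0
    have hu01 := congrFun (congrFun hUU 0) 1
    have hu10 := congrFun (congrFun hUU 1) 0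
    have hu11 := congrFun (congrFun hUU 1) 1
    simp only [Matrix.mul_apply, Matrix.conjTranspose_apply, Fin.sum_univ_two,
      Matrix.one_apply] at hu00 hu01 hu10 hu11
    norm_num at hu00 hu01 hu10 hu11
    -- Cayley-Hamilton for the unitary, entrywise
    have hCH : ∀ t s : Fin 2,
        (U 0 0 * U 1 1 - U 0 1 * U 1 0) * starRingEnd ℂ (U s t)
          = (U 0 0 + U 1 1) * (if t = s then 1 else 0) - U t s := by
      intro t s
      fin_cases t <;> fin_cases s <;> simp only [if_true, if_false] <;> norm_num
      · linear_combination U 1 1 * hu00 - U 0 1 * hu10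
      · linear_combination U 1 1 * hu01 - U 0 1 * hu11
      · linear_combination U 0 0 * hu10 - U 1 0 * hu00
      · linear_combination U 0 0 * hu11 - U 1 0 * hu01
    refine ⟨U 0 0 + U 1 1, -1, -(U 0 0 * U 1 1 - U 0 1 * U 1 0), by norm_num, ?_⟩
    intro i j
    have hwj0 := hw j 0
    have hwj1 := hw j 1
    have hwi0 := congrArg (starRingEnd ℂ) (hw i 0)
    have hwi1 := congrArg (starRingEnd ℂ) (hw i 1)
    simp only [map_add, _root_.map_mul] at hwi0 hwi1
    rw [hwj0, hwj1, hwi0, hwi1]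
    have c00 := hCH 0 0; have c01 := hCH 0 1
    have c10 := hCH 1 0; have c11 := hCH 1 1
    norm_num at c00 c01 c10 c11
    linear_combination (-(starRingEnd ℂ (A i 0 0) * A j 0 0)) * c00
      - (starRingEnd ℂ (A i 0 0) * A j 1 0) * c01
      - (starRingEnd ℂ (A i 1 0) * A j 0 0) * c10
      - (starRingEnd ℂ (A i 1 0) * A j 1 0) * c11
  · -- parallel case
    push_neg at hcase
    -- from the Kraus condition, some first column is nonzero
    have hsum : ∑ i, (starRingEnd ℂ (A i 0 0) * A i 0 0
        + starRingEnd ℂ (A i 1 0) * A i 1 0) = 1 := by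
      have h := congrFun (congrFun hK 0) 0
      rw [Matrix.sum_apply] at h
      simp only [Matrix.mul_apply, Matrix.conjTranspose_apply, Fin.sum_univ_two,
        Matrix.one_apply] at h
      simpa using h
    have hex : ∃ i₀ : Fin r, starRingEnd ℂ (A i₀ 0 0) * A i₀ 0 0
        + starRingEnd ℂ (A i₀ 1 0) * A i₀ 1 0 ≠ 0 := by
      by_contra hall
      push_neg at hall
      rw [Finset.sum_congr rfl (fun i _ => hall i), Finset.sum_const_zero] at hsum
      exact one_ne_zero hsum.symm
    obtain ⟨i₀, hα⟩ := hex
    set α : ℂ := starRingEnd ℂ (A i₀ 0 0) * A i₀ 0 0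
        + starRingEnd ℂ (A i₀ 1 0) * A i₀ 1 0 with hαdef
    -- u i₀ has a nonzero component
    have hu0 : A i₀ 0 0 ≠ 0 ∨ A i₀ 1 0 ≠ 0 := by
      by_contra hc
      push_neg at hc
      apply hα
      rw [hαdef, hc.1, hc.2]
      simp
    -- coefficients
    obtain ⟨c, hcu⟩ : ∃ c : Fin r → ℂ, ∀ (j : Fin r) (t : Fin 2),
        A j t 0 = c j * A i₀ t 0 := by
      rcases hu0 with h0 | h0
      · refine ⟨fun j => A j 0 0 / A i₀ 0 0, fun j t => ?_⟩
        fin_cases t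
        · simp only [Fin.zero_eta, Fin.mk_one, Fin.isValue]
          field_simp
        · simp only [Fin.zero_eta, Fin.mk_one, Fin.isValue]
          field_simp
          linear_combination -hcase j i₀
      · refine ⟨fun j => A j 1 0 / A i₀ 1 0, fun j t => ?_⟩
        fin_cases t
        · simp only [Fin.zero_eta, Fin.mk_one, Fin.isValue]
          field_simp
          linear_combination hcase j i₀
        · simp only [Fin.zero_eta, Fin.mk_one, Fin.isValue]
          field_simp
    -- second columns are also proportional
    have hcw : ∀ (j : Fin r) (t : Fin 2), A j t 1 = c j * A i₀ t 1 := by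
      intro j
      have hz : (starRingEnd ℂ (A j 0 1 - c j * A i₀ 0 1)) * (A j 0 1 - c j * A i₀ 0 1)
          + (starRingEnd ℂ (A j 1 1 - c j * A i₀ 1 1)) * (A j 1 1 - c j * A i₀ 1 1) = 0 := by
        have e1 := hip j j
        have e2 := hip j i₀
        have e3 := hip i₀ j
        have e4 := hip i₀ i₀
        have f0 := hcu j 0
        have f1 := hcu j 1
        have g0 := congrArg (starRingEnd ℂ) (hcu j 0)
        have g1 := congrArg (starRingEnd ℂ) (hcu j 1)
        simp only [_root_.map_mul, map_sub] at g0 g1 ⊢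
        linear_combination (-1 : ℂ) * e1 + c j * e2 + starRingEnd ℂ (c j) * e3
          - starRingEnd ℂ (c j) * c j * e4
          + (starRingEnd ℂ (A j 0 0) - starRingEnd ℂ (c j) * starRingEnd ℂ (A i₀ 0 0)) * f0
          + (starRingEnd ℂ (A j 1 0) - starRingEnd ℂ (c j) * starRingEnd ℂ (A i₀ 1 0)) * f1
      have hvec : (fun t => A j t 1 - c j * A i₀ t 1) = (0 : Fin 2 → ℂ) := by
        apply dotProduct_star_self_eq_zero.mp
        simp only [dotProduct, Pi.star_apply, Fin.sum_univ_two]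
        simpa using hz
      intro t
      have := congrFun hvec t
      simp only [Pi.zero_apply, sub_eq_zero] at this
      exact this
    refine ⟨starRingEnd ℂ (A i₀ 0 0) * A i₀ 0 1 + starRingEnd ℂ (A i₀ 1 0) * A i₀ 1 1,
      -α, 0, neg_ne_zero.mpr hα, ?_⟩
    intro i j
    have f0 := hcu j 0; have f1 := hcu j 1
    have w0 := hcw j 0; have w1 := hcw j 1
    have g0 := congrArg (starRingEnd ℂ) (hcu i 0)
    have g1 := congrArg (starRingEnd ℂ) (hcu i 1)
    simp only [_root_.map_mul] at g0 g1
    rw [f0, f1, w0, w1, g0, g1, hαdef]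
    ring

end NoK2

section Gamma

open Matrix

lemma no_klt3 (k : ℕ) (hk : k < 3) (r : ℕ) (A : Fin k' → Matrix (Fin k) (Fin 2) ℂ)
    (hK : IsKraus A) (hG : confGraph A = constDiagOS 2) : False := by
  match k, hk with
  | 0, _ => exact no_k0 _ A hK
  | 1, _ => exact no_k1 _ A hK hG.le
  | 2, _ => exact no_k2 _ A hK hG

lemma gamma_eq_three : gammaOS (constDiagOS 2) = 3 := by
  have h3 : 3 ∈ {k | ∃ r : ℕ, ∃ A : Fin r → Matrix (Fin k) (Fin 2) ℂ,
      IsKraus A ∧ confGraph A = constDiagOS 2} := ⟨2, A3, A3_kraus, A3_conf⟩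
  have hle : gammaOS (constDiagOS 2) ≤ 3 := Nat.sInf_le h3
  rcases Nat.lt_or_ge (gammaOS (constDiagOS 2)) 3 with h | h
  · exfalso
    obtain ⟨r, A, hK, hG⟩ := Nat.sInf_mem (⟨3, h3⟩ :
      Set.Nonempty {k | ∃ r : ℕ, ∃ A : Fin r → Matrix (Fin k) (Fin 2) ℂ,
        IsKraus A ∧ confGraph A = constDiagOS 2})
    exact no_klt3 _ h r A hK hG
  · omega

lemma cc_eq_three : ccOS (constDiagOS 2) = (3 : ℕ∞) := by
  apply le_antisymm
  · exact sInf_le ⟨3, rfl, 2, A3, A3_kraus, A3_noncancelling, A3_conf⟩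
  · apply le_sInf
    rintro c ⟨k, rfl, r, A, hK, _, hG⟩
    have hk : 3 ≤ k := by
      by_contra h
      push_neg at h
      exact no_klt3 _ h r A hK hG
    exact_mod_cast hk

end Gamma

section Tensor

open Matrix

def lab8tab : Fin 5 → Fin 2 → Fin 2 → Fin 8 :=
  ![![![7,0],![6,3]], ![![4,5],![0,7]], ![![2,6],![1,4]], ![![3,2],![5,1]], ![![6,3],![4,5]]]

def lab8 : Fin 5 → Fin 2 × Fin 2 → Fin 8 := fun i x => lab8tab i x.1 x.2

noncomputable def sq5 : ℝ := (Real.sqrt 5)⁻¹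

lemma sq5_sq : ((sq5 ^ 2 : ℝ) : ℂ) = (5 : ℂ)⁻¹ := by
  rw [sq5, inv_pow, Real.sq_sqrt (by norm_num : (5:ℝ) ≥ 0)]
  push_cast
  ring

noncomputable def A8 : Fin 5 → Matrix (Fin 8) (Fin 2 × Fin 2) ℂ := fun i => lmat (lab8 i) sq5

lemma A8_kraus : IsKraus A8 := by
  apply lmat_kraus
  · decide
  · rw [sq5, inv_pow, Real.sq_sqrt (by norm_num : (5:ℝ) ≥ 0)]
    norm_num

lemma A8_block (i j : Fin 5) :
    (A8 i)ᴴ * A8 j = (5:ℂ)⁻¹ • (epat (lab8 i) (lab8 j)).map ((↑) : ℤ → ℂ) :=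
  lmat_mul_eq_smul_map _ _ _ _ sq5_sq

def bI : Fin 3 → Matrix (Fin 2) (Fin 2) ℤ := ![1, e12i, e21i]

noncomputable def bC : Fin 3 → Matrix (Fin 2) (Fin 2) ℂ := fun p => (bI p).map ((↑) : ℤ → ℂ)

lemma bC_mem (p : Fin 3) : bC p ∈ constDiagOS 2 := by
  have h : ∀ p : Fin 3, bI p 0 0 = bI p 1 1 := by decide
  rw [mem_constDiag_iff]
  simp only [bC, Matrix.map_apply]
  exact congrArg _ (h p)

def cf : Fin 5 → Fin 5 → Fin 3 → Fin 3 → ℤ :=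
  ![![![![1, 0, 0], ![0, 0, 0], ![0, 0, 0]],
     ![![0, 0, 0], ![0, 1, 1], ![0, 0, 0]],
     ![![0, 0, 0], ![0, 0, 0], ![0, 1, 0]],
     ![![0, 0, 0], ![0, 0, 0], ![0, 0, 1]],
     ![![0, 0, 0], ![0, 0, 0], ![1, 0, 0]]],
   ![![![0, 0, 0], ![0, 0, 0], ![0, 1, 1]],
     ![![1, 0, 0], ![0, 0, 0], ![0, 0, 0]],
     ![![0, 0, 0], ![0, 1, 0], ![0, 0, 0]],
     ![![0, 0, 0], ![0, 0, 1], ![0, 0, 0]],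
     ![![0, 0, 0], ![1, 0, 0], ![0, 0, 0]]],
   ![![![0, 0, 0], ![0, 0, 1], ![0, 0, 0]],
     ![![0, 0, 0], ![0, 0, 0], ![0, 0, 1]],
     ![![1, 0, 0], ![0, 0, 0], ![0, 0, 0]],
     ![![0, 1, 0], ![0, 0, 0], ![0, 0, 0]],
     ![![0, 0, 1], ![0, 0, 0], ![0, 0, 0]]],
   ![![![0, 0, 0], ![0, 1, 0], ![0, 0, 0]],
     ![![0, 0, 0], ![0, 0, 0], ![0, 1, 0]],
     ![![0, 0, 1], ![0, 0, 0], ![0, 0, 0]],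
     ![![1, 0, 0], ![0, 0, 0], ![0, 0, 0]],
     ![![0, 1, 0], ![0, 0, 0], ![0, 0, 0]]],
   ![![![0, 0, 0], ![1, 0, 0], ![0, 0, 0]],
     ![![0, 0, 0], ![0, 0, 0], ![1, 0, 0]],
     ![![0, 1, 0], ![0, 0, 0], ![0, 0, 0]],
     ![![0, 0, 1], ![0, 0, 0], ![0, 0, 0]],
     ![![1, 0, 0], ![0, 0, 0], ![0, 0, 0]]]]

def dg : Fin 3 → Fin 3 → Fin 5 → Fin 5 → ℤ :=
  ![![![![1, 0, 0, 0, 0], ![0, 0, 0, 0, 0], ![0, 0, 0, 0, 0], ![0, 0, 0, 0, 0], ![0, 0, 0, 0, 0]],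
     ![![0, 0, 0, 0, 0], ![0, 0, 0, 0, 0], ![0, 0, 0, 1, 0], ![0, 0, 0, 0, 0], ![0, 0, 0, 0, 0]],
     ![![0, 0, 0, 0, 0], ![0, 0, 0, 0, 0], ![0, 0, 0, 0, 1], ![0, 0, 0, 0, 0], ![0, 0, 0, 0, 0]]],
   ![![![0, 0, 0, 0, 0], ![0, 0, 0, 0, 1], ![0, 0, 0, 0, 0], ![0, 0, 0, 0, 0], ![0, 0, 0, 0, 0]],
     ![![0, 0, 0, 0, 0], ![0, 0, 1, 0, 0], ![0, 0, 0, 0, 0], ![0, 0, 0, 0, 0], ![0, 0, 0, 0, 0]],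
     ![![0, 1, 0, 0, 0], ![0, 0, -1, 0, 0], ![0, 0, 0, 0, 0], ![0, 0, 0, 0, 0], ![0, 0, 0, 0, 0]]],
   ![![![0, 0, 0, 0, 1], ![0, 0, 0, 0, 0], ![0, 0, 0, 0, 0], ![0, 0, 0, 0, 0], ![0, 0, 0, 0, 0]],
     ![![0, 0, 1, 0, 0], ![0, 0, 0, 0, 0], ![0, 0, 0, 0, 0], ![0, 0, 0, 0, 0], ![0, 0, 0, 0, 0]],
     ![![0, 0, 0, 1, 0], ![0, 0, 0, 0, 0], ![0, 0, 0, 0, 0], ![0, 0, 0, 0, 0], ![0, 0, 0, 0, 0]]]]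

lemma master1 : ∀ (i j : Fin 5) (x y : Fin 2 × Fin 2),
    epat (lab8 i) (lab8 j) x y
      = ∑ p : Fin 3, ∑ q : Fin 3, cf i j p q * (bI p x.1 y.1 * bI q x.2 y.2) := by
  exact @of_decide_eq_true _ (@Fintype.decidableForallFintype _ _ (fun i => @Fintype.decidableForallFintype _ _ (fun j => @Fintype.decidableForallFintype _ _ (fun x => @Fintype.decidableForallFintype _ _ (fun y => inferInstance) _) _) _) _) rfl

lemma master2 : ∀ (p q : Fin 3) (x y : Fin 2 × Fin 2),
    bI p x.1 y.1 * bI q x.2 y.2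
      = ∑ i : Fin 5, ∑ j : Fin 5, dg p q i j * epat (lab8 i) (lab8 j) x y := by
  decide

lemma block_decomp (i j : Fin 5) :
    ((epat (lab8 i) (lab8 j)).map ((↑) : ℤ → ℂ))
      = ∑ p : Fin 3, ∑ q : Fin 3,
          ((cf i j p q : ℤ) : ℂ) • Matrix.kroneckerMap (· * ·) (bC p) (bC q) := by
  ext x y
  simp only [Matrix.map_apply, Matrix.sum_apply, Matrix.smul_apply,
    Matrix.kroneckerMap_apply, smul_eq_mul, bC]
  exact_mod_cast master1 i j x y

lemma kron_decomp (p q : Fin 3) :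
    Matrix.kroneckerMap (· * ·) (bC p) (bC q)
      = ∑ i : Fin 5, ∑ j : Fin 5,
          ((dg p q i j : ℤ) : ℂ) • (epat (lab8 i) (lab8 j)).map ((↑) : ℤ → ℂ) := by
  ext x y
  simp only [Matrix.map_apply, Matrix.sum_apply, Matrix.smul_apply,
    Matrix.kroneckerMap_apply, smul_eq_mul, bC]
  exact_mod_cast master2 p q x y

lemma epat_mem (i j : Fin 5) :
    ((epat (lab8 i) (lab8 j)).map ((↑) : ℤ → ℂ)) ∈ confGraph A8 := by
  have h : (A8 i)ᴴ * A8 j ∈ confGraph A8 := Submodule.subset_span ⟨i, j, rfl⟩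
  rw [A8_block] at h
  have h5 := Submodule.smul_mem (confGraph A8) (5:ℂ) h
  rwa [smul_smul, (by norm_num : (5:ℂ) * 5⁻¹ = 1), one_smul] at h5

lemma S_decomp' {X : Matrix (Fin 2) (Fin 2) ℂ} (hX : X ∈ constDiagOS 2) :
    X = ∑ p : Fin 3, ![X 0 0, X 0 1, X 1 0] p • bC p := by
  rw [Fin.sum_univ_three]
  have hb0 : bC 0 = 1 := map_onei
  have hb1 : bC 1 = e12c := map_e12i
  have hb2 : bC 2 = e21c := map_e21i
  simp only [Matrix.cons_val_zero, Matrix.cons_val_one, Matrix.head_cons,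
    Matrix.cons_val_two, Matrix.tail_cons, hb0, hb1, hb2]
  exact S_decomp hX

lemma kron_bilin {X Y : Matrix (Fin 2) (Fin 2) ℂ} (fx fy : Fin 3 → ℂ)
    (hX : X = ∑ p : Fin 3, fx p • bC p) (hY : Y = ∑ q : Fin 3, fy q • bC q) :
    Matrix.kroneckerMap (· * ·) X Y
      = ∑ p : Fin 3, ∑ q : Fin 3, (fx p * fy q) • Matrix.kroneckerMap (· * ·) (bC p) (bC q) := by
  subst hX hY
  ext x y
  simp only [Matrix.kroneckerMap_apply, Matrix.sum_apply, Matrix.smul_apply, smul_eq_mul]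
  rw [Finset.sum_mul_sum]
  apply Finset.sum_congr rfl; intro p _
  apply Finset.sum_congr rfl; intro q _
  ring

lemma A8_conf : confGraph A8 = tensorOS (constDiagOS 2) (constDiagOS 2) := by
  apply le_antisymm
  · rw [confGraph, Submodule.span_le]
    rintro B ⟨i, j, rfl⟩
    rw [A8_block]
    apply Submodule.smul_mem
    rw [block_decomp i j]
    apply Submodule.sum_mem; intro p _
    apply Submodule.sum_mem; intro q _
    apply Submodule.smul_mem
    exact Submodule.subset_span ⟨bC p, bC_mem p, bC q, bC_mem q, rfl⟩
  · rw [tensorOS, Submodule.span_le]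
    rintro C ⟨X, hX, Y, hY, rfl⟩
    rw [kron_bilin _ _ (S_decomp' hX) (S_decomp' hY)]
    apply Submodule.sum_mem; intro p _
    apply Submodule.sum_mem; intro q _
    apply Submodule.smul_mem
    rw [kron_decomp p q]
    apply Submodule.sum_mem; intro i _
    apply Submodule.sum_mem; intro j _
    exact Submodule.smul_mem _ _ (epat_mem i j)

lemma gamma8_le : gammaOS (tensorOS (constDiagOS 2) (constDiagOS 2)) ≤ 8 :=
  Nat.sInf_le ⟨5, A8, A8_kraus, A8_conf⟩

end Tensor

/-- for the operator system `S ⊆ M₂` of matrices with equal diagonal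
entries, `α(S) = 1`, `β(S) = 2`, `γ(S) = 3`, `cc(S) = 3`, and
`γ(S ⊗ S) ≤ 8 < 9 = γ(S)²`. -/
theorem small_example :
    alphaOS (constDiagOS 2) = 1 ∧ betaOS (constDiagOS 2) = 2 ∧
    gammaOS (constDiagOS 2) = 3 ∧ ccOS (constDiagOS 2) = (3 : ℕ∞) ∧
    gammaOS (tensorOS (constDiagOS 2) (constDiagOS 2)) ≤ 8 ∧
    gammaOS (tensorOS (constDiagOS 2) (constDiagOS 2)) < gammaOS (constDiagOS 2) ^ 2 ∧
    gammaOS (constDiagOS 2) ^ 2 = 9 := by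
  refine ⟨alpha_eq_one, beta_eq_two, gamma_eq_three, cc_eq_three, gamma8_le, ?_, ?_⟩
  · rw [gamma_eq_three]
    exact lt_of_le_of_lt gamma8_le (by norm_num)
  · rw [gamma_eq_three]
    norm_num
end
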